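/- arXiv:2103.00972 — 10 statements merged into one kernel-verified Lean document; each statement's English description precedes it below -/
import Mathlib

section
/- Consider the quadrangle mass-action ODE ẋ = f(x,y) = Σᵢ₌₁⁴ (aᵢ₊₁−aᵢ)κᵢ x^{aᵢ}y^{bᵢ}, ẏ = g(x,y) = Σᵢ₌₁⁴ (bᵢ₊₁−bᵢ)κᵢ x^{aᵢ}y^{bᵢ} (indices mod 4, so a₅=a₁, b₅=b₁) with κ₁,κ₂,κ₃,κ₄ > 0, where the four points (aᵢ,bᵢ) are distinct and do not lie on a line. Let i and j be indices with a_i = min(a₁,a₂,a₃,a₄) and b_j = min(b₁,b₂,b₃,b₄), and assume both of the chains a_i < a_{i+3} < a_{i+1} < a_{i+2} and b_j < b_{j+3} < b_{j+1} < b_{j+2} (indices taken mod 4) are violated. Then there exist real numbers α and β such that, with h(x,y) = x^{−α}y^{−β}, the divergence ∂(hf)/∂x + ∂(hg)/∂y is negative at every point (x,y) ∈ ℝ₊². -/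
/-- Key combinatorial lemma. -/
lemma quad_key (p q r s : ℝ) (hq : p ≤ q) (hr : p ≤ r) (hs : p ≤ s)
    (hc : s ≤ p ∨ q ≤ s ∨ r ≤ q) :
    ∃ α : ℝ, (q - p) * (p - α) ≤ 0 ∧ (r - q) * (q - α) ≤ 0 ∧
      (s - r) * (r - α) ≤ 0 ∧ (p - s) * (s - α) ≤ 0 := by
  rcases hc with h | h | h
  · rcases le_total q r with h' | h'
    · exact ⟨q, by nlinarith [sq_nonneg (q-r), sq_nonneg (s-r), sq_nonneg (q-s)],
        by nlinarith [sq_nonneg (q-r), sq_nonneg (s-r), sq_nonneg (q-s)],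
        by nlinarith [sq_nonneg (q-r), sq_nonneg (s-r), sq_nonneg (q-s)],
        by nlinarith [sq_nonneg (q-r), sq_nonneg (s-r), sq_nonneg (q-s)]⟩
    · exact ⟨r, by nlinarith [sq_nonneg (q-r), sq_nonneg (s-r), sq_nonneg (q-s)],
        by nlinarith [sq_nonneg (q-r), sq_nonneg (s-r), sq_nonneg (q-s)],
        by nlinarith [sq_nonneg (q-r), sq_nonneg (s-r), sq_nonneg (q-s)],
        by nlinarith [sq_nonneg (q-r), sq_nonneg (s-r), sq_nonneg (q-s)]⟩
  · rcases le_total q r with h' | h'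
    · rcases le_total s r with h'' | h''
      · exact ⟨s, by nlinarith [sq_nonneg (q-r), sq_nonneg (s-r), sq_nonneg (q-s)],
          by nlinarith [sq_nonneg (q-r), sq_nonneg (s-r), sq_nonneg (q-s)],
          by nlinarith [sq_nonneg (q-r), sq_nonneg (s-r), sq_nonneg (q-s)],
          by nlinarith [sq_nonneg (q-r), sq_nonneg (s-r), sq_nonneg (q-s)]⟩
      · exact ⟨r, by nlinarith [sq_nonneg (q-r), sq_nonneg (s-r), sq_nonneg (q-s)],
          by nlinarith [sq_nonneg (q-r), sq_nonneg (s-r), sq_nonneg (q-s)],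
          by nlinarith [sq_nonneg (q-r), sq_nonneg (s-r), sq_nonneg (q-s)],
          by nlinarith [sq_nonneg (q-r), sq_nonneg (s-r), sq_nonneg (q-s)]⟩
    · rcases le_total s q with h'' | h''
      · exact ⟨s, by nlinarith [sq_nonneg (q-r), sq_nonneg (s-r), sq_nonneg (q-s)],
          by nlinarith [sq_nonneg (q-r), sq_nonneg (s-r), sq_nonneg (q-s)],
          by nlinarith [sq_nonneg (q-r), sq_nonneg (s-r), sq_nonneg (q-s)],
          by nlinarith [sq_nonneg (q-r), sq_nonneg (s-r), sq_nonneg (q-s)]⟩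
      · exact ⟨q, by nlinarith [sq_nonneg (q-r), sq_nonneg (s-r), sq_nonneg (q-s)],
          by nlinarith [sq_nonneg (q-r), sq_nonneg (s-r), sq_nonneg (q-s)],
          by nlinarith [sq_nonneg (q-r), sq_nonneg (s-r), sq_nonneg (q-s)],
          by nlinarith [sq_nonneg (q-r), sq_nonneg (s-r), sq_nonneg (q-s)]⟩
  · rcases le_total q s with h' | h'
    · exact ⟨q, by nlinarith [sq_nonneg (q-r), sq_nonneg (s-r), sq_nonneg (q-s)],
        by nlinarith [sq_nonneg (q-r), sq_nonneg (s-r), sq_nonneg (q-s)],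
        by nlinarith [sq_nonneg (q-r), sq_nonneg (s-r), sq_nonneg (q-s)],
        by nlinarith [sq_nonneg (q-r), sq_nonneg (s-r), sq_nonneg (q-s)]⟩
    · exact ⟨s, by nlinarith [sq_nonneg (q-r), sq_nonneg (s-r), sq_nonneg (q-s)],
        by nlinarith [sq_nonneg (q-r), sq_nonneg (s-r), sq_nonneg (q-s)],
        by nlinarith [sq_nonneg (q-r), sq_nonneg (s-r), sq_nonneg (q-s)],
        by nlinarith [sq_nonneg (q-r), sq_nonneg (s-r), sq_nonneg (q-s)]⟩

lemma quad_fin4 : ∀ m : Fin 4, m = 0 ∨ m = 1 ∨ m = 2 ∨ m = 3 := by decide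

/-- If all cyclic terms vanish, the sequence is constant. -/
lemma quad_all_zero (a : Fin 4 → ℝ) (α : ℝ)
    (h : ∀ k : Fin 4, (a (k + 1) - a k) * (a k - α) = 0) :
    ∀ k : Fin 4, a k = a 0 := by
  have h0 := h 0; have h1 := h 1; have h2 := h 2; have h3 := h 3
  have e0 : (0 : Fin 4) + 1 = 1 := rfl
  have e1 : (1 : Fin 4) + 1 = 2 := rfl
  have e2 : (2 : Fin 4) + 1 = 3 := rfl
  have e3 : (3 : Fin 4) + 1 = 0 := rfl
  rw [e0] at h0; rw [e1] at h1; rw [e2] at h2; rw [e3] at h3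
  have h123 : a 1 = a 0 ∧ a 2 = a 0 ∧ a 3 = a 0 := by
    rcases mul_eq_zero.1 h0 with h0 | h0 <;>
    rcases mul_eq_zero.1 h1 with h1 | h1 <;>
    rcases mul_eq_zero.1 h2 with h2 | h2 <;>
    rcases mul_eq_zero.1 h3 with h3 | h3 <;>
    exact ⟨by linarith, by linarith, by linarith⟩
  intro k
  rcases quad_fin4 k with rfl | rfl | rfl | rfl
  · rfl
  · exact h123.1
  · exact h123.2.1
  · exact h123.2.2

/-- Constancy of the first coordinates implies collinearity. -/
lemma quad_collinear (a b : Fin 4 → ℝ) (h : ∀ k, a k = a 0) :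
    Collinear ℝ (Set.range fun k : Fin 4 => ((a k, b k) : ℝ × ℝ)) := by
  rw [collinear_iff_of_mem (Set.mem_range_self 0)]
  refine ⟨((0 : ℝ), (1 : ℝ)), ?_⟩
  rintro p ⟨k, rfl⟩
  refine ⟨b k - b 0, ?_⟩
  simp only [Prod.smul_mk, smul_eq_mul, vadd_eq_add, Prod.mk_add_mk, Prod.mk.injEq]
  exact ⟨by rw [h k]; ring, by ring⟩

/-- Existence of a Dulac exponent. -/
lemma quad_exists_alpha (a : Fin 4 → ℝ) (i : Fin 4) (hi : ∀ k, a i ≤ a k)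
    (hc : ¬ (a i < a (i + 3) ∧ a (i + 3) < a (i + 1) ∧ a (i + 1) < a (i + 2))) :
    ∃ α : ℝ, ∀ k : Fin 4, (a (k + 1) - a k) * (a k - α) ≤ 0 := by
  have hcc : a (i + 3) ≤ a i ∨ a (i + 1) ≤ a (i + 3) ∨ a (i + 2) ≤ a (i + 1) := by
    by_contra hcon
    push_neg at hcon
    exact hc ⟨hcon.1, hcon.2.1, hcon.2.2⟩
  obtain ⟨α, H0, H1, H2, H3⟩ :=
    quad_key (a i) (a (i + 1)) (a (i + 2)) (a (i + 3)) (hi _) (hi _) (hi _) hcc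
  refine ⟨α, fun k => ?_⟩
  have e1 : (1 : Fin 4) + 1 = 2 := rfl
  have e2 : (2 : Fin 4) + 1 = 3 := rfl
  have e3 : (3 : Fin 4) + 1 = 0 := rfl
  obtain ⟨m, rfl⟩ : ∃ m, k = i + m := ⟨k - i, (add_sub_cancel i k).symm⟩
  rcases quad_fin4 m with rfl | rfl | rfl | rfl
  · simp only [add_zero]; exact H0
  · have : i + 1 + 1 = i + 2 := by rw [add_assoc, e1]
    rw [this]; exact H1
  · have : i + 2 + 1 = i + 3 := by rw [add_assoc, e2]
    rw [this]; exact H2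
  · have : i + 3 + 1 = i := by rw [add_assoc, e3, add_zero]
    rw [this]; exact H3

/-- Derivative of the Dulac-weighted generalized polynomial. -/
lemma quad_hasDerivAt (c e : Fin 4 → ℝ) (α x : ℝ) (hx : 0 < x) :
    HasDerivAt (fun t : ℝ => t ^ (-α) * ∑ k : Fin 4, c k * t ^ (e k))
      (∑ k : Fin 4, c k * ((e k - α) * x ^ (e k - α - 1))) x := by
  have hg : HasDerivAt (fun t : ℝ => ∑ k : Fin 4, c k * t ^ (e k - α))
      (∑ k : Fin 4, c k * ((e k - α) * x ^ (e k - α - 1))) x := by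
    apply HasDerivAt.fun_sum
    intro k _
    exact (Real.hasDerivAt_rpow_const (Or.inl hx.ne')).const_mul (c k)
  refine hg.congr_of_eventuallyEq ?_
  filter_upwards [eventually_gt_nhds hx] with t ht
  rw [Finset.mul_sum]
  refine Finset.sum_congr rfl fun k _ => ?_
  rw [Real.rpow_sub ht, Real.rpow_neg ht.le]
  ring

/-- Bendixson–Dulac function for the quadrangle mass-action system.
If the two cyclic chains are violated for the minimizing indices, then there are
exponents α, β such that the divergence of x^(−α)y^(−β)·(f,g) is negative on ℝ₊². -/
theorem quadrangle_dulac
    (a b κ : Fin 4 → ℝ) (hκ : ∀ k, 0 < κ k)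
    (hdist : Function.Injective (fun k => ((a k, b k) : ℝ × ℝ)))
    (hline : ¬ Collinear ℝ (Set.range (fun k => ((a k, b k) : ℝ × ℝ))))
    (i j : Fin 4)
    (hi : ∀ k, a i ≤ a k) (hj : ∀ k, b j ≤ b k)
    (hca : ¬ (a i < a (i + 3) ∧ a (i + 3) < a (i + 1) ∧ a (i + 1) < a (i + 2)))
    (hcb : ¬ (b j < b (j + 3) ∧ b (j + 3) < b (j + 1) ∧ b (j + 1) < b (j + 2))) :
    ∃ α β : ℝ, ∀ x y : ℝ, 0 < x → 0 < y →
      deriv (fun x' : ℝ => x' ^ (-α) * y ^ (-β) *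
          (∑ k : Fin 4, (a (k + 1) - a k) * κ k * x' ^ (a k) * y ^ (b k))) x
      + deriv (fun y' : ℝ => x ^ (-α) * y' ^ (-β) *
          (∑ k : Fin 4, (b (k + 1) - b k) * κ k * x ^ (a k) * y' ^ (b k))) y < 0 := by
  obtain ⟨α, Ha⟩ := quad_exists_alpha a i hi hca
  obtain ⟨β, Hb⟩ := quad_exists_alpha b j hj hcb
  refine ⟨α, β, fun x y hx hy => ?_⟩
  have hfun1 : (fun x' : ℝ => x' ^ (-α) * y ^ (-β) *
      (∑ k : Fin 4, (a (k + 1) - a k) * κ k * x' ^ (a k) * y ^ (b k)))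
      = fun x' : ℝ => x' ^ (-α) * ∑ k : Fin 4,
          (y ^ (-β) * ((a (k + 1) - a k) * κ k) * y ^ (b k)) * x' ^ (a k) := by
    funext t
    rw [mul_assoc]
    congr 1
    rw [Finset.mul_sum]
    refine Finset.sum_congr rfl fun k _ => ?_
    ring
  have hfun2 : (fun y' : ℝ => x ^ (-α) * y' ^ (-β) *
      (∑ k : Fin 4, (b (k + 1) - b k) * κ k * x ^ (a k) * y' ^ (b k)))
      = fun y' : ℝ => y' ^ (-β) * ∑ k : Fin 4,
          (x ^ (-α) * ((b (k + 1) - b k) * κ k) * x ^ (a k)) * y' ^ (b k) := by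
    funext t
    rw [mul_comm (x ^ (-α)) (t ^ (-β)), mul_assoc]
    congr 1
    rw [Finset.mul_sum]
    refine Finset.sum_congr rfl fun k _ => ?_
    ring
  rw [hfun1, hfun2,
    (quad_hasDerivAt (fun k => y ^ (-β) * ((a (k + 1) - a k) * κ k) * y ^ (b k)) a α x hx).deriv,
    (quad_hasDerivAt (fun k => x ^ (-α) * ((b (k + 1) - b k) * κ k) * x ^ (a k)) b β y hy).deriv]
  -- sign analysis
  have hterm1 : ∀ k : Fin 4,
      y ^ (-β) * ((a (k + 1) - a k) * κ k) * y ^ (b k) * ((a k - α) * x ^ (a k - α - 1))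
      = ((a (k + 1) - a k) * (a k - α)) * (κ k * y ^ (-β) * y ^ (b k) * x ^ (a k - α - 1)) :=
    fun k => by ring
  have hterm2 : ∀ k : Fin 4,
      x ^ (-α) * ((b (k + 1) - b k) * κ k) * x ^ (a k) * ((b k - β) * y ^ (b k - β - 1))
      = ((b (k + 1) - b k) * (b k - β)) * (κ k * x ^ (-α) * x ^ (a k) * y ^ (b k - β - 1)) :=
    fun k => by ring
  have hpos1 : ∀ k : Fin 4, 0 < κ k * y ^ (-β) * y ^ (b k) * x ^ (a k - α - 1) := fun k => by
    have := hκ k; positivity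
  have hpos2 : ∀ k : Fin 4, 0 < κ k * x ^ (-α) * x ^ (a k) * y ^ (b k - β - 1) := fun k => by
    have := hκ k; positivity
  have S2 : (∑ k : Fin 4,
      x ^ (-α) * ((b (k + 1) - b k) * κ k) * x ^ (a k) * ((b k - β) * y ^ (b k - β - 1))) ≤ 0 := by
    refine Finset.sum_nonpos fun k _ => ?_
    rw [hterm2 k]
    exact mul_nonpos_of_nonpos_of_nonneg (Hb k) (hpos2 k).le
  have hne : ¬ ∀ k : Fin 4, a k = a 0 := fun hall => hline (quad_collinear a b hall)
  have hexist : ∃ k : Fin 4, (a (k + 1) - a k) * (a k - α) < 0 := by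
    by_contra hcon
    push_neg at hcon
    exact hne (quad_all_zero a α fun k => le_antisymm (Ha k) (hcon k))
  obtain ⟨k0, hk0⟩ := hexist
  have S1 : (∑ k : Fin 4,
      y ^ (-β) * ((a (k + 1) - a k) * κ k) * y ^ (b k) * ((a k - α) * x ^ (a k - α - 1))) < 0 := by
    have h := Finset.sum_lt_sum (s := Finset.univ)
      (f := fun k : Fin 4 =>
        y ^ (-β) * ((a (k + 1) - a k) * κ k) * y ^ (b k) * ((a k - α) * x ^ (a k - α - 1)))
      (g := fun _ : Fin 4 => (0 : ℝ))
      (fun k _ => by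
        rw [hterm1 k]
        exact mul_nonpos_of_nonpos_of_nonneg (Ha k) (hpos1 k).le)
      ⟨k0, Finset.mem_univ _, by
        rw [hterm1 k0]
        exact mul_neg_of_neg_of_pos hk0 (hpos1 k0)⟩
    simpa using h
  linarith
end

section
/- Consider the chain mass-action ODE ẋ = (a₂−a₁)κ₁x^{a₁}y^{b₁} + (a₃−a₂)κ₂x^{a₂}y^{b₂} + (a₄−a₃)κ₃x^{a₃}y^{b₃}, ẏ = (b₂−b₁)κ₁x^{a₁}y^{b₁} + (b₃−b₂)κ₂x^{a₂}y^{b₂} + (b₄−b₃)κ₃x^{a₃}y^{b₃} with κ₁,κ₂,κ₃ > 0. Define Δ(ijk) = det(P_j−P_i, P_k−P_i) for P_m = (a_m,b_m), and h₁ = Δ(243), h₂ = Δ(134), h₃ = Δ(142). Assume h₁ ≠ 0. Then (x̄,ȳ) ∈ ℝ₊² is an equilibrium of the system if and only if (h₁+h₂+h₃)κ₁x̄^{a₁}ȳ^{b₁} = h₁κ₃x̄^{a₃}ȳ^{b₃} and (h₁+h₂)κ₁x̄^{a₁}ȳ^{b₁} = h₁κ₂x̄^{a₂}ȳ^{b₂}.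 -/
/-- Equilibrium equations of the chain of three reactions in binomial form.
Here h₁ = Δ(243), h₂ = Δ(134), h₃ = Δ(142) with Δ(ijk) = det(P_j−P_i, P_k−P_i). -/
theorem chain_equilibrium_binomial
    (a₁ b₁ a₂ b₂ a₃ b₃ a₄ b₄ : ℝ) (κ₁ κ₂ κ₃ : ℝ)
    (hκ₁ : 0 < κ₁) (hκ₂ : 0 < κ₂) (hκ₃ : 0 < κ₃)
    (h₁ h₂ h₃ : ℝ)
    (hh₁ : h₁ = (a₄ - a₂) * (b₃ - b₂) - (b₄ - b₂) * (a₃ - a₂))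
    (hh₂ : h₂ = (a₃ - a₁) * (b₄ - b₁) - (b₃ - b₁) * (a₄ - a₁))
    (hh₃ : h₃ = (a₄ - a₁) * (b₂ - b₁) - (b₄ - b₁) * (a₂ - a₁))
    (hne : h₁ ≠ 0) :
    ∀ x y : ℝ, 0 < x → 0 < y →
      (((a₂ - a₁) * κ₁ * x ^ a₁ * y ^ b₁ + (a₃ - a₂) * κ₂ * x ^ a₂ * y ^ b₂
          + (a₄ - a₃) * κ₃ * x ^ a₃ * y ^ b₃ = 0 ∧
        (b₂ - b₁) * κ₁ * x ^ a₁ * y ^ b₁ + (b₃ - b₂) * κ₂ * x ^ a₂ * y ^ b₂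
          + (b₄ - b₃) * κ₃ * x ^ a₃ * y ^ b₃ = 0) ↔
       ((h₁ + h₂ + h₃) * (κ₁ * x ^ a₁ * y ^ b₁) = h₁ * (κ₃ * x ^ a₃ * y ^ b₃) ∧
        (h₁ + h₂) * (κ₁ * x ^ a₁ * y ^ b₁) = h₁ * (κ₂ * x ^ a₂ * y ^ b₂))) := by
  subst hh₁ hh₂ hh₃
  intro x y hx hy
  constructor
  · rintro ⟨E1, E2⟩
    constructor
    · linear_combination (a₃ - a₂) * E2 - (b₃ - b₂) * E1
    · linear_combination (b₄ - b₃) * E1 - (a₄ - a₃) * E2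
  · rintro ⟨G1, G2⟩
    constructor
    · have h : ((a₄ - a₂) * (b₃ - b₂) - (b₄ - b₂) * (a₃ - a₂)) *
          ((a₂ - a₁) * κ₁ * x ^ a₁ * y ^ b₁ + (a₃ - a₂) * κ₂ * x ^ a₂ * y ^ b₂
            + (a₄ - a₃) * κ₃ * x ^ a₃ * y ^ b₃) =
          ((a₄ - a₂) * (b₃ - b₂) - (b₄ - b₂) * (a₃ - a₂)) * 0 := by
        linear_combination (a₂ - a₃) * G2 + (a₃ - a₄) * G1
      exact mul_left_cancel₀ hne h
    · have h : ((a₄ - a₂) * (b₃ - b₂) - (b₄ - b₂) * (a₃ - a₂)) *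
          ((b₂ - b₁) * κ₁ * x ^ a₁ * y ^ b₁ + (b₃ - b₂) * κ₂ * x ^ a₂ * y ^ b₂
            + (b₄ - b₃) * κ₃ * x ^ a₃ * y ^ b₃) =
          ((a₄ - a₂) * (b₃ - b₂) - (b₄ - b₂) * (a₃ - a₂)) * 0 := by
        linear_combination (b₂ - b₃) * G2 + (b₃ - b₄) * G1
      exact mul_left_cancel₀ hne h
end

section
/- Consider the chain mass-action ODE ẋ = (a₂−a₁)κ₁x^{a₁}y^{b₁} + (a₃−a₂)κ₂x^{a₂}y^{b₂} + (a₄−a₃)κ₃x^{a₃}y^{b₃}, ẏ = (b₂−b₁)κ₁x^{a₁}y^{b₁} + (b₃−b₂)κ₂x^{a₂}y^{b₂} + (b₄−b₃)κ₃x^{a₃}y^{b₃} with κ₁,κ₂,κ₃ > 0, where (a₁,b₁), (a₂,b₂), (a₃,b₃) do not lie on a line. With h₁ = Δ(243), h₂ = Δ(134), h₃ = Δ(142) (where Δ(ijk) = det(P_j−P_i, P_k−P_i) and P_m = (a_m,b_m)), the following are equivalent: (a) there exists a positive equilibrium; (b) there exists exactly one positive equilibrium; (c) sgn(h₁) = sgn(h₁+h₂)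 = sgn(h₁+h₂+h₃) ≠ 0. In particular, the existence of a positive equilibrium does not depend on the values of κ₁, κ₂, κ₃. -/
private theorem collinear_of_det_zero (p q r : ℝ × ℝ)
    (h : (q.1 - p.1) * (r.2 - p.2) - (q.2 - p.2) * (r.1 - p.1) = 0) :
    Collinear ℝ ({p, q, r} : Set (ℝ × ℝ)) := by
  by_cases hq : q = p
  · subst hq
    rw [Set.insert_idem]
    exact collinear_pair ℝ q r
  · rw [collinear_iff_of_mem (Set.mem_insert p _)]
    refine ⟨q - p, fun z hz => ?_⟩
    rcases hz with rfl | rfl | rfl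
    · exact ⟨0, by simp⟩
    · exact ⟨1, by simp⟩
    · by_cases h1 : q.1 - p.1 = 0
      · have h2 : q.2 - p.2 ≠ 0 := by
          intro h2; apply hq; ext
          · linarith [sub_eq_zero.mp h1]
          · linarith [sub_eq_zero.mp h2]
        refine ⟨(z.2 - p.2) / (q.2 - p.2), ?_⟩
        have hz1 : z.1 = p.1 := by
          have h' : (q.2 - p.2) * (z.1 - p.1) = 0 := by
            linarith [h, mul_eq_zero_of_left h1 (z.2 - p.2)]
          rcases mul_eq_zero.mp h' with hc | hc
          · exact absurd hc h2
          · linarith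
        simp only [vadd_eq_add, Prod.ext_iff, Prod.fst_add, Prod.snd_add,
          Prod.smul_fst, Prod.smul_snd, Prod.fst_sub, Prod.snd_sub, smul_eq_mul]
        constructor
        · rw [h1]; simp [hz1]
        · field_simp; ring
      · refine ⟨(z.1 - p.1) / (q.1 - p.1), ?_⟩
        simp only [vadd_eq_add, Prod.ext_iff, Prod.fst_add, Prod.snd_add,
          Prod.smul_fst, Prod.smul_snd, Prod.fst_sub, Prod.snd_sub, smul_eq_mul]
        constructor
        · field_simp; ring
        · field_simp
          nlinarith [h]

private theorem solve2 {A B C D E F : ℝ} (h : A * D - B * C ≠ 0) :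
    ∃ X Y : ℝ, A * X + B * Y = E ∧ C * X + D * Y = F :=
  ⟨(D * E - B * F) / (A * D - B * C), (A * F - C * E) / (A * D - B * C),
    by field_simp; ring, by
      rw [mul_div_assoc', mul_div_assoc', ← add_div, div_eq_iff h]; ring⟩

private theorem solve2_zero {A B C D X Y : ℝ} (h : A * D - B * C ≠ 0)
    (h1 : A * X + B * Y = 0) (h2 : C * X + D * Y = 0) : X = 0 ∧ Y = 0 := by
  constructor
  · have hX : X * (A * D - B * C) = 0 := by linear_combination D * h1 - B * h2
    rcases mul_eq_zero.mp hX with h' | h'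
    · exact h'
    · exact absurd h' h
  · have hY : Y * (A * D - B * C) = 0 := by linear_combination A * h2 - C * h1
    rcases mul_eq_zero.mp hY with h' | h'
    · exact h'
    · exact absurd h' h

private theorem log_mono (x y : ℝ) (hx : 0 < x) (hy : 0 < y) (a b : ℝ) :
    Real.log (x ^ a * y ^ b) = a * Real.log x + b * Real.log y := by
  rw [Real.log_mul (Real.rpow_pos_of_pos hx a).ne' (Real.rpow_pos_of_pos hy b).ne',
    Real.log_rpow hx, Real.log_rpow hy]

set_option maxHeartbeats 1600000 in
/-- For the chain of three reactions, existence of a positive equilibrium,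
existence of a unique positive equilibrium, and the sign condition
sgn(h₁) = sgn(h₁+h₂) = sgn(h₁+h₂+h₃) ≠ 0 are equivalent. -/
theorem chain_exist_equilibrium
    (a₁ b₁ a₂ b₂ a₃ b₃ a₄ b₄ : ℝ) (κ₁ κ₂ κ₃ : ℝ)
    (hκ₁ : 0 < κ₁) (hκ₂ : 0 < κ₂) (hκ₃ : 0 < κ₃)
    (hline : ¬ Collinear ℝ ({(a₁, b₁), (a₂, b₂), (a₃, b₃)} : Set (ℝ × ℝ)))
    (h₁ h₂ h₃ : ℝ)
    (hh₁ : h₁ = (a₄ - a₂) * (b₃ - b₂) - (b₄ - b₂) * (a₃ - a₂))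
    (hh₂ : h₂ = (a₃ - a₁) * (b₄ - b₁) - (b₃ - b₁) * (a₄ - a₁))
    (hh₃ : h₃ = (a₄ - a₁) * (b₂ - b₁) - (b₄ - b₁) * (a₂ - a₁)) :
    ((∃ p : ℝ × ℝ, 0 < p.1 ∧ 0 < p.2 ∧
        (a₂ - a₁) * κ₁ * p.1 ^ a₁ * p.2 ^ b₁ + (a₃ - a₂) * κ₂ * p.1 ^ a₂ * p.2 ^ b₂
          + (a₄ - a₃) * κ₃ * p.1 ^ a₃ * p.2 ^ b₃ = 0 ∧
        (b₂ - b₁) * κ₁ * p.1 ^ a₁ * p.2 ^ b₁ + (b₃ - b₂) * κ₂ * p.1 ^ a₂ * p.2 ^ b₂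
          + (b₄ - b₃) * κ₃ * p.1 ^ a₃ * p.2 ^ b₃ = 0) ↔
      (∃! p : ℝ × ℝ, 0 < p.1 ∧ 0 < p.2 ∧
        (a₂ - a₁) * κ₁ * p.1 ^ a₁ * p.2 ^ b₁ + (a₃ - a₂) * κ₂ * p.1 ^ a₂ * p.2 ^ b₂
          + (a₄ - a₃) * κ₃ * p.1 ^ a₃ * p.2 ^ b₃ = 0 ∧
        (b₂ - b₁) * κ₁ * p.1 ^ a₁ * p.2 ^ b₁ + (b₃ - b₂) * κ₂ * p.1 ^ a₂ * p.2 ^ b₂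
          + (b₄ - b₃) * κ₃ * p.1 ^ a₃ * p.2 ^ b₃ = 0)) ∧
    ((∃ p : ℝ × ℝ, 0 < p.1 ∧ 0 < p.2 ∧
        (a₂ - a₁) * κ₁ * p.1 ^ a₁ * p.2 ^ b₁ + (a₃ - a₂) * κ₂ * p.1 ^ a₂ * p.2 ^ b₂
          + (a₄ - a₃) * κ₃ * p.1 ^ a₃ * p.2 ^ b₃ = 0 ∧
        (b₂ - b₁) * κ₁ * p.1 ^ a₁ * p.2 ^ b₁ + (b₃ - b₂) * κ₂ * p.1 ^ a₂ * p.2 ^ b₂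
          + (b₄ - b₃) * κ₃ * p.1 ^ a₃ * p.2 ^ b₃ = 0) ↔
      (Real.sign h₁ = Real.sign (h₁ + h₂) ∧
       Real.sign (h₁ + h₂) = Real.sign (h₁ + h₂ + h₃) ∧
       Real.sign h₁ ≠ 0)) := by
  -- the determinant of the first three points is nonzero
  have hD : (a₂ - a₁) * (b₃ - b₁) - (b₂ - b₁) * (a₃ - a₁) ≠ 0 := by
    intro h0
    exact hline (collinear_of_det_zero (a₁, b₁) (a₂, b₂) (a₃, b₃) (by simpa using h0))
  have hsD : h₁ + h₂ + h₃ = -((a₂ - a₁) * (b₃ - b₁) - (b₂ - b₁) * (a₃ - a₁)) := by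
    subst hh₁ hh₂ hh₃; ring
  have hs : h₁ + h₂ + h₃ ≠ 0 := by
    rw [hsD]; exact neg_ne_zero.mpr hD
  have hidA : (a₂ - a₁) * h₁ + (a₃ - a₂) * (h₁ + h₂) + (a₄ - a₃) * (h₁ + h₂ + h₃) = 0 := by
    subst hh₁ hh₂ hh₃; ring
  have hidB : (b₂ - b₁) * h₁ + (b₃ - b₂) * (h₁ + h₂) + (b₄ - b₃) * (h₁ + h₂ + h₃) = 0 := by
    subst hh₁ hh₂ hh₃; ring
  -- key consequence of the equilibrium equations
  have key : ∀ x y : ℝ,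
      ((a₂ - a₁) * κ₁ * x ^ a₁ * y ^ b₁ + (a₃ - a₂) * κ₂ * x ^ a₂ * y ^ b₂
          + (a₄ - a₃) * κ₃ * x ^ a₃ * y ^ b₃ = 0) →
      ((b₂ - b₁) * κ₁ * x ^ a₁ * y ^ b₁ + (b₃ - b₂) * κ₂ * x ^ a₂ * y ^ b₂
          + (b₄ - b₃) * κ₃ * x ^ a₃ * y ^ b₃ = 0) →
      (κ₁ * x ^ a₁ * y ^ b₁) * (h₁ + h₂ + h₃) = h₁ * (κ₃ * x ^ a₃ * y ^ b₃) ∧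
      (κ₂ * x ^ a₂ * y ^ b₂) * (h₁ + h₂ + h₃) = (h₁ + h₂) * (κ₃ * x ^ a₃ * y ^ b₃) := by
    intro x y Ea Eb
    subst hh₁ hh₂ hh₃
    constructor
    · linear_combination (a₃ - a₂) * Eb - (b₃ - b₂) * Ea
    · linear_combination (b₂ - b₁) * Ea - (a₂ - a₁) * Eb
  -- existence implies the positivity condition
  have EXpos : (∃ p : ℝ × ℝ, 0 < p.1 ∧ 0 < p.2 ∧
        (a₂ - a₁) * κ₁ * p.1 ^ a₁ * p.2 ^ b₁ + (a₃ - a₂) * κ₂ * p.1 ^ a₂ * p.2 ^ b₂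
          + (a₄ - a₃) * κ₃ * p.1 ^ a₃ * p.2 ^ b₃ = 0 ∧
        (b₂ - b₁) * κ₁ * p.1 ^ a₁ * p.2 ^ b₁ + (b₃ - b₂) * κ₂ * p.1 ^ a₂ * p.2 ^ b₂
          + (b₄ - b₃) * κ₃ * p.1 ^ a₃ * p.2 ^ b₃ = 0) →
      0 < h₁ * (h₁ + h₂ + h₃) ∧ 0 < (h₁ + h₂) * (h₁ + h₂ + h₃) := by
    rintro ⟨⟨x, y⟩, hx, hy, Ea, Eb⟩
    obtain ⟨hc1, hc2⟩ := key x y Ea Eb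
    have hm1 : 0 < κ₁ * x ^ a₁ * y ^ b₁ :=
      mul_pos (mul_pos hκ₁ (Real.rpow_pos_of_pos hx a₁)) (Real.rpow_pos_of_pos hy b₁)
    have hm2 : 0 < κ₂ * x ^ a₂ * y ^ b₂ :=
      mul_pos (mul_pos hκ₂ (Real.rpow_pos_of_pos hx a₂)) (Real.rpow_pos_of_pos hy b₂)
    have hm3 : 0 < κ₃ * x ^ a₃ * y ^ b₃ :=
      mul_pos (mul_pos hκ₃ (Real.rpow_pos_of_pos hx a₃)) (Real.rpow_pos_of_pos hy b₃)
    have hs2 : 0 < (h₁ + h₂ + h₃) ^ 2 :=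
      lt_of_le_of_ne (sq_nonneg _) (Ne.symm (pow_ne_zero 2 hs))
    have k1 : h₁ * (h₁ + h₂ + h₃) * (κ₃ * x ^ a₃ * y ^ b₃)
        = (κ₁ * x ^ a₁ * y ^ b₁) * (h₁ + h₂ + h₃) ^ 2 := by
      linear_combination -(h₁ + h₂ + h₃) * hc1
    have k2 : (h₁ + h₂) * (h₁ + h₂ + h₃) * (κ₃ * x ^ a₃ * y ^ b₃)
        = (κ₂ * x ^ a₂ * y ^ b₂) * (h₁ + h₂ + h₃) ^ 2 := by
      linear_combination -(h₁ + h₂ + h₃) * hc2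
    clear key hline hidA hidB hsD Ea Eb hc1 hc2
    constructor
    · nlinarith [k1, mul_pos hm1 hs2, hm3]
    · nlinarith [k2, mul_pos hm2 hs2, hm3]
  -- the positivity condition implies existence
  have posEX : 0 < h₁ * (h₁ + h₂ + h₃) → 0 < (h₁ + h₂) * (h₁ + h₂ + h₃) →
      (∃ p : ℝ × ℝ, 0 < p.1 ∧ 0 < p.2 ∧
        (a₂ - a₁) * κ₁ * p.1 ^ a₁ * p.2 ^ b₁ + (a₃ - a₂) * κ₂ * p.1 ^ a₂ * p.2 ^ b₂
          + (a₄ - a₃) * κ₃ * p.1 ^ a₃ * p.2 ^ b₃ = 0 ∧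
        (b₂ - b₁) * κ₁ * p.1 ^ a₁ * p.2 ^ b₁ + (b₃ - b₂) * κ₂ * p.1 ^ a₂ * p.2 ^ b₂
          + (b₄ - b₃) * κ₃ * p.1 ^ a₃ * p.2 ^ b₃ = 0) := by
    intro hp1 hp2
    clear key EXpos
    have h₁ne : h₁ ≠ 0 := by
      intro h; rw [h, zero_mul] at hp1; exact lt_irrefl 0 hp1
    have hR1 : 0 < κ₁ * (h₁ + h₂) / (κ₂ * h₁) ∧ 0 < κ₁ * (h₁ + h₂ + h₃) / (κ₃ * h₁) := by
      rcases lt_or_gt_of_ne h₁ne with hneg | hpos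
      · have hsneg : h₁ + h₂ + h₃ < 0 := by
          rcases mul_pos_iff.mp hp1 with ⟨h', _⟩ | ⟨_, h'⟩
          · linarith
          · exact h'
        have h12neg : h₁ + h₂ < 0 := by
          rcases mul_pos_iff.mp hp2 with ⟨_, h'⟩ | ⟨h', _⟩
          · linarith
          · exact h'
        exact ⟨div_pos_of_neg_of_neg (mul_neg_of_pos_of_neg hκ₁ h12neg)
            (mul_neg_of_pos_of_neg hκ₂ hneg),
          div_pos_of_neg_of_neg (mul_neg_of_pos_of_neg hκ₁ hsneg)
            (mul_neg_of_pos_of_neg hκ₃ hneg)⟩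
      · have hspos : 0 < h₁ + h₂ + h₃ := by
          rcases mul_pos_iff.mp hp1 with ⟨_, h'⟩ | ⟨h', _⟩
          · exact h'
          · linarith
        have h12pos : 0 < h₁ + h₂ := by
          rcases mul_pos_iff.mp hp2 with ⟨h', _⟩ | ⟨_, h'⟩
          · exact h'
          · linarith
        exact ⟨div_pos (mul_pos hκ₁ h12pos) (mul_pos hκ₂ hpos),
          div_pos (mul_pos hκ₁ hspos) (mul_pos hκ₃ hpos)⟩
    obtain ⟨hR1p, hR2p⟩ := hR1
    obtain ⟨X, Y, e1, e2⟩ := solve2 (E := Real.log (κ₁ * (h₁ + h₂) / (κ₂ * h₁)))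
      (F := Real.log (κ₁ * (h₁ + h₂ + h₃) / (κ₃ * h₁))) hD
    have hm : ∀ a b : ℝ, Real.exp X ^ a * Real.exp Y ^ b = Real.exp (a * X + b * Y) := by
      intro a b
      rw [Real.rpow_def_of_pos (Real.exp_pos X), Real.rpow_def_of_pos (Real.exp_pos Y),
        Real.log_exp, Real.log_exp, ← Real.exp_add]
      ring_nf
    have hq2 : Real.exp (a₂ * X + b₂ * Y)
        = Real.exp (a₁ * X + b₁ * Y) * (κ₁ * (h₁ + h₂) / (κ₂ * h₁)) := by
      rw [← Real.exp_log hR1p, ← Real.exp_add]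
      congr 1
      linear_combination e1
    have hq3 : Real.exp (a₃ * X + b₃ * Y)
        = Real.exp (a₁ * X + b₁ * Y) * (κ₁ * (h₁ + h₂ + h₃) / (κ₃ * h₁)) := by
      rw [← Real.exp_log hR2p, ← Real.exp_add]
      congr 1
      linear_combination e2
    have hq2' : κ₂ * Real.exp (a₂ * X + b₂ * Y) * h₁
        = κ₁ * Real.exp (a₁ * X + b₁ * Y) * (h₁ + h₂) := by
      rw [hq2]; field_simp
    have hq3' : κ₃ * Real.exp (a₃ * X + b₃ * Y) * h₁
        = κ₁ * Real.exp (a₁ * X + b₁ * Y) * (h₁ + h₂ + h₃) := by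
      rw [hq3]; field_simp
    refine ⟨(Real.exp X, Real.exp Y), Real.exp_pos X, Real.exp_pos Y, ?_, ?_⟩
    · have hz : ((a₂ - a₁) * κ₁ * Real.exp X ^ a₁ * Real.exp Y ^ b₁
          + (a₃ - a₂) * κ₂ * Real.exp X ^ a₂ * Real.exp Y ^ b₂
          + (a₄ - a₃) * κ₃ * Real.exp X ^ a₃ * Real.exp Y ^ b₃) * h₁ = 0 := by
        linear_combination ((a₂ - a₁) * κ₁ * h₁) * hm a₁ b₁ + ((a₃ - a₂) * κ₂ * h₁) * hm a₂ b₂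
          + ((a₄ - a₃) * κ₃ * h₁) * hm a₃ b₃ + (a₃ - a₂) * hq2' + (a₄ - a₃) * hq3'
          + (κ₁ * Real.exp (a₁ * X + b₁ * Y)) * hidA
      rcases mul_eq_zero.mp hz with h' | h'
      · exact h'
      · exact absurd h' h₁ne
    · have hz : ((b₂ - b₁) * κ₁ * Real.exp X ^ a₁ * Real.exp Y ^ b₁
          + (b₃ - b₂) * κ₂ * Real.exp X ^ a₂ * Real.exp Y ^ b₂
          + (b₄ - b₃) * κ₃ * Real.exp X ^ a₃ * Real.exp Y ^ b₃) * h₁ = 0 := by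
        linear_combination ((b₂ - b₁) * κ₁ * h₁) * hm a₁ b₁ + ((b₃ - b₂) * κ₂ * h₁) * hm a₂ b₂
          + ((b₄ - b₃) * κ₃ * h₁) * hm a₃ b₃ + (b₃ - b₂) * hq2' + (b₄ - b₃) * hq3'
          + (κ₁ * Real.exp (a₁ * X + b₁ * Y)) * hidB
      rcases mul_eq_zero.mp hz with h' | h'
      · exact h'
      · exact absurd h' h₁ne
  -- uniqueness
  have UNIQ : ∀ x y x' y' : ℝ, 0 < x → 0 < y → 0 < x' → 0 < y' →
      ((a₂ - a₁) * κ₁ * x ^ a₁ * y ^ b₁ + (a₃ - a₂) * κ₂ * x ^ a₂ * y ^ b₂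
          + (a₄ - a₃) * κ₃ * x ^ a₃ * y ^ b₃ = 0) →
      ((b₂ - b₁) * κ₁ * x ^ a₁ * y ^ b₁ + (b₃ - b₂) * κ₂ * x ^ a₂ * y ^ b₂
          + (b₄ - b₃) * κ₃ * x ^ a₃ * y ^ b₃ = 0) →
      ((a₂ - a₁) * κ₁ * x' ^ a₁ * y' ^ b₁ + (a₃ - a₂) * κ₂ * x' ^ a₂ * y' ^ b₂
          + (a₄ - a₃) * κ₃ * x' ^ a₃ * y' ^ b₃ = 0) →
      ((b₂ - b₁) * κ₁ * x' ^ a₁ * y' ^ b₁ + (b₃ - b₂) * κ₂ * x' ^ a₂ * y' ^ b₂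
          + (b₄ - b₃) * κ₃ * x' ^ a₃ * y' ^ b₃ = 0) →
      x = x' ∧ y = y' := by
    intro x y x' y' hx hy hx' hy' Ea Eb Ea' Eb'
    obtain ⟨hc1, hc2⟩ := key x y Ea Eb
    obtain ⟨hc1', hc2'⟩ := key x' y' Ea' Eb'
    have h₁ne : h₁ ≠ 0 := by
      have := (EXpos ⟨(x, y), hx, hy, Ea, Eb⟩).1
      intro h; rw [h, zero_mul] at this; exact lt_irrefl 0 this
    clear key EXpos posEX Ea Eb Ea' Eb' hline hidA hidB hsD
    -- cross ratios agree
    have r1 : (κ₁ * x ^ a₁ * y ^ b₁) * (κ₃ * x' ^ a₃ * y' ^ b₃)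
        = (κ₁ * x' ^ a₁ * y' ^ b₁) * (κ₃ * x ^ a₃ * y ^ b₃) := by
      have hz : ((κ₁ * x ^ a₁ * y ^ b₁) * (κ₃ * x' ^ a₃ * y' ^ b₃)
          - (κ₁ * x' ^ a₁ * y' ^ b₁) * (κ₃ * x ^ a₃ * y ^ b₃)) * (h₁ + h₂ + h₃) = 0 := by
        linear_combination (κ₃ * x' ^ a₃ * y' ^ b₃) * hc1 - (κ₃ * x ^ a₃ * y ^ b₃) * hc1'
      rcases mul_eq_zero.mp hz with h' | h'
      · linarith [sub_eq_zero.mp h']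
      · exact absurd h' hs
    have r2 : (κ₂ * x ^ a₂ * y ^ b₂) * (κ₁ * x' ^ a₁ * y' ^ b₁)
        = (κ₂ * x' ^ a₂ * y' ^ b₂) * (κ₁ * x ^ a₁ * y ^ b₁) := by
      have hz : ((κ₂ * x ^ a₂ * y ^ b₂) * (κ₁ * x' ^ a₁ * y' ^ b₁)
          - (κ₂ * x' ^ a₂ * y' ^ b₂) * (κ₁ * x ^ a₁ * y ^ b₁)) * (h₁ + h₂ + h₃) = 0 := by
        linear_combination (κ₁ * x' ^ a₁ * y' ^ b₁) * hc2 - (κ₁ * x ^ a₁ * y ^ b₁) * hc2'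
          - (h₁ + h₂) * r1
      rcases mul_eq_zero.mp hz with h' | h'
      · linarith [sub_eq_zero.mp h']
      · exact absurd h' hs
    -- pass to logarithms
    have m1 : (x ^ a₁ * y ^ b₁) * (x' ^ a₃ * y' ^ b₃)
        = (x' ^ a₁ * y' ^ b₁) * (x ^ a₃ * y ^ b₃) := by
      have hz : κ₁ * κ₃ * ((x ^ a₁ * y ^ b₁) * (x' ^ a₃ * y' ^ b₃)
          - (x' ^ a₁ * y' ^ b₁) * (x ^ a₃ * y ^ b₃)) = 0 := by linear_combination r1
      rcases mul_eq_zero.mp hz with h' | h'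
      · exact absurd h' (mul_pos hκ₁ hκ₃).ne'
      · linarith [sub_eq_zero.mp h']
    have m2 : (x ^ a₂ * y ^ b₂) * (x' ^ a₁ * y' ^ b₁)
        = (x' ^ a₂ * y' ^ b₂) * (x ^ a₁ * y ^ b₁) := by
      have hz : κ₂ * κ₁ * ((x ^ a₂ * y ^ b₂) * (x' ^ a₁ * y' ^ b₁)
          - (x' ^ a₂ * y' ^ b₂) * (x ^ a₁ * y ^ b₁)) = 0 := by linear_combination r2
      rcases mul_eq_zero.mp hz with h' | h'
      · exact absurd h' (mul_pos hκ₂ hκ₁).ne'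
      · linarith [sub_eq_zero.mp h']
    have posmm : ∀ (u v : ℝ) (hu : 0 < u) (hv : 0 < v) (a b : ℝ), (0:ℝ) < u ^ a * v ^ b :=
      fun u v hu hv a b => mul_pos (Real.rpow_pos_of_pos hu a) (Real.rpow_pos_of_pos hv b)
    have L1 := congrArg Real.log m1
    have L2 := congrArg Real.log m2
    rw [Real.log_mul (posmm x y hx hy a₁ b₁).ne' (posmm x' y' hx' hy' a₃ b₃).ne',
      Real.log_mul (posmm x' y' hx' hy' a₁ b₁).ne' (posmm x y hx hy a₃ b₃).ne',
      log_mono x y hx hy, log_mono x' y' hx' hy', log_mono x' y' hx' hy',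
      log_mono x y hx hy] at L1
    rw [Real.log_mul (posmm x y hx hy a₂ b₂).ne' (posmm x' y' hx' hy' a₁ b₁).ne',
      Real.log_mul (posmm x' y' hx' hy' a₂ b₂).ne' (posmm x y hx hy a₁ b₁).ne',
      log_mono x y hx hy, log_mono x' y' hx' hy', log_mono x' y' hx' hy',
      log_mono x y hx hy] at L2
    have lin1 : (a₂ - a₁) * (Real.log x - Real.log x')
        + (b₂ - b₁) * (Real.log y - Real.log y') = 0 := by linear_combination L2
    have lin2 : (a₃ - a₁) * (Real.log x - Real.log x')
        + (b₃ - b₁) * (Real.log y - Real.log y') = 0 := by linear_combination -L1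
    obtain ⟨hu, hv⟩ := solve2_zero hD lin1 lin2
    constructor
    · have : Real.log x = Real.log x' := by linarith [sub_eq_zero.mp hu]
      calc x = Real.exp (Real.log x) := (Real.exp_log hx).symm
        _ = Real.exp (Real.log x') := by rw [this]
        _ = x' := Real.exp_log hx'
    · have : Real.log y = Real.log y' := by linarith [sub_eq_zero.mp hv]
      calc y = Real.exp (Real.log y) := (Real.exp_log hy).symm
        _ = Real.exp (Real.log y') := by rw [this]
        _ = y' := Real.exp_log hy'
  -- sign condition equivalence
  have SC : (0 < h₁ * (h₁ + h₂ + h₃) ∧ 0 < (h₁ + h₂) * (h₁ + h₂ + h₃)) ↔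
      (Real.sign h₁ = Real.sign (h₁ + h₂) ∧
       Real.sign (h₁ + h₂) = Real.sign (h₁ + h₂ + h₃) ∧
       Real.sign h₁ ≠ 0) := by
    clear key EXpos posEX UNIQ hline hidA hidB hsD
    constructor
    · rintro ⟨p1, p2⟩
      rcases lt_or_gt_of_ne hs with hneg | hpos
      · have q1 : h₁ < 0 := by nlinarith
        have q2 : h₁ + h₂ < 0 := by nlinarith
        rw [Real.sign_of_neg q1, Real.sign_of_neg q2, Real.sign_of_neg hneg]
        norm_num
      · have q1 : 0 < h₁ := by nlinarith
        have q2 : 0 < h₁ + h₂ := by nlinarith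
        rw [Real.sign_of_pos q1, Real.sign_of_pos q2, Real.sign_of_pos hpos]
        norm_num
    · rintro ⟨e1, e2, e3⟩
      have h₁ne : h₁ ≠ 0 := fun h => e3 (by rw [h, Real.sign_zero])
      rcases lt_or_gt_of_ne h₁ne with hneg | hpos
      · rw [Real.sign_of_neg hneg] at e1 e3
        have q2 : h₁ + h₂ < 0 := by
          rcases lt_trichotomy (h₁ + h₂) 0 with h' | h' | h'
          · exact h'
          · rw [h', Real.sign_zero] at e1; norm_num at e1
          · rw [Real.sign_of_pos h'] at e1; norm_num at e1
        rw [Real.sign_of_neg q2] at e2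
        have q3 : h₁ + h₂ + h₃ < 0 := by
          rcases lt_trichotomy (h₁ + h₂ + h₃) 0 with h' | h' | h'
          · exact h'
          · rw [h', Real.sign_zero] at e2; norm_num at e2
          · rw [Real.sign_of_pos h'] at e2; norm_num at e2
        exact ⟨mul_pos_of_neg_of_neg hneg q3, mul_pos_of_neg_of_neg q2 q3⟩
      · rw [Real.sign_of_pos hpos] at e1 e3
        have q2 : 0 < h₁ + h₂ := by
          rcases lt_trichotomy (h₁ + h₂) 0 with h' | h' | h'
          · rw [Real.sign_of_neg h'] at e1; norm_num at e1
          · rw [h', Real.sign_zero] at e1; norm_num at e1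
          · exact h'
        rw [Real.sign_of_pos q2] at e2
        have q3 : 0 < h₁ + h₂ + h₃ := by
          rcases lt_trichotomy (h₁ + h₂ + h₃) 0 with h' | h' | h'
          · rw [Real.sign_of_neg h'] at e2; norm_num at e2
          · rw [h', Real.sign_zero] at e2; norm_num at e2
          · exact h'
        exact ⟨mul_pos hpos q3, mul_pos q2 q3⟩
  constructor
  · constructor
    · rintro ⟨⟨x, y⟩, hx, hy, Ea, Eb⟩
      refine ⟨(x, y), ⟨hx, hy, Ea, Eb⟩, ?_⟩
      rintro ⟨x', y'⟩ ⟨hx', hy', Ea', Eb'⟩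
      obtain ⟨hxe, hye⟩ := UNIQ x' y' x y hx' hy' hx hy Ea' Eb' Ea Eb
      exact Prod.ext hxe hye
    · rintro ⟨p, hp, _⟩
      exact ⟨p, hp⟩
  · constructor
    · intro hE
      obtain ⟨p1, p2⟩ := EXpos hE
      exact SC.mp ⟨p1, p2⟩
    · intro hSC
      obtain ⟨p1, p2⟩ := SC.mpr hSC
      exact posEX p1 p2
end

section
/- Consider the scaled chain ODE ẋ = f(x,y) = (a₂−a₁)κ̄₁x^{a₁}y^{b₁} + (a₃−a₂)κ̄₂x^{a₂}y^{b₂} + (a₄−a₃)κ̄₃x^{a₃}y^{b₃}, ẏ = g(x,y) = K[(b₂−b₁)κ̄₁x^{a₁}y^{b₁} + (b₃−b₂)κ̄₂x^{a₂}y^{b₂} + (b₄−b₃)κ̄₃x^{a₃}y^{b₃}], where K ≠ 0 and κ̄₁ = λh₁, κ̄₂ = λ(h₁+h₂), κ̄₃ = λ(h₁+h₂+h₃) for some λ ≠ 0, with h₁ = Δ(243), h₂ = Δ(134), h₃ = Δ(142). Then the determinant of the Jacobian matrix of (f,g) at the point (1,1) equals ((h₁+h₂+h₃)/λ)·K·κ̄₁κ̄₂κ̄₃.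 -/
lemma term_hasDerivAt (c a b : ℝ) :
    HasDerivAt (fun x : ℝ => c * x ^ a * (1 : ℝ) ^ b) (c * a) 1 := by
  have h := (Real.hasDerivAt_rpow_const (x := (1:ℝ)) (p := a) (Or.inl one_ne_zero))
  have h2 := (h.const_mul c).mul_const ((1:ℝ) ^ b)
  simpa [Real.one_rpow, mul_comm, mul_assoc, mul_left_comm] using h2

lemma sum3_deriv (c₁ a₁ b₁ c₂ a₂ b₂ c₃ a₃ b₃ : ℝ) :
    deriv (fun x : ℝ => c₁ * x ^ a₁ * (1 : ℝ) ^ b₁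
        + c₂ * x ^ a₂ * (1 : ℝ) ^ b₂ + c₃ * x ^ a₃ * (1 : ℝ) ^ b₃) 1
      = c₁ * a₁ + c₂ * a₂ + c₃ * a₃ :=
  (((term_hasDerivAt c₁ a₁ b₁).add (term_hasDerivAt c₂ a₂ b₂)).add
    (term_hasDerivAt c₃ a₃ b₃)).deriv

lemma sum3_deriv' (K c₁ a₁ b₁ c₂ a₂ b₂ c₃ a₃ b₃ : ℝ) :
    deriv (fun x : ℝ => K * (c₁ * x ^ a₁ * (1 : ℝ) ^ b₁
        + c₂ * x ^ a₂ * (1 : ℝ) ^ b₂ + c₃ * x ^ a₃ * (1 : ℝ) ^ b₃)) 1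
      = K * (c₁ * a₁ + c₂ * a₂ + c₃ * a₃) :=
  ((((term_hasDerivAt c₁ a₁ b₁).add (term_hasDerivAt c₂ a₂ b₂)).add
    (term_hasDerivAt c₃ a₃ b₃)).const_mul K).deriv

lemma sum3_derivy (c₁ a₁ b₁ c₂ a₂ b₂ c₃ a₃ b₃ : ℝ) :
    deriv (fun y : ℝ => c₁ * (1 : ℝ) ^ a₁ * y ^ b₁
        + c₂ * (1 : ℝ) ^ a₂ * y ^ b₂ + c₃ * (1 : ℝ) ^ a₃ * y ^ b₃) 1
      = c₁ * b₁ + c₂ * b₂ + c₃ * b₃ := by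
  have e : ∀ c a b : ℝ, HasDerivAt (fun y : ℝ => c * (1:ℝ) ^ a * y ^ b) (c * b) 1 := by
    intro c a b
    have h := (Real.hasDerivAt_rpow_const (x := (1:ℝ)) (p := b) (Or.inl one_ne_zero))
    have h2 := h.const_mul (c * (1:ℝ) ^ a)
    simpa [Real.one_rpow, mul_comm, mul_assoc, mul_left_comm] using h2
  exact (((e c₁ a₁ b₁).add (e c₂ a₂ b₂)).add (e c₃ a₃ b₃)).deriv

lemma sum3_derivy' (K c₁ a₁ b₁ c₂ a₂ b₂ c₃ a₃ b₃ : ℝ) :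
    deriv (fun y : ℝ => K * (c₁ * (1 : ℝ) ^ a₁ * y ^ b₁
        + c₂ * (1 : ℝ) ^ a₂ * y ^ b₂ + c₃ * (1 : ℝ) ^ a₃ * y ^ b₃)) 1
      = K * (c₁ * b₁ + c₂ * b₂ + c₃ * b₃) := by
  have e : ∀ c a b : ℝ, HasDerivAt (fun y : ℝ => c * (1:ℝ) ^ a * y ^ b) (c * b) 1 := by
    intro c a b
    have h := (Real.hasDerivAt_rpow_const (x := (1:ℝ)) (p := b) (Or.inl one_ne_zero))
    have h2 := h.const_mul (c * (1:ℝ) ^ a)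
    simpa [Real.one_rpow, mul_comm, mul_assoc, mul_left_comm] using h2
  exact ((((e c₁ a₁ b₁).add (e c₂ a₂ b₂)).add (e c₃ a₃ b₃)).const_mul K).deriv

/-- The determinant of the Jacobian of the scaled chain system at (1,1)
equals ((h₁+h₂+h₃)/λ)·K·κ̄₁κ̄₂κ̄₃. -/
theorem chain_det_jacobian
    (a₁ b₁ a₂ b₂ a₃ b₃ a₄ b₄ : ℝ) (K lam : ℝ) (hK : K ≠ 0) (hlam : lam ≠ 0)
    (h₁ h₂ h₃ : ℝ)
    (hh₁ : h₁ = (a₄ - a₂) * (b₃ - b₂) - (b₄ - b₂) * (a₃ - a₂))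
    (hh₂ : h₂ = (a₃ - a₁) * (b₄ - b₁) - (b₃ - b₁) * (a₄ - a₁))
    (hh₃ : h₃ = (a₄ - a₁) * (b₂ - b₁) - (b₄ - b₁) * (a₂ - a₁))
    (κ₁ κ₂ κ₃ : ℝ)
    (hκ₁ : κ₁ = lam * h₁) (hκ₂ : κ₂ = lam * (h₁ + h₂)) (hκ₃ : κ₃ = lam * (h₁ + h₂ + h₃)) :
    deriv (fun x : ℝ => (a₂ - a₁) * κ₁ * x ^ a₁ * (1 : ℝ) ^ b₁
        + (a₃ - a₂) * κ₂ * x ^ a₂ * (1 : ℝ) ^ b₂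
        + (a₄ - a₃) * κ₃ * x ^ a₃ * (1 : ℝ) ^ b₃) 1
      * deriv (fun y : ℝ => K * ((b₂ - b₁) * κ₁ * (1 : ℝ) ^ a₁ * y ^ b₁
        + (b₃ - b₂) * κ₂ * (1 : ℝ) ^ a₂ * y ^ b₂
        + (b₄ - b₃) * κ₃ * (1 : ℝ) ^ a₃ * y ^ b₃)) 1
    - deriv (fun y : ℝ => (a₂ - a₁) * κ₁ * (1 : ℝ) ^ a₁ * y ^ b₁
        + (a₃ - a₂) * κ₂ * (1 : ℝ) ^ a₂ * y ^ b₂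
        + (a₄ - a₃) * κ₃ * (1 : ℝ) ^ a₃ * y ^ b₃) 1
      * deriv (fun x : ℝ => K * ((b₂ - b₁) * κ₁ * x ^ a₁ * (1 : ℝ) ^ b₁
        + (b₃ - b₂) * κ₂ * x ^ a₂ * (1 : ℝ) ^ b₂
        + (b₄ - b₃) * κ₃ * x ^ a₃ * (1 : ℝ) ^ b₃)) 1
    = ((h₁ + h₂ + h₃) / lam) * K * (κ₁ * κ₂ * κ₃) := by
  rw [sum3_deriv, sum3_deriv', sum3_derivy, sum3_derivy']
  subst hκ₁ hκ₂ hκ₃ hh₁ hh₂ hh₃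
  field_simp
  ring
end

section
/- Let p and q be real numbers with pq < 0 and p + q ≠ 0. Then the point (1,1) is a center of the planar ODE ẋ = (p−q) + q·x^p y^q − p·x^q y^p, ẏ = (q−p) + p·x^p y^q − q·x^q y^p on ℝ₊²: there exists an open neighborhood U ⊆ ℝ₊² of (1,1) such that every solution of the ODE starting at a point of U \ {(1,1)} is a nonconstant periodic solution. -/
open Real Set Filter Topology

noncomputable section CRCAux

/-- The vector field. -/
def crcF (p q : ℝ) (z : ℝ × ℝ) : ℝ × ℝ :=
  ((p - q) + q * z.1 ^ p * z.2 ^ q - p * z.1 ^ q * z.2 ^ p,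
   (q - p) + p * z.1 ^ p * z.2 ^ q - q * z.1 ^ q * z.2 ^ p)

/-- The linearization at (1,1). -/
def crcA (p q : ℝ) : ℝ × ℝ →L[ℝ] ℝ × ℝ :=
  ((q ^ 2 - p ^ 2) • ContinuousLinearMap.snd ℝ ℝ ℝ).prod
    ((p ^ 2 - q ^ 2) • ContinuousLinearMap.fst ℝ ℝ ℝ)

lemma crcA_apply (p q : ℝ) (w : ℝ × ℝ) :
    crcA p q w = ((q ^ 2 - p ^ 2) * w.2, (p ^ 2 - q ^ 2) * w.1) := rfl

lemma crcF_one_one (p q : ℝ) : crcF p q (1, 1) = 0 := by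
  simp [crcF, Prod.ext_iff]

/-- Reversibility: the field anti-commutes with the swap. -/
lemma crcF_swap (p q : ℝ) (z : ℝ × ℝ) :
    crcF p q (z.2, z.1) = -(((crcF p q z).2, (crcF p q z).1) : ℝ × ℝ) := by
  simp only [crcF, Prod.ext_iff, Prod.neg_mk, Prod.fst, Prod.snd]
  constructor <;> ring

/-- Unique equilibrium. -/
lemma crcF_eq_zero (p q : ℝ) (hpq : p * q < 0) (hsum : p + q ≠ 0) {z : ℝ × ℝ}
    (h1 : 0 < z.1) (h2 : 0 < z.2) (h : crcF p q z = 0) : z = (1, 1) := by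
  have hne : p ≠ q := by
    rintro rfl; nlinarith
  obtain ⟨x, y⟩ := z
  simp only at h1 h2
  have hu : (0:ℝ) < x ^ p * y ^ q := mul_pos (rpow_pos_of_pos h1 _) (rpow_pos_of_pos h2 _)
  have hv : (0:ℝ) < x ^ q * y ^ p := mul_pos (rpow_pos_of_pos h1 _) (rpow_pos_of_pos h2 _)
  set u := x ^ p * y ^ q with hu'
  set v := x ^ q * y ^ p with hv'
  have e1 : (p - q) + q * u - p * v = 0 := by
    have := congrArg Prod.fst h; simpa [crcF, hu', hv', mul_assoc] using this
  have e2 : (q - p) + p * u - q * v = 0 := by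
    have := congrArg Prod.snd h; simpa [crcF, hu', hv', mul_assoc] using this
  have huv : u = v := by
    have hs : (p + q) * (u - v) = 0 := by linarith
    have := mul_eq_zero.1 hs
    rcases this with h' | h'
    · exact absurd h' hsum
    · linarith
  have hu1 : u = 1 := by
    have hd : (p - q) * (2 - u - v) = 0 := by linarith
    rcases mul_eq_zero.1 hd with h' | h'
    · exact absurd (by linarith : p = q) hne
    · linarith
  -- now take logs
  have hlu : p * Real.log x + q * Real.log y = 0 := by
    have : Real.log u = 0 := by rw [hu1]; simp
    rw [hu', Real.log_mul (ne_of_gt (rpow_pos_of_pos h1 _)) (ne_of_gt (rpow_pos_of_pos h2 _)),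
      Real.log_rpow h1, Real.log_rpow h2] at this
    linarith
  have hlv : q * Real.log x + p * Real.log y = 0 := by
    have hv1 : v = 1 := huv ▸ hu1
    have : Real.log v = 0 := by rw [hv1]; simp
    rw [hv', Real.log_mul (ne_of_gt (rpow_pos_of_pos h1 _)) (ne_of_gt (rpow_pos_of_pos h2 _)),
      Real.log_rpow h1, Real.log_rpow h2] at this
    linarith
  have hxy : Real.log x = Real.log y := by
    have : (p - q) * (Real.log x - Real.log y) = 0 := by ring_nf; nlinarith [hlu, hlv]
    rcases mul_eq_zero.1 this with h' | h'
    · exact absurd (by linarith : p = q) hne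
    · linarith
  have hx0 : Real.log x = 0 := by
    have : (p + q) * Real.log x = 0 := by rw [hxy] at hlu ⊢; linarith
    rcases mul_eq_zero.1 this with h' | h'
    · exact absurd h' hsum
    · linarith
  have hx1 : x = 1 := by
    have := Real.exp_log h1; rw [hx0] at this; simpa using this.symm
  have hy1 : y = 1 := by
    have := Real.exp_log h2; rw [← hxy, hx0] at this; simpa using this.symm
  simp [hx1, hy1]


lemma crc_contDiffAt (p q : ℝ) {z : ℝ × ℝ} (h1 : 0 < z.1) (h2 : 0 < z.2) :
    ContDiffAt ℝ 1 (crcF p q) z := by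
  have hx : ∀ a : ℝ, ContDiffAt ℝ 1 (fun w : ℝ × ℝ => w.1 ^ a) z :=
    fun a => (Real.contDiffAt_rpow_const_of_ne (ne_of_gt h1)).comp z contDiff_fst.contDiffAt
  have hy : ∀ a : ℝ, ContDiffAt ℝ 1 (fun w : ℝ × ℝ => w.2 ^ a) z :=
    fun a => (Real.contDiffAt_rpow_const_of_ne (ne_of_gt h2)).comp z contDiff_snd.contDiffAt
  exact ContDiffAt.prodMk
    ((contDiffAt_const.add ((contDiffAt_const.mul (hx p)).mul (hy q))).sub
      ((contDiffAt_const.mul (hx q)).mul (hy p)))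
    ((contDiffAt_const.add ((contDiffAt_const.mul (hx p)).mul (hy q))).sub
      ((contDiffAt_const.mul (hx q)).mul (hy p)))

lemma crc_hasFDerivAt (p q : ℝ) : HasFDerivAt (crcF p q) (crcA p q) (1, 1) := by
  have hm : ∀ a b : ℝ, HasFDerivAt (fun w : ℝ × ℝ => w.1 ^ a * w.2 ^ b)
      (a • ContinuousLinearMap.fst ℝ ℝ ℝ + b • ContinuousLinearMap.snd ℝ ℝ ℝ)
      ((1, 1) : ℝ × ℝ) := by
    intro a b
    have h1 : HasFDerivAt (fun w : ℝ × ℝ => w.1 ^ a) (a • ContinuousLinearMap.fst ℝ ℝ ℝ)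
        ((1, 1) : ℝ × ℝ) := by
      have := (Real.hasDerivAt_rpow_const (x := 1) (p := a)
        (Or.inl one_ne_zero)).comp_hasFDerivAt ((1, 1) : ℝ × ℝ)
        (hasFDerivAt_fst : HasFDerivAt Prod.fst (ContinuousLinearMap.fst ℝ ℝ ℝ) ((1,1):ℝ×ℝ))
      simp only [Real.one_rpow, mul_one] at this
      exact this
    have h2 : HasFDerivAt (fun w : ℝ × ℝ => w.2 ^ b) (b • ContinuousLinearMap.snd ℝ ℝ ℝ)
        ((1, 1) : ℝ × ℝ) := by
      have := (Real.hasDerivAt_rpow_const (x := 1) (p := b)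
        (Or.inl one_ne_zero)).comp_hasFDerivAt ((1, 1) : ℝ × ℝ)
        (hasFDerivAt_snd : HasFDerivAt Prod.snd (ContinuousLinearMap.snd ℝ ℝ ℝ) ((1,1):ℝ×ℝ))
      simp only [Real.one_rpow, mul_one] at this
      exact this
    have := h1.mul h2
    simp only [Real.one_rpow, one_smul] at this
    refine this.congr_fderiv ?_
    abel
  have h1 := ((((hm p q).const_mul q).const_add (p - q)).sub ((hm q p).const_mul p))
  have h2 := ((((hm p q).const_mul p).const_add (q - p)).sub ((hm q p).const_mul q))
  have hF := h1.prodMk h2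
  have heq : (fun w : ℝ × ℝ =>
      ((p - q) + q * (w.1 ^ p * w.2 ^ q) - p * (w.1 ^ q * w.2 ^ p),
       (q - p) + p * (w.1 ^ p * w.2 ^ q) - q * (w.1 ^ q * w.2 ^ p))) = crcF p q := by
    funext w; simp only [crcF, Prod.ext_iff]; constructor <;> ring
  rw [← heq]
  refine hF.congr_fderiv ?_
  apply ContinuousLinearMap.ext
  rintro ⟨w1, w2⟩
  simp only [crcA, ContinuousLinearMap.prod_apply, ContinuousLinearMap.coe_sub',
    ContinuousLinearMap.coe_smul', ContinuousLinearMap.add_apply,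
    ContinuousLinearMap.smul_apply, ContinuousLinearMap.sub_apply,
    ContinuousLinearMap.coe_fst', ContinuousLinearMap.coe_snd', Pi.smul_apply, Pi.sub_apply,
    smul_eq_mul, Prod.ext_iff]
  constructor <;> ring

lemma crc_ode_unique {F : ℝ × ℝ → ℝ × ℝ} {Ω : Set (ℝ × ℝ)}
    (hF : ∀ z ∈ Ω, ContDiffAt ℝ 1 F z)
    {f g : ℝ → ℝ × ℝ} (hf : ∀ t, HasDerivAt f (F (f t)) t)
    (hg : ∀ t, HasDerivAt g (F (g t)) t)
    (hfΩ : ∀ t, f t ∈ Ω) (hgΩ : ∀ t, g t ∈ Ω) {t0 : ℝ} (heq : f t0 = g t0) :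
    ∀ t, f t = g t := by
  have cf : Continuous f := continuous_iff_continuousAt.2 fun t => (hf t).continuousAt
  have cg : Continuous g := continuous_iff_continuousAt.2 fun t => (hg t).continuousAt
  have hE : {t : ℝ | f t = g t} = univ := by
    apply IsClopen.eq_univ _ ⟨t0, heq⟩
    refine ⟨isClosed_eq cf cg, ?_⟩
    rw [isOpen_iff_mem_nhds]
    rintro t1 (ht1 : f t1 = g t1)
    obtain ⟨K, s, hs, hlip⟩ := (hF _ (hfΩ t1)).exists_lipschitzOnWith
    have hfs : ∀ᶠ t in 𝓝 t1, HasDerivAt f ((fun _ : ℝ => F) t (f t)) t ∧ f t ∈ s :=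
      (Filter.Eventually.of_forall fun t => hf t).and
        (cf.continuousAt.preimage_mem_nhds hs : ∀ᶠ t in 𝓝 t1, f t ∈ s)
    have hgs : ∀ᶠ t in 𝓝 t1, HasDerivAt g ((fun _ : ℝ => F) t (g t)) t ∧ g t ∈ s := by
      refine (Filter.Eventually.of_forall fun t => hg t).and ?_
      exact (cg.continuousAt.preimage_mem_nhds (ht1 ▸ hs) : ∀ᶠ t in 𝓝 t1, g t ∈ s)
    exact ODE_solution_unique_of_eventually (Filter.Eventually.of_forall fun _ => hlip) hfs hgs ht1
  intro t
  exact (Set.eq_univ_iff_forall.1 hE) t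

lemma crc_stay {δ δ' : ℝ → ℝ × ℝ} {R K T1 : ℝ} (hR : 0 < R) (hK : 0 < K) (hT : 0 ≤ T1)
    (hd : ∀ t, HasDerivAt δ (δ' t) t)
    (hb : ∀ t, ‖δ t‖ ≤ R → ‖δ' t‖ ≤ K * ‖δ t‖)
    (h0 : ‖δ 0‖ ≤ R / 2 * Real.exp (-(K * T1))) :
    ∀ t ∈ Icc (0:ℝ) T1, ‖δ t‖ ≤ R / 2 := by
  have hexp : Real.exp (-(K * T1)) ≤ 1 := Real.exp_le_one_iff.2 (by nlinarith)
  have h0R : ‖δ 0‖ ≤ R / 2 := le_trans h0 (by nlinarith [norm_nonneg (δ 0)])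
  -- Grönwall on any interval on which we stay in the ball of radius R
  have gron : ∀ b ∈ Icc (0:ℝ) T1, (∀ s ∈ Icc (0:ℝ) b, ‖δ s‖ ≤ R) →
      ∀ s ∈ Icc (0:ℝ) b, ‖δ s‖ ≤ R / 2 := by
    intro b hbT hball s hs
    have key := norm_le_gronwallBound_of_norm_deriv_right_le (f := δ) (f' := δ')
      (δ := R / 2 * Real.exp (-(K * T1))) (K := K) (ε := 0) (a := 0) (b := b)
      (fun t _ => (hd t).continuousAt.continuousWithinAt)
      (fun t _ => (hd t).hasDerivWithinAt) h0
      (fun t ht => by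
        rw [add_zero]
        exact hb t (hball t ⟨ht.1, le_of_lt ht.2⟩)) s hs
    rw [gronwallBound_ε0, sub_zero] at key
    calc ‖δ s‖ ≤ R / 2 * Real.exp (-(K * T1)) * Real.exp (K * s) := key
      _ = R / 2 * Real.exp (K * s - K * T1) := by rw [mul_assoc, ← Real.exp_add]; ring_nf
      _ ≤ R / 2 * 1 := by
          have : K * s - K * T1 ≤ 0 := by nlinarith [hs.2, hbT.2]
          nlinarith [Real.exp_le_one_iff.2 this, Real.exp_pos (K * s - K * T1)]
      _ = R / 2 := mul_one _
  set G : Set ℝ := {t ∈ Icc (0:ℝ) T1 | ∀ s ∈ Icc (0:ℝ) t, ‖δ s‖ ≤ R} with hG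
  have h0G : (0:ℝ) ∈ G := by
    refine ⟨⟨le_refl _, hT⟩, ?_⟩
    intro s hs
    have : s = 0 := le_antisymm hs.2 hs.1
    rw [this]; linarith
  have hGbdd : BddAbove G := ⟨T1, fun x hx => hx.1.2⟩
  set b := sSup G with hbdef
  have hb0 : 0 ≤ b := le_csSup hGbdd h0G
  have hbT : b ≤ T1 := csSup_le ⟨0, h0G⟩ fun x hx => hx.1.2
  have hbG : b ∈ G := by
    refine ⟨⟨hb0, hbT⟩, ?_⟩
    intro s hs
    rcases lt_or_eq_of_le hs.2 with hlt | heqs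
    · obtain ⟨t, htG, hst⟩ := exists_lt_of_lt_csSup ⟨0, h0G⟩ hlt
      exact htG.2 s ⟨hs.1, le_of_lt hst⟩
    · -- s = b : limit argument
      subst heqs
      rcases eq_or_lt_of_le hb0 with h0b | h0b
      · rw [← h0b]; linarith
      · have hlim : Tendsto (fun t => ‖δ t‖) (𝓝[<] b) (𝓝 ‖δ b‖) :=
          ((hd b).continuousAt.norm.tendsto).mono_left nhdsWithin_le_nhds
        refine le_of_tendsto hlim ?_
        filter_upwards [Ioo_mem_nhdsLT_of_mem (⟨h0b, le_refl b⟩ : b ∈ Ioc 0 b)] with t ht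
        obtain ⟨t', ht'G, htt'⟩ := exists_lt_of_lt_csSup ⟨0, h0G⟩ ht.2
        exact ht'G.2 t ⟨le_of_lt ht.1, le_of_lt htt'⟩
  have hbT1 : b = T1 := by
    by_contra hne
    have hblt : b < T1 := lt_of_le_of_ne hbT hne
    have hhalf : ‖δ b‖ ≤ R / 2 := gron b ⟨hb0, hbT⟩ hbG.2 b ⟨hb0, le_refl b⟩
    have hev : ∀ᶠ t in 𝓝 b, ‖δ t‖ < R := by
      apply Tendsto.eventually_lt_const (by linarith) ((hd b).continuousAt.norm.tendsto)
    obtain ⟨η, hη, hball⟩ := Metric.eventually_nhds_iff.1 hev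
    set t' := min (b + η / 2) T1 with ht'def
    have ht'G : t' ∈ G := by
      refine ⟨⟨le_trans hb0 (le_min (by linarith) hbT), min_le_right _ _⟩, ?_⟩
      intro s hs
      rcases le_or_gt s b with h | h
      · exact hbG.2 s ⟨hs.1, h⟩
      · apply le_of_lt
        apply hball
        rw [Real.dist_eq, abs_lt]
        constructor
        · linarith
        · have : s ≤ b + η / 2 := le_trans hs.2 (min_le_left _ _)
          linarith
    have : t' ≤ b := le_csSup hGbdd ht'G
    have : b < t' := lt_min (by linarith) hblt
    linarith
  intro t ht
  exact gron T1 ⟨hT, le_refl _⟩ (hbT1 ▸ hbG.2) t ht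

set_option maxHeartbeats 1000000 in
lemma crc_cross (p q ω ε R1 : ℝ) (hω : ω = p ^ 2 - q ^ 2) (hωne : ω ≠ 0)
    (hε : ε = |ω| / 16)
    (happ : ∀ z : ℝ × ℝ, ‖z - (1, 1)‖ ≤ R1 →
      ‖crcF p q z - crcA p q (z - (1, 1))‖ ≤ ε * ‖z - (1, 1)‖)
    {γ : ℝ → ℝ × ℝ} (hode : ∀ t, HasDerivAt γ (crcF p q (γ t)) t)
    {a b : ℝ} (hab : a + 2 * π / |ω| < b)
    (hin : ∀ t ∈ Icc a b, ‖γ t - (1, 1)‖ ≤ R1) :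
    ∃ t ∈ Icc a b, (γ t).1 = (γ t).2 := by
  have hω0 : 0 < |ω| := abs_pos.2 hωne
  by_contra hcon
  push_neg at hcon
  set X : ℝ → ℝ := fun t => (γ t).1 - 1 with hXdef
  set Y : ℝ → ℝ := fun t => (γ t).2 - 1 with hYdef
  set S : ℝ → ℝ := fun t => X t + Y t with hSdef
  set D : ℝ → ℝ := fun t => X t - Y t with hDdef
  set F1 : ℝ → ℝ := fun t => (crcF p q (γ t)).1 with hF1def
  set F2 : ℝ → ℝ := fun t => (crcF p q (γ t)).2 with hF2def
  have hX : ∀ t, HasDerivAt X (F1 t) t := fun t =>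
    ((ContinuousLinearMap.fst ℝ ℝ ℝ).hasFDerivAt.comp_hasDerivAt t (hode t)).sub_const 1
  have hY : ∀ t, HasDerivAt Y (F2 t) t := fun t =>
    ((ContinuousLinearMap.snd ℝ ℝ ℝ).hasFDerivAt.comp_hasDerivAt t (hode t)).sub_const 1
  have hS : ∀ t, HasDerivAt S (F1 t + F2 t) t := fun t => (hX t).add (hY t)
  have hD : ∀ t, HasDerivAt D (F1 t - F2 t) t := fun t => (hX t).sub (hY t)
  have hDne : ∀ t ∈ Icc a b, D t ≠ 0 := by
    intro t ht h
    exact hcon t ht (by simp only [hDdef, hXdef, hYdef] at h; linarith)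
  have hpos : ∀ t ∈ Icc a b, 0 < D t ^ 2 + S t ^ 2 := by
    intro t ht
    have := hDne t ht
    positivity
  set N : ℝ → ℝ := fun t => (F1 t + F2 t) * D t - S t * (F1 t - F2 t) with hNdef
  -- the key estimate
  have hkey : ∀ t ∈ Icc a b, |N t - ω * (D t ^ 2 + S t ^ 2)| ≤ |ω| / 8 * (D t ^ 2 + S t ^ 2) := by
    intro t ht
    set w : ℝ × ℝ := γ t - (1, 1) with hwdef
    have hw1 : w.1 = X t := rfl
    have hw2 : w.2 = Y t := rfl
    set e : ℝ × ℝ := crcF p q (γ t) - crcA p q w with hedef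
    have he : ‖e‖ ≤ ε * ‖w‖ := happ (γ t) (hin t ht)
    have he1 : |e.1| ≤ ε * ‖w‖ := le_trans (by rw [← Real.norm_eq_abs]; exact norm_fst_le e) he
    have he2 : |e.2| ≤ ε * ‖w‖ := le_trans (by rw [← Real.norm_eq_abs]; exact norm_snd_le e) he
    have hF1e : F1 t = -ω * Y t + e.1 := by
      have : e.1 = (crcF p q (γ t)).1 - (crcA p q w).1 := rfl
      rw [crcA_apply] at this
      simp only [hw2] at this
      simp only [hF1def]
      rw [hω] at *
      linarith [this]
    have hF2e : F2 t = ω * X t + e.2 := by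
      have : e.2 = (crcF p q (γ t)).2 - (crcA p q w).2 := rfl
      rw [crcA_apply] at this
      simp only [hw1] at this
      simp only [hF2def]
      rw [hω] at *
      linarith [this]
    have hNalt : N t - ω * (D t ^ 2 + S t ^ 2) = 2 * (e.2 * X t - e.1 * Y t) := by
      simp only [hNdef, hSdef, hDdef, hF1e, hF2e]; ring
    rw [hNalt]
    have hwnorm : ‖w‖ ≤ |X t| + |Y t| := by
      rw [Prod.norm_def, hw1, hw2]
      simp only [Real.norm_eq_abs, sup_le_iff]
      constructor <;> nlinarith [abs_nonneg (X t), abs_nonneg (Y t)]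
    have hbnd : |2 * (e.2 * X t - e.1 * Y t)| ≤ 2 * (ε * ‖w‖ * (|X t| + |Y t|)) := by
      rw [abs_mul, abs_two]
      have h1 : |e.2 * X t - e.1 * Y t| ≤ |e.2| * |X t| + |e.1| * |Y t| := by
        calc |e.2 * X t - e.1 * Y t| ≤ |e.2 * X t| + |e.1 * Y t| := abs_sub _ _
          _ = |e.2| * |X t| + |e.1| * |Y t| := by rw [abs_mul, abs_mul]
      have h2 : |e.2| * |X t| + |e.1| * |Y t| ≤ ε * ‖w‖ * (|X t| + |Y t|) := by
        nlinarith [abs_nonneg (X t), abs_nonneg (Y t)]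
      linarith
    have hq : 2 * (ε * ‖w‖ * (|X t| + |Y t|)) ≤ |ω| / 8 * (D t ^ 2 + S t ^ 2) := by
      have hε0 : 0 ≤ ε := by rw [hε]; positivity
      have h3 : ‖w‖ * (|X t| + |Y t|) ≤ 2 * (X t ^ 2 + Y t ^ 2) := by
        nlinarith [hwnorm, sq_nonneg (|X t| - |Y t|), sq_abs (X t), sq_abs (Y t),
          abs_nonneg (X t), abs_nonneg (Y t), norm_nonneg w]
      have h4 := mul_le_mul_of_nonneg_left h3 hε0
      have hDS : D t ^ 2 + S t ^ 2 = 2 * (X t ^ 2 + Y t ^ 2) := by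
        simp only [hDdef, hSdef]; ring
      rw [hε] at h4 ⊢
      rw [hDS]
      nlinarith [h4, hω0.le, sq_nonneg (X t), sq_nonneg (Y t)]
    linarith
  -- the angular function
  set h : ℝ → ℝ := fun t => Real.arctan (S t / D t) with hhdef
  have hh : ∀ t ∈ Icc a b, HasDerivAt h (N t / (D t ^ 2 + S t ^ 2)) t := by
    intro t ht
    have hdiv : HasDerivAt (fun t => S t / D t)
        (((F1 t + F2 t) * D t - S t * (F1 t - F2 t)) / D t ^ 2) t :=
      (hS t).div (hD t) (hDne t ht)
    have := (Real.hasDerivAt_arctan (S t / D t)).comp t hdiv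
    refine this.congr_deriv ?_
    have hD0 := hDne t ht
    field_simp
    ring
  -- two cases on the sign of ω; in each case build a function increasing at rate 7|ω|/8
  set m : ℝ := 7 * |ω| / 8 with hmdef
  have hm0 : 0 < m := by positivity
  have hfinal : ∀ H H' : ℝ → ℝ, (∀ t ∈ Icc a b, HasDerivAt H (H' t) t) →
      (∀ t ∈ Icc a b, m ≤ H' t) → (∀ t, |H t| < π / 2) → False := by
    intro H H' hH hH' hHb
    have hsub : m * (b - a) ≤ H b - H a := by
      apply Convex.mul_sub_le_image_sub_of_le_deriv (convex_Icc a b)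
      · intro t ht; exact (hH t ht).continuousAt.continuousWithinAt
      · intro t ht
        rw [interior_Icc] at ht
        exact ((hH t (Ioo_subset_Icc_self ht)).differentiableAt).differentiableWithinAt
      · intro t ht
        rw [interior_Icc] at ht
        rw [(hH t (Ioo_subset_Icc_self ht)).deriv]
        exact hH' t (Ioo_subset_Icc_self ht)
      · exact ⟨le_refl a, by linarith [div_pos (by positivity : (0:ℝ) < 2 * π) hω0]⟩
      · exact ⟨by linarith [div_pos (by positivity : (0:ℝ) < 2 * π) hω0], le_refl b⟩
      · linarith [div_pos (by positivity : (0:ℝ) < 2 * π) hω0]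
    have h1 : H b - H a < π := by
      have := abs_lt.1 (hHb a); have := abs_lt.1 (hHb b); linarith
    have h2 : 7 * π / 4 < m * (b - a) := by
      have hba : 2 * π / |ω| < b - a := by linarith
      have : m * (2 * π / |ω|) = 7 * π / 4 := by
        rw [hmdef]; field_simp; ring
      nlinarith [mul_lt_mul_of_pos_left hba hm0]
    have hπ : 0 < π := Real.pi_pos
    linarith
  rcases lt_or_gt_of_ne hωne with hneg | hposω
  · -- ω < 0 : use -h
    refine hfinal (fun t => -h t) (fun t => -(N t / (D t ^ 2 + S t ^ 2)))
      (fun t ht => (hh t ht).neg) ?_ ?_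
    · intro t ht
      have hP := hpos t ht
      have hk2 := (abs_le.1 (hkey t ht)).2
      rw [le_neg, div_le_iff₀ hP, hmdef]
      have habs : |ω| = -ω := abs_of_neg hneg
      rw [habs] at hk2 ⊢
      nlinarith [hk2]
    · intro t
      simp only [abs_neg, hhdef]
      rw [abs_lt]
      exact ⟨Real.neg_pi_div_two_lt_arctan _, Real.arctan_lt_pi_div_two _⟩
  · -- ω > 0 : use h
    refine hfinal h (fun t => N t / (D t ^ 2 + S t ^ 2)) (fun t ht => hh t ht) ?_ ?_
    · intro t ht
      have hP := hpos t ht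
      have hk1 := (abs_le.1 (hkey t ht)).1
      rw [le_div_iff₀ hP, hmdef]
      have habs : |ω| = ω := abs_of_pos hposω
      rw [habs] at hk1 ⊢
      nlinarith [hk1]
    · intro t
      simp only [hhdef]
      rw [abs_lt]
      exact ⟨Real.neg_pi_div_two_lt_arctan _, Real.arctan_lt_pi_div_two _⟩

set_option maxHeartbeats 1000000 in
/-- If pq < 0 and p + q ≠ 0, then (1,1) is a center of the ODE
ẋ = (p−q) + q·x^p y^q − p·x^q y^p, ẏ = (q−p) + p·x^p y^q − q·x^q y^p on ℝ₊². -/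
theorem chain_reversible_center (p q : ℝ) (hpq : p * q < 0) (hsum : p + q ≠ 0) :
    ∃ U : Set (ℝ × ℝ), IsOpen U ∧ U ⊆ {z : ℝ × ℝ | 0 < z.1 ∧ 0 < z.2} ∧
      ((1, 1) : ℝ × ℝ) ∈ U ∧
      ∀ γ : ℝ → ℝ × ℝ,
        (∀ t : ℝ, 0 < (γ t).1 ∧ 0 < (γ t).2) →
        (∀ t : ℝ, HasDerivAt γ
          ((p - q) + q * (γ t).1 ^ p * (γ t).2 ^ q - p * (γ t).1 ^ q * (γ t).2 ^ p,
           (q - p) + p * (γ t).1 ^ p * (γ t).2 ^ q - q * (γ t).1 ^ q * (γ t).2 ^ p) t) →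
        γ 0 ∈ U → γ 0 ≠ ((1, 1) : ℝ × ℝ) →
        (∃ T : ℝ, 0 < T ∧ ∀ t : ℝ, γ (t + T) = γ t) ∧ (∃ s t : ℝ, γ s ≠ γ t) := by
  have hπ : (0:ℝ) < π := Real.pi_pos
  have hpne : p ≠ q := fun h => by rw [h] at hpq; nlinarith [sq_nonneg q, sq_abs q]
  set ω : ℝ := p ^ 2 - q ^ 2 with hωdef
  have hωne : ω ≠ 0 := by
    have h : ω = (p + q) * (p - q) := by rw [hωdef]; ring
    rw [h]; exact mul_ne_zero hsum (sub_ne_zero.2 hpne)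
  have hω0 : 0 < |ω| := abs_pos.2 hωne
  set ε : ℝ := |ω| / 16 with hεdef
  have hε0 : 0 < ε := by positivity
  -- little-o estimate
  have hlo := (crc_hasFDerivAt p q).isLittleO.def hε0
  simp only [crcF_one_one, sub_zero] at hlo
  obtain ⟨η, hη0, hηball⟩ := Metric.eventually_nhds_iff.1 hlo
  set R1 : ℝ := min (η / 2) (1 / 2) with hR1def
  have hR10 : 0 < R1 := lt_min (by linarith) (by norm_num)
  have hR1half : R1 ≤ 1 / 2 := min_le_right _ _
  have happ : ∀ z : ℝ × ℝ, ‖z - (1, 1)‖ ≤ R1 →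
      ‖crcF p q z - crcA p q (z - (1, 1))‖ ≤ ε * ‖z - (1, 1)‖ := by
    intro z hz
    have hd : dist z (1, 1) < η := by
      rw [dist_eq_norm]
      calc ‖z - (1, 1)‖ ≤ R1 := hz
        _ ≤ η / 2 := min_le_left _ _
        _ < η := by linarith
    exact hηball hd
  -- ball of radius 1/2 is inside the quadrant
  have hquad : ∀ z : ℝ × ℝ, ‖z - (1, 1)‖ ≤ 1 / 2 → 0 < z.1 ∧ 0 < z.2 := by
    intro z hz
    have h1 : |z.1 - 1| ≤ 1 / 2 := by
      have := norm_fst_le (z - (1, 1))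
      rw [Real.norm_eq_abs] at this
      exact le_trans (by exact this) hz
    have h2 : |z.2 - 1| ≤ 1 / 2 := by
      have := norm_snd_le (z - (1, 1))
      rw [Real.norm_eq_abs] at this
      exact le_trans (by exact this) hz
    have := abs_le.1 h1; have := abs_le.1 h2
    constructor <;> [linarith [this.1]; linarith [(abs_le.1 h2).1]]
  set K : ℝ := |ω| + ε with hKdef
  have hK0 : 0 < K := by positivity
  have hAnorm : ∀ w : ℝ × ℝ, ‖crcA p q w‖ ≤ |ω| * ‖w‖ := by
    intro w
    rw [crcA_apply, Prod.norm_def, Prod.norm_def]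
    simp only [Real.norm_eq_abs, abs_mul]
    have e1 : |q ^ 2 - p ^ 2| = |ω| := by rw [hωdef, abs_sub_comm]
    have e2 : |p ^ 2 - q ^ 2| = |ω| := by rw [hωdef]
    rw [e1, e2]
    apply sup_le
    · exact mul_le_mul_of_nonneg_left (le_sup_right) (abs_nonneg ω)
    · exact mul_le_mul_of_nonneg_left (le_sup_left) (abs_nonneg ω)
  have hFbound : ∀ z : ℝ × ℝ, ‖z - (1, 1)‖ ≤ R1 → ‖crcF p q z‖ ≤ K * ‖z - (1, 1)‖ := by
    intro z hz
    calc ‖crcF p q z‖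
        = ‖crcA p q (z - (1, 1)) + (crcF p q z - crcA p q (z - (1, 1)))‖ := by
          congr 1; abel
      _ ≤ ‖crcA p q (z - (1, 1))‖ + ‖crcF p q z - crcA p q (z - (1, 1))‖ := norm_add_le _ _
      _ ≤ |ω| * ‖z - (1, 1)‖ + ε * ‖z - (1, 1)‖ := add_le_add (hAnorm _) (happ z hz)
      _ = K * ‖z - (1, 1)‖ := by rw [hKdef]; ring
  set Tc : ℝ := 2 * π / |ω| with hTcdef
  have hTc0 : 0 < Tc := div_pos (by positivity) hω0
  set T1 : ℝ := Tc + 2 with hT1def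
  have hT10 : 0 < T1 := by linarith
  set r0 : ℝ := R1 / 2 * Real.exp (-(K * T1)) with hr0def
  have hr00 : 0 < r0 := by positivity
  have hr0R : r0 ≤ R1 / 2 := by
    have : Real.exp (-(K * T1)) ≤ 1 := Real.exp_le_one_iff.2 (by nlinarith)
    nlinarith
  refine ⟨Metric.ball (1, 1) r0, Metric.isOpen_ball, ?_, Metric.mem_ball_self hr00, ?_⟩
  · intro z hz
    rw [Metric.mem_ball, dist_eq_norm] at hz
    exact hquad z (by linarith [hz, hr0R, hR1half])
  intro γ hpos hode' hU hne
  have hode : ∀ t, HasDerivAt γ (crcF p q (γ t)) t := fun t => hode' t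
  -- the trajectory stays in the ball of radius R1 on [-T1, T1]
  have hd : ∀ t, HasDerivAt (fun t => γ t - ((1:ℝ), (1:ℝ))) (crcF p q (γ t)) t :=
    fun t => (hode t).sub_const _
  have hbb : ∀ t, ‖γ t - ((1:ℝ), (1:ℝ))‖ ≤ R1 → ‖crcF p q (γ t)‖ ≤ K * ‖γ t - ((1:ℝ),(1:ℝ))‖ :=
    fun t h => hFbound _ h
  have h00 : ‖γ 0 - ((1:ℝ), (1:ℝ))‖ ≤ R1 / 2 * Real.exp (-(K * T1)) := by
    rw [Metric.mem_ball, dist_eq_norm] at hU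
    exact hU.le
  have hfwd := crc_stay hR10 hK0 hT10.le hd hbb h00
  have hd' : ∀ t, HasDerivAt (fun t => γ (-t) - ((1:ℝ), (1:ℝ)))
      ((-1 : ℝ) • crcF p q (γ (-t))) t := by
    intro t
    have h1 : HasDerivAt (fun t : ℝ => γ (-t)) ((-1 : ℝ) • crcF p q (γ (-t))) t :=
      (hode (-t)).scomp t (hasDerivAt_neg t)
    exact h1.sub_const _
  have hbb' : ∀ t, ‖γ (-t) - ((1:ℝ), (1:ℝ))‖ ≤ R1 →
      ‖(-1 : ℝ) • crcF p q (γ (-t))‖ ≤ K * ‖γ (-t) - ((1:ℝ),(1:ℝ))‖ := by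
    intro t h
    rw [norm_smul]
    simpa using hFbound _ h
  have h00' : ‖γ (-(0:ℝ)) - ((1:ℝ), (1:ℝ))‖ ≤ R1 / 2 * Real.exp (-(K * T1)) := by
    rw [neg_zero]; exact h00
  have hbwd := crc_stay hR10 hK0 hT10.le hd' hbb' h00'
  have hball : ∀ t ∈ Icc (-T1) T1, ‖γ t - ((1:ℝ), (1:ℝ))‖ ≤ R1 := by
    intro t ht
    rcases le_or_gt 0 t with h | h
    · have := hfwd t ⟨h, ht.2⟩
      linarith
    · have := hbwd (-t) ⟨by linarith, by linarith [ht.1]⟩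
      rw [neg_neg] at this
      linarith
  -- two diagonal crossings
  have hcr2 := crc_cross p q ω ε R1 hωdef hωne hεdef happ hode
    (a := 1/2) (b := Tc + 3/2) (by rw [← hTcdef]; linarith)
    (fun t ht => hball t ⟨by linarith [ht.1], by linarith [ht.2]⟩)
  obtain ⟨t2, ht2mem, ht2⟩ := hcr2
  have hcr1 := crc_cross p q ω ε R1 hωdef hωne hεdef happ hode
    (a := -(Tc + 3/2)) (b := -(1/2)) (by rw [← hTcdef]; linarith)
    (fun t ht => hball t ⟨by linarith [ht.1], by linarith [ht.2]⟩)
  obtain ⟨t1, ht1mem, ht1⟩ := hcr1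
  have ht12 : t1 < t2 := by
    have := ht1mem.2; have := ht2mem.1; linarith
  -- reflection principle
  set σ : ℝ × ℝ →L[ℝ] ℝ × ℝ :=
    (ContinuousLinearMap.snd ℝ ℝ ℝ).prod (ContinuousLinearMap.fst ℝ ℝ ℝ) with hσdef
  have hσap : ∀ z : ℝ × ℝ, σ z = (z.2, z.1) := fun z => rfl
  have hrefl : ∀ c : ℝ, (γ c).1 = (γ c).2 → ∀ t, γ t = σ (γ (2 * c - t)) := by
    intro c hc t
    have hgsol : ∀ t, HasDerivAt (fun t => σ (γ (2 * c - t)))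
        (crcF p q (σ (γ (2 * c - t)))) t := by
      intro u
      have haff : HasDerivAt (fun t : ℝ => 2 * c - t) (-1 : ℝ) u := by
        simpa using (hasDerivAt_id u).const_sub (2 * c)
      have h1 : HasDerivAt (fun t : ℝ => γ (2 * c - t))
          ((-1 : ℝ) • crcF p q (γ (2 * c - u))) u :=
        (hode (2 * c - u)).scomp u haff
      have h2 := σ.hasFDerivAt.comp_hasDerivAt u h1
      refine h2.congr_deriv ?_
      symm
      rw [map_smul, hσap, hσap]
      calc crcF p q ((γ (2 * c - u)).2, (γ (2 * c - u)).1)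
          = -(((crcF p q (γ (2 * c - u))).2, (crcF p q (γ (2 * c - u))).1) : ℝ × ℝ) :=
            crcF_swap p q (γ (2 * c - u))
        _ = (-1 : ℝ) • (((crcF p q (γ (2 * c - u))).2, (crcF p q (γ (2 * c - u))).1) : ℝ × ℝ) :=
            (neg_one_smul ℝ _).symm
    have heqc : γ c = σ (γ (2 * c - c)) := by
      have : 2 * c - c = c := by ring
      rw [this, hσap]
      exact Prod.ext_iff.2 ⟨hc, hc.symm⟩
    exact crc_ode_unique (F := crcF p q) (Ω := {z : ℝ × ℝ | 0 < z.1 ∧ 0 < z.2})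
      (fun z hz => crc_contDiffAt p q hz.1 hz.2) hode hgsol
      (fun t => hpos t) (fun t => ⟨(hpos _).2, (hpos _).1⟩) heqc t
  constructor
  · refine ⟨2 * (t2 - t1), by linarith, ?_⟩
    intro t
    have e2 := hrefl t2 ht2 (t + 2 * (t2 - t1))
    have e1 := hrefl t1 ht1 t
    rw [e2, e1]
    have harg : 2 * t2 - (t + 2 * (t2 - t1)) = 2 * t1 - t := by ring
    rw [harg]
  · by_contra hcst
    push_neg at hcst
    have hγconst : (fun _ : ℝ => γ 0) = γ := funext fun t => (hcst t 0).symm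
    have hconst : HasDerivAt (fun _ : ℝ => γ 0) (crcF p q (γ 0)) 0 := by
      rw [hγconst]; exact hode 0
    have hz := (hasDerivAt_const (0:ℝ) (γ 0)).unique hconst
    exact hne (crcF_eq_zero p q hpq hsum (hpos 0).1 (hpos 0).2 hz.symm)

end CRCAux
end

section
/- Let p > 0, q < 0, p + q > 0, and let L > (1 − p/q)^{1/(p+q)}. Then every nonconstant periodic solution of the planar ODE ẋ = (p−q) + q·x^p y^q − p·x^q y^p, ẏ = (q−p) + p·x^p y^q − q·x^q y^p whose image lies in ℝ₊² has its image contained in the square [0,L] × [0,L]. In particular, for 0 < y < L one has (p−q) + q·L^p y^q − p·L^q y^p < 0. -/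
section aux

/-- A continuous periodic real function attains a global maximum. -/
lemma periodic_exists_max (f : ℝ → ℝ) (hf : Continuous f) (T : ℝ) (hT : 0 < T)
    (hper : ∀ t, f (t + T) = f t) : ∃ t0, ∀ t, f t ≤ f t0 := by
  obtain ⟨t0, ht0, hmax⟩ := (isCompact_Icc : IsCompact (Set.Icc (0:ℝ) T)).exists_isMaxOn
    (Set.nonempty_Icc.mpr hT.le) hf.continuousOn
  refine ⟨t0, fun t => ?_⟩
  obtain ⟨y, hy, hval⟩ := Function.Periodic.exists_mem_Ico₀ (f := f) hper hT t
  rw [hval]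
  exact hmax (Set.mem_Icc.mpr ⟨hy.1, hy.2.le⟩)

/-- Key inequality: the x-velocity is negative whenever x ≥ L. -/
lemma key_neg (p q L x y : ℝ) (hp : 0 < p) (hq : q < 0)
    (hL0 : 0 < L) (hL : (1 - p / q) < L ^ (p + q)) (hpq : 0 < p + q)
    (hx : L ≤ x) (hy : 0 < y) :
    (p - q) + q * x ^ p * y ^ q - p * x ^ q * y ^ p < 0 := by
  have hx0 : 0 < x := lt_of_lt_of_le hL0 hx
  have hxL : (1 - p / q) < x ^ (p + q) :=
    lt_of_lt_of_le hL (Real.rpow_le_rpow hL0.le hx hpq.le)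
  have hxpq : x ^ (p + q) = x ^ p * x ^ q := Real.rpow_add hx0 p q
  have hyq_pos : 0 < y ^ q := Real.rpow_pos_of_pos hy q
  have hxp_pos : 0 < x ^ p := Real.rpow_pos_of_pos hx0 p
  have hxq_pos : 0 < x ^ q := Real.rpow_pos_of_pos hx0 q
  have hyp_pos : 0 < y ^ p := Real.rpow_pos_of_pos hy p
  rcases le_total y x with hyx | hyx
  · -- case y ≤ x : the term q x^p y^q dominates
    have h1 : x ^ q ≤ y ^ q := Real.rpow_le_rpow_of_nonpos hy hyx hq.le
    have h4 : q * (x ^ p * x ^ q) < q * (1 - p / q) := by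
      rw [← hxpq]
      exact (mul_lt_mul_left_of_neg hq).mpr hxL
    have h5 : q * (1 - p / q) = q - p := by field_simp [hq.ne]
    nlinarith [mul_pos hxq_pos hyp_pos, mul_le_mul_of_nonneg_left h1 hxp_pos.le]
  · -- case x ≤ y : the term p x^q y^p dominates
    have h1 : x ^ p ≤ y ^ p := Real.rpow_le_rpow hx0.le hyx hp.le
    have h3 : (p - q) / (-q) < x ^ q * y ^ p := by
      have key : 1 - p / q = (p - q) / (-q) := by field_simp [hq.ne]; ring
      calc (p - q) / (-q) = 1 - p / q := key.symm
      _ < x ^ (p + q) := hxL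
      _ = x ^ q * x ^ p := by rw [hxpq]; ring
      _ ≤ x ^ q * y ^ p := mul_le_mul_of_nonneg_left h1 hxq_pos.le
    have h4 : p - q < p * (x ^ q * y ^ p) := by
      have hq' : 0 < -q := by linarith
      have hpn : -q < p := by linarith
      have heq : (p - q) = ((p - q) / (-q)) * (-q) :=
        (div_mul_cancel₀ _ (by linarith : (-q:ℝ) ≠ 0)).symm
      nlinarith [mul_pos hxq_pos hyp_pos]
    nlinarith [mul_pos hxp_pos hyq_pos]

end aux

/-- For p > 0 > q with p + q > 0, and L > (1 − p/q)^(1/(p+q)), every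
nonconstant periodic solution in ℝ₊² of the reversible chain system stays in [0,L]²;
in particular ẋ < 0 on the segment {x = L, 0 < y < L}. -/
theorem chain_closed_orbits_bounded (p q L : ℝ)
    (hp : 0 < p) (hq : q < 0) (hpq : 0 < p + q)
    (hL : L > (1 - p / q) ^ ((1 : ℝ) / (p + q))) :
    (∀ γ : ℝ → ℝ × ℝ,
      (∀ t : ℝ, 0 < (γ t).1 ∧ 0 < (γ t).2) →
      (∀ t : ℝ, HasDerivAt γ
        ((p - q) + q * (γ t).1 ^ p * (γ t).2 ^ q - p * (γ t).1 ^ q * (γ t).2 ^ p,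
         (q - p) + p * (γ t).1 ^ p * (γ t).2 ^ q - q * (γ t).1 ^ q * (γ t).2 ^ p) t) →
      (∃ T : ℝ, 0 < T ∧ ∀ t : ℝ, γ (t + T) = γ t) →
      (∃ s t : ℝ, γ s ≠ γ t) →
      ∀ t : ℝ, 0 ≤ (γ t).1 ∧ (γ t).1 ≤ L ∧ 0 ≤ (γ t).2 ∧ (γ t).2 ≤ L) ∧
    (∀ y : ℝ, 0 < y → y < L →
      (p - q) + q * L ^ p * y ^ q - p * L ^ q * y ^ p < 0) := by
  have hb0 : (0:ℝ) < 1 - p / q := by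
    have : p / q < 0 := div_neg_of_pos_of_neg hp hq
    linarith
  have hLpos : 0 < L := lt_trans (Real.rpow_pos_of_pos hb0 _) hL
  have hLkey : (1 - p / q) < L ^ (p + q) := by
    have h1 : ((1 - p / q) ^ ((1:ℝ)/(p+q))) ^ (p + q) < L ^ (p + q) :=
      Real.rpow_lt_rpow (Real.rpow_pos_of_pos hb0 _).le hL hpq
    rwa [← Real.rpow_mul hb0.le, one_div, inv_mul_cancel₀ hpq.ne', Real.rpow_one] at h1
  constructor
  · rintro γ hpos hderiv ⟨T, hT, hper⟩ -
    -- continuity of the coordinates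
    have hcont : Continuous γ := by
      rw [continuous_iff_continuousAt]; exact fun t => (hderiv t).continuousAt
    have hcx : Continuous fun t => (γ t).1 := continuous_fst.comp hcont
    have hcy : Continuous fun t => (γ t).2 := continuous_snd.comp hcont
    -- derivatives of the coordinates
    have hdx : ∀ t, HasDerivAt (fun s => (γ s).1)
        ((p - q) + q * (γ t).1 ^ p * (γ t).2 ^ q - p * (γ t).1 ^ q * (γ t).2 ^ p) t :=
      fun t => ((ContinuousLinearMap.fst ℝ ℝ ℝ).hasFDerivAt).comp_hasDerivAt t (hderiv t)
    have hdy : ∀ t, HasDerivAt (fun s => (γ s).2)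
        ((q - p) + p * (γ t).1 ^ p * (γ t).2 ^ q - q * (γ t).1 ^ q * (γ t).2 ^ p) t :=
      fun t => ((ContinuousLinearMap.snd ℝ ℝ ℝ).hasFDerivAt).comp_hasDerivAt t (hderiv t)
    -- global maximum of the first coordinate
    obtain ⟨t0, ht0⟩ := periodic_exists_max (fun t => (γ t).1) hcx T hT
      (fun t => congrArg Prod.fst (hper t))
    have hxmax : (γ t0).1 ≤ L := by
      by_contra h
      push_neg at h
      have hzero : (p - q) + q * (γ t0).1 ^ p * (γ t0).2 ^ q
          - p * (γ t0).1 ^ q * (γ t0).2 ^ p = 0 :=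
        IsLocalMax.hasDerivAt_eq_zero (Filter.Eventually.of_forall ht0) (hdx t0)
      have := key_neg p q L (γ t0).1 (γ t0).2 hp hq hLpos hLkey hpq h.le (hpos t0).2
      linarith
    -- global maximum of the second coordinate
    obtain ⟨t1, ht1⟩ := periodic_exists_max (fun t => (γ t).2) hcy T hT
      (fun t => congrArg Prod.snd (hper t))
    have hymax : (γ t1).2 ≤ L := by
      by_contra h
      push_neg at h
      have hzero : (q - p) + p * (γ t1).1 ^ p * (γ t1).2 ^ q
          - q * (γ t1).1 ^ q * (γ t1).2 ^ p = 0 :=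
        IsLocalMax.hasDerivAt_eq_zero (Filter.Eventually.of_forall ht1) (hdy t1)
      -- show the y-velocity is positive there, contradiction
      set x := (γ t1).1 with hxdef
      set y := (γ t1).2 with hydef
      have hx0 : 0 < x := (hpos t1).1
      have hxle : x ≤ L := le_trans (ht0 t1) hxmax
      have hy0 : 0 < y := lt_trans hLpos h
      have hxq : L ^ q ≤ x ^ q := Real.rpow_le_rpow_of_nonpos hx0 hxle hq.le
      have hyp : L ^ p < y ^ p := Real.rpow_lt_rpow hLpos.le h hp
      have hLq_pos : 0 < L ^ q := Real.rpow_pos_of_pos hLpos q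
      have hLp_pos : 0 < L ^ p := Real.rpow_pos_of_pos hLpos p
      have hxp_pos : 0 < x ^ p := Real.rpow_pos_of_pos hx0 p
      have hyq_pos : 0 < y ^ q := Real.rpow_pos_of_pos hy0 q
      have h1 : L ^ p * L ^ q < x ^ q * y ^ p := by nlinarith
      have h2 : 1 - p / q < L ^ p * L ^ q := by
        rw [← Real.rpow_add hLpos]; exact hLkey
      have h3 : q * (x ^ q * y ^ p) < q * (1 - p / q) := by
        have := (mul_lt_mul_left_of_neg hq).mpr (lt_trans h2 h1)
        linarith
      have h5 : q * (1 - p / q) = q - p := by field_simp [hq.ne]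
      nlinarith [mul_pos hxp_pos hyq_pos]
    intro t
    refine ⟨(hpos t).1.le, le_trans (ht0 t) hxmax, (hpos t).2.le, le_trans (ht1 t) hymax⟩
  · intro y hy0 hyL
    exact key_neg p q L L y hp hq hLpos hLkey hpq le_rfl hy0
end

section
/- Consider the mass-action ODE of three reactions, ẋ = c₁κ₁x^{a₁}y^{b₁} + c₂κ₂x^{a₂}y^{b₂} + c₃κ₃x^{a₃}y^{b₃}, ẏ = d₁κ₁x^{a₁}y^{b₁} + d₂κ₂x^{a₂}y^{b₂} + d₃κ₃x^{a₃}y^{b₃} with κ₁,κ₂,κ₃ > 0, under the non-degeneracy assumptions that (a₁,b₁), (a₂,b₂), (a₃,b₃) do not lie on a line, none of (c₁,d₁), (c₂,d₂), (c₃,d₃) is (0,0), and (c₁,d₁), (c₂,d₂), (c₃,d₃) span ℝ². Then: (1) a point (x̄,ȳ) ∈ ℝ₊² is an equilibrium if and only if (c₁d₂−c₂d₁)κ₁x̄^{a₁}ȳ^{b₁} = (c₂d₃−c₃d₂)κ₃x̄^{a₃}ȳ^{b₃} and (c₃d₁−c₁d₃)κ₁x̄^{a₁}ȳ^{b₁}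 = (c₂d₃−c₃d₂)κ₂x̄^{a₂}ȳ^{b₂}; (2) there exists a positive equilibrium if and only if sgn(c₂d₃−c₃d₂) = sgn(c₃d₁−c₁d₃) = sgn(c₁d₂−c₂d₁) ≠ 0; and (3) if a positive equilibrium exists, it is unique. -/
lemma keyA (c₁ d₁ c₂ d₂ c₃ d₃ : ℝ) (hc₁ : ((c₁, d₁) : ℝ × ℝ) ≠ 0)
    (hspan : Submodule.span ℝ ({(c₁, d₁), (c₂, d₂), (c₃, d₃)} : Set (ℝ × ℝ)) = ⊤)
    (h2 : c₃ * d₁ - c₁ * d₃ = 0) (h3 : c₁ * d₂ - c₂ * d₁ = 0) : False := by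
  have hw : ((-d₁, c₁) : ℝ × ℝ) ∈
      Submodule.span ℝ ({(c₁, d₁), (c₂, d₂), (c₃, d₃)} : Set (ℝ × ℝ)) := by
    rw [hspan]; trivial
  rw [Submodule.mem_span_insert] at hw
  obtain ⟨α, z, hz, hwz⟩ := hw
  rw [Submodule.mem_span_insert] at hz
  obtain ⟨β, z', hz', rfl⟩ := hz
  rw [Submodule.mem_span_singleton] at hz'
  obtain ⟨γ, rfl⟩ := hz'
  have e1 := congrArg Prod.fst hwz
  have e2 := congrArg Prod.snd hwz
  simp [smul_eq_mul] at e1 e2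
  have hsum : c₁ ^ 2 + d₁ ^ 2 = 0 := by
    linear_combination c₁ * e2 - d₁ * e1 + β * h3 - γ * h2
  have hc : c₁ = 0 := by nlinarith [sq_nonneg c₁, sq_nonneg d₁]
  have hd : d₁ = 0 := by nlinarith [sq_nonneg c₁, sq_nonneg d₁]
  exact hc₁ (by simp [hc, hd, Prod.ext_iff])

lemma keyB (a₁ b₁ a₂ b₂ a₃ b₃ : ℝ)
    (h : ¬ Collinear ℝ ({(a₁, b₁), (a₂, b₂), (a₃, b₃)} : Set (ℝ × ℝ))) :
    (a₂ - a₁) * (b₃ - b₁) - (b₂ - b₁) * (a₃ - a₁) ≠ 0 := by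
  intro hD
  apply h
  by_cases h1 : a₂ - a₁ = 0
  · by_cases h2 : b₂ - b₁ = 0
    · have hp : (a₂, b₂) = (a₁, b₁) := by
        have : a₂ = a₁ := by linarith
        have : b₂ = b₁ := by linarith
        simp_all [Prod.ext_iff]
      rw [hp, Set.insert_comm, Set.insert_idem]
      exact collinear_pair ℝ _ _
    · rw [collinear_iff_exists_forall_eq_smul_vadd]
      refine ⟨(a₁, b₁), (a₂ - a₁, b₂ - b₁), ?_⟩
      rintro p hp
      simp only [Set.mem_insert_iff, Set.mem_singleton_iff] at hp
      rcases hp with rfl | rfl | rfl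
      · exact ⟨0, by simp [Prod.ext_iff]⟩
      · exact ⟨1, by simp [Prod.ext_iff]⟩
      · refine ⟨(b₃ - b₁) / (b₂ - b₁), ?_⟩
        simp only [Prod.smul_mk, smul_eq_mul, Prod.mk_add_mk, Prod.ext_iff]
        constructor
        · show a₃ = (b₃ - b₁) / (b₂ - b₁) * (a₂ - a₁) + a₁
          field_simp
          linear_combination -hD
        · show b₃ = (b₃ - b₁) / (b₂ - b₁) * (b₂ - b₁) + b₁
          field_simp
          ring
  · rw [collinear_iff_exists_forall_eq_smul_vadd]
    refine ⟨(a₁, b₁), (a₂ - a₁, b₂ - b₁), ?_⟩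
    rintro p hp
    simp only [Set.mem_insert_iff, Set.mem_singleton_iff] at hp
    rcases hp with rfl | rfl | rfl
    · exact ⟨0, by simp [Prod.ext_iff]⟩
    · exact ⟨1, by simp [Prod.ext_iff]⟩
    · refine ⟨(a₃ - a₁) / (a₂ - a₁), ?_⟩
      simp only [Prod.smul_mk, smul_eq_mul, Prod.mk_add_mk, Prod.ext_iff]
      constructor
      · show a₃ = (a₃ - a₁) / (a₂ - a₁) * (a₂ - a₁) + a₁
        field_simp
        ring
      · show b₃ = (a₃ - a₁) / (a₂ - a₁) * (b₂ - b₁) + b₁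
        field_simp
        linear_combination hD

lemma part1_gen (c₁ d₁ c₂ d₂ c₃ d₃ M₁ M₂ M₃ : ℝ) (hM₁ : 0 < M₁)
    (hc₁ : ((c₁, d₁) : ℝ × ℝ) ≠ 0)
    (hspan : Submodule.span ℝ ({(c₁, d₁), (c₂, d₂), (c₃, d₃)} : Set (ℝ × ℝ)) = ⊤) :
    (c₁ * M₁ + c₂ * M₂ + c₃ * M₃ = 0 ∧ d₁ * M₁ + d₂ * M₂ + d₃ * M₃ = 0) ↔
      ((c₁ * d₂ - c₂ * d₁) * M₁ = (c₂ * d₃ - c₃ * d₂) * M₃ ∧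
       (c₃ * d₁ - c₁ * d₃) * M₁ = (c₂ * d₃ - c₃ * d₂) * M₂) := by
  constructor
  · rintro ⟨h1, h2⟩
    constructor
    · linear_combination d₂ * h1 - c₂ * h2
    · linear_combination c₃ * h2 - d₃ * h1
  · rintro ⟨g1, g2⟩
    have hΔ₁ : c₂ * d₃ - c₃ * d₂ ≠ 0 := by
      intro hz
      rw [hz, zero_mul] at g1 g2
      have e3 : c₁ * d₂ - c₂ * d₁ = 0 := (mul_eq_zero.mp g1).resolve_right (ne_of_gt hM₁)
      have e2 : c₃ * d₁ - c₁ * d₃ = 0 := (mul_eq_zero.mp g2).resolve_right (ne_of_gt hM₁)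
      exact keyA c₁ d₁ c₂ d₂ c₃ d₃ hc₁ hspan e2 e3
    constructor
    · have key : (c₂ * d₃ - c₃ * d₂) * (c₁ * M₁ + c₂ * M₂ + c₃ * M₃) = 0 := by
        linear_combination (-c₂) * g2 + (-c₃) * g1
      exact (mul_eq_zero.mp key).resolve_left hΔ₁
    · have key : (c₂ * d₃ - c₃ * d₂) * (d₁ * M₁ + d₂ * M₂ + d₃ * M₃) = 0 := by
        linear_combination (-d₂) * g2 + (-d₃) * g1
      exact (mul_eq_zero.mp key).resolve_left hΔ₁

lemma solve_two_pow (a₁ b₁ a₂ b₂ a₃ b₃ κ₁ κ₂ κ₃ Δ₁ Δ₂ Δ₃ : ℝ)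
    (hκ₂ : 0 < κ₂) (hκ₃ : 0 < κ₃)
    (hD : (a₂ - a₁) * (b₃ - b₁) - (b₂ - b₁) * (a₃ - a₁) ≠ 0) (hΔ₁ : Δ₁ ≠ 0)
    (hr₂ : 0 < Δ₂ * κ₁ / (Δ₁ * κ₂)) (hr₃ : 0 < Δ₃ * κ₁ / (Δ₁ * κ₃)) :
    ∃ x y : ℝ, 0 < x ∧ 0 < y ∧
      Δ₃ * (κ₁ * x ^ a₁ * y ^ b₁) = Δ₁ * (κ₃ * x ^ a₃ * y ^ b₃) ∧
      Δ₂ * (κ₁ * x ^ a₁ * y ^ b₁) = Δ₁ * (κ₂ * x ^ a₂ * y ^ b₂) := by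
  set L₂ : ℝ := Real.log (Δ₂ * κ₁ / (Δ₁ * κ₂)) with hL₂
  set L₃ : ℝ := Real.log (Δ₃ * κ₁ / (Δ₁ * κ₃)) with hL₃
  set D : ℝ := (a₂ - a₁) * (b₃ - b₁) - (b₂ - b₁) * (a₃ - a₁) with hDdef
  set u : ℝ := ((b₃ - b₁) * L₂ - (b₂ - b₁) * L₃) / D with hu
  set v : ℝ := ((a₂ - a₁) * L₃ - (a₃ - a₁) * L₂) / D with hv
  have lin2 : u * (a₂ - a₁) + v * (b₂ - b₁) = L₂ := by
    rw [hu, hv]; field_simp; ring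
  have lin3 : u * (a₃ - a₁) + v * (b₃ - b₁) = L₃ := by
    rw [hu, hv]; field_simp; ring
  refine ⟨Real.exp u, Real.exp v, Real.exp_pos u, Real.exp_pos v, ?_, ?_⟩
  · have hxa : ∀ t : ℝ, Real.exp u ^ t = Real.exp (u * t) := fun t => by
      rw [Real.rpow_def_of_pos (Real.exp_pos u), Real.log_exp]
    have hya : ∀ t : ℝ, Real.exp v ^ t = Real.exp (v * t) := fun t => by
      rw [Real.rpow_def_of_pos (Real.exp_pos v), Real.log_exp]
    simp only [hxa, hya]
    have key : Δ₁ * κ₃ * (Real.exp (u * a₃) * Real.exp (v * b₃))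
        = Δ₃ * κ₁ * (Real.exp (u * a₁) * Real.exp (v * b₁)) := by
      rw [← Real.exp_add,
        show u * a₃ + v * b₃ = (u * a₁ + v * b₁) + (u * (a₃ - a₁) + v * (b₃ - b₁)) by ring,
        Real.exp_add, lin3, hL₃, Real.exp_log hr₃, ← Real.exp_add]
      field_simp
    linear_combination -key
  · have hxa : ∀ t : ℝ, Real.exp u ^ t = Real.exp (u * t) := fun t => by
      rw [Real.rpow_def_of_pos (Real.exp_pos u), Real.log_exp]
    have hya : ∀ t : ℝ, Real.exp v ^ t = Real.exp (v * t) := fun t => by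
      rw [Real.rpow_def_of_pos (Real.exp_pos v), Real.log_exp]
    simp only [hxa, hya]
    have key : Δ₁ * κ₂ * (Real.exp (u * a₂) * Real.exp (v * b₂))
        = Δ₂ * κ₁ * (Real.exp (u * a₁) * Real.exp (v * b₁)) := by
      rw [← Real.exp_add,
        show u * a₂ + v * b₂ = (u * a₁ + v * b₁) + (u * (a₂ - a₁) + v * (b₂ - b₁)) by ring,
        Real.exp_add, lin2, hL₂, Real.exp_log hr₂, ← Real.exp_add]
      field_simp
    linear_combination -key

lemma uniq_gen (a₁ b₁ a₂ b₂ a₃ b₃ κ₁ κ₂ κ₃ Δ₁ Δ₂ Δ₃ : ℝ)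
    (hκ₁ : 0 < κ₁) (hκ₂ : 0 < κ₂) (hκ₃ : 0 < κ₃)
    (hD : (a₂ - a₁) * (b₃ - b₁) - (b₂ - b₁) * (a₃ - a₁) ≠ 0) (hΔ₁ : Δ₁ ≠ 0)
    (p₁ p₂ q₁ q₂ : ℝ) (hp₁ : 0 < p₁) (hp₂ : 0 < p₂) (hq₁ : 0 < q₁) (hq₂ : 0 < q₂)
    (gp1 : Δ₃ * (κ₁ * p₁ ^ a₁ * p₂ ^ b₁) = Δ₁ * (κ₃ * p₁ ^ a₃ * p₂ ^ b₃))
    (gp2 : Δ₂ * (κ₁ * p₁ ^ a₁ * p₂ ^ b₁) = Δ₁ * (κ₂ * p₁ ^ a₂ * p₂ ^ b₂))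
    (gq1 : Δ₃ * (κ₁ * q₁ ^ a₁ * q₂ ^ b₁) = Δ₁ * (κ₃ * q₁ ^ a₃ * q₂ ^ b₃))
    (gq2 : Δ₂ * (κ₁ * q₁ ^ a₁ * q₂ ^ b₁) = Δ₁ * (κ₂ * q₁ ^ a₂ * q₂ ^ b₂)) :
    p₁ = q₁ ∧ p₂ = q₂ := by
  have cross2 : κ₂ * p₁ ^ a₂ * p₂ ^ b₂ * (κ₁ * q₁ ^ a₁ * q₂ ^ b₁)
      = κ₁ * p₁ ^ a₁ * p₂ ^ b₁ * (κ₂ * q₁ ^ a₂ * q₂ ^ b₂) := by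
    apply mul_left_cancel₀ hΔ₁
    linear_combination (-(κ₁ * q₁ ^ a₁ * q₂ ^ b₁)) * gp2 + (κ₁ * p₁ ^ a₁ * p₂ ^ b₁) * gq2
  have cross3 : κ₃ * p₁ ^ a₃ * p₂ ^ b₃ * (κ₁ * q₁ ^ a₁ * q₂ ^ b₁)
      = κ₁ * p₁ ^ a₁ * p₂ ^ b₁ * (κ₃ * q₁ ^ a₃ * q₂ ^ b₃) := by
    apply mul_left_cancel₀ hΔ₁
    linear_combination (-(κ₁ * q₁ ^ a₁ * q₂ ^ b₁)) * gp1 + (κ₁ * p₁ ^ a₁ * p₂ ^ b₁) * gq1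
  have lin2 : Real.log p₁ * a₂ + Real.log p₂ * b₂ + (Real.log q₁ * a₁ + Real.log q₂ * b₁)
      = Real.log p₁ * a₁ + Real.log p₂ * b₁ + (Real.log q₁ * a₂ + Real.log q₂ * b₂) := by
    apply Real.exp_injective
    rw [Real.exp_add, Real.exp_add, Real.exp_add, Real.exp_add, Real.exp_add, Real.exp_add]
    apply mul_left_cancel₀ (show (κ₂ * κ₁ : ℝ) ≠ 0 by positivity)
    have h := cross2
    rw [Real.rpow_def_of_pos hp₁, Real.rpow_def_of_pos hp₂, Real.rpow_def_of_pos hq₁,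
      Real.rpow_def_of_pos hq₂, Real.rpow_def_of_pos hp₁, Real.rpow_def_of_pos hp₂,
      Real.rpow_def_of_pos hq₁, Real.rpow_def_of_pos hq₂] at h
    linear_combination h
  have lin3 : Real.log p₁ * a₃ + Real.log p₂ * b₃ + (Real.log q₁ * a₁ + Real.log q₂ * b₁)
      = Real.log p₁ * a₁ + Real.log p₂ * b₁ + (Real.log q₁ * a₃ + Real.log q₂ * b₃) := by
    apply Real.exp_injective
    rw [Real.exp_add, Real.exp_add, Real.exp_add, Real.exp_add, Real.exp_add, Real.exp_add]
    apply mul_left_cancel₀ (show (κ₃ * κ₁ : ℝ) ≠ 0 by positivity)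
    have h := cross3
    rw [Real.rpow_def_of_pos hp₁, Real.rpow_def_of_pos hp₂, Real.rpow_def_of_pos hq₁,
      Real.rpow_def_of_pos hq₂, Real.rpow_def_of_pos hp₁, Real.rpow_def_of_pos hp₂,
      Real.rpow_def_of_pos hq₁, Real.rpow_def_of_pos hq₂] at h
    linear_combination h
  have hu : Real.log p₁ = Real.log q₁ := by
    have key : ((a₂ - a₁) * (b₃ - b₁) - (b₂ - b₁) * (a₃ - a₁))
        * (Real.log p₁ - Real.log q₁) = 0 := by
      linear_combination (b₃ - b₁) * lin2 - (b₂ - b₁) * lin3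
    exact sub_eq_zero.mp ((mul_eq_zero.mp key).resolve_left hD)
  have hv : Real.log p₂ = Real.log q₂ := by
    have key : ((a₂ - a₁) * (b₃ - b₁) - (b₂ - b₁) * (a₃ - a₁))
        * (Real.log p₂ - Real.log q₂) = 0 := by
      linear_combination (a₂ - a₁) * lin3 - (a₃ - a₁) * lin2
    exact sub_eq_zero.mp ((mul_eq_zero.mp key).resolve_left hD)
  constructor
  · rw [← Real.exp_log hp₁, ← Real.exp_log hq₁, hu]
  · rw [← Real.exp_log hp₂, ← Real.exp_log hq₂, hv]

/-- Equilibria of the mass-action system of three reactions: the binomial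
characterization, the sign criterion for existence, and uniqueness. -/
theorem three_reactions_equilibria
    (a₁ b₁ a₂ b₂ a₃ b₃ c₁ d₁ c₂ d₂ c₃ d₃ : ℝ) (κ₁ κ₂ κ₃ : ℝ)
    (hκ₁ : 0 < κ₁) (hκ₂ : 0 < κ₂) (hκ₃ : 0 < κ₃)
    (hline : ¬ Collinear ℝ ({(a₁, b₁), (a₂, b₂), (a₃, b₃)} : Set (ℝ × ℝ)))
    (hc₁ : ((c₁, d₁) : ℝ × ℝ) ≠ 0) (hc₂ : ((c₂, d₂) : ℝ × ℝ) ≠ 0)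
    (hc₃ : ((c₃, d₃) : ℝ × ℝ) ≠ 0)
    (hspan : Submodule.span ℝ ({(c₁, d₁), (c₂, d₂), (c₃, d₃)} : Set (ℝ × ℝ)) = ⊤) :
    (∀ x y : ℝ, 0 < x → 0 < y →
      ((c₁ * κ₁ * x ^ a₁ * y ^ b₁ + c₂ * κ₂ * x ^ a₂ * y ^ b₂
          + c₃ * κ₃ * x ^ a₃ * y ^ b₃ = 0 ∧
        d₁ * κ₁ * x ^ a₁ * y ^ b₁ + d₂ * κ₂ * x ^ a₂ * y ^ b₂
          + d₃ * κ₃ * x ^ a₃ * y ^ b₃ = 0) ↔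
       ((c₁ * d₂ - c₂ * d₁) * (κ₁ * x ^ a₁ * y ^ b₁)
          = (c₂ * d₃ - c₃ * d₂) * (κ₃ * x ^ a₃ * y ^ b₃) ∧
        (c₃ * d₁ - c₁ * d₃) * (κ₁ * x ^ a₁ * y ^ b₁)
          = (c₂ * d₃ - c₃ * d₂) * (κ₂ * x ^ a₂ * y ^ b₂)))) ∧
    ((∃ p : ℝ × ℝ, 0 < p.1 ∧ 0 < p.2 ∧
        c₁ * κ₁ * p.1 ^ a₁ * p.2 ^ b₁ + c₂ * κ₂ * p.1 ^ a₂ * p.2 ^ b₂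
          + c₃ * κ₃ * p.1 ^ a₃ * p.2 ^ b₃ = 0 ∧
        d₁ * κ₁ * p.1 ^ a₁ * p.2 ^ b₁ + d₂ * κ₂ * p.1 ^ a₂ * p.2 ^ b₂
          + d₃ * κ₃ * p.1 ^ a₃ * p.2 ^ b₃ = 0) ↔
      (Real.sign (c₂ * d₃ - c₃ * d₂) = Real.sign (c₃ * d₁ - c₁ * d₃) ∧
       Real.sign (c₃ * d₁ - c₁ * d₃) = Real.sign (c₁ * d₂ - c₂ * d₁) ∧
       Real.sign (c₂ * d₃ - c₃ * d₂) ≠ 0)) ∧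
    (∀ p q : ℝ × ℝ,
      (0 < p.1 ∧ 0 < p.2 ∧
        c₁ * κ₁ * p.1 ^ a₁ * p.2 ^ b₁ + c₂ * κ₂ * p.1 ^ a₂ * p.2 ^ b₂
          + c₃ * κ₃ * p.1 ^ a₃ * p.2 ^ b₃ = 0 ∧
        d₁ * κ₁ * p.1 ^ a₁ * p.2 ^ b₁ + d₂ * κ₂ * p.1 ^ a₂ * p.2 ^ b₂
          + d₃ * κ₃ * p.1 ^ a₃ * p.2 ^ b₃ = 0) →
      (0 < q.1 ∧ 0 < q.2 ∧
        c₁ * κ₁ * q.1 ^ a₁ * q.2 ^ b₁ + c₂ * κ₂ * q.1 ^ a₂ * q.2 ^ b₂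
          + c₃ * κ₃ * q.1 ^ a₃ * q.2 ^ b₃ = 0 ∧
        d₁ * κ₁ * q.1 ^ a₁ * q.2 ^ b₁ + d₂ * κ₂ * q.1 ^ a₂ * q.2 ^ b₂
          + d₃ * κ₃ * q.1 ^ a₃ * q.2 ^ b₃ = 0) →
      p = q) := by
  have hD := keyB a₁ b₁ a₂ b₂ a₃ b₃ hline
  have part1 : ∀ x y : ℝ, 0 < x → 0 < y →
      ((c₁ * κ₁ * x ^ a₁ * y ^ b₁ + c₂ * κ₂ * x ^ a₂ * y ^ b₂
          + c₃ * κ₃ * x ^ a₃ * y ^ b₃ = 0 ∧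
        d₁ * κ₁ * x ^ a₁ * y ^ b₁ + d₂ * κ₂ * x ^ a₂ * y ^ b₂
          + d₃ * κ₃ * x ^ a₃ * y ^ b₃ = 0) ↔
       ((c₁ * d₂ - c₂ * d₁) * (κ₁ * x ^ a₁ * y ^ b₁)
          = (c₂ * d₃ - c₃ * d₂) * (κ₃ * x ^ a₃ * y ^ b₃) ∧
        (c₃ * d₁ - c₁ * d₃) * (κ₁ * x ^ a₁ * y ^ b₁)
          = (c₂ * d₃ - c₃ * d₂) * (κ₂ * x ^ a₂ * y ^ b₂))) := by
    intro x y hx hy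
    have h := part1_gen c₁ d₁ c₂ d₂ c₃ d₃ (κ₁ * x ^ a₁ * y ^ b₁) (κ₂ * x ^ a₂ * y ^ b₂)
      (κ₃ * x ^ a₃ * y ^ b₃) (by positivity) hc₁ hspan
    constructor
    · rintro ⟨h1, h2⟩
      exact h.mp ⟨by linear_combination h1, by linear_combination h2⟩
    · intro hg
      obtain ⟨h1, h2⟩ := h.mpr hg
      exact ⟨by linear_combination h1, by linear_combination h2⟩
  have hΔne : ∀ x y : ℝ, 0 < x → 0 < y →
      (c₁ * d₂ - c₂ * d₁) * (κ₁ * x ^ a₁ * y ^ b₁)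
        = (c₂ * d₃ - c₃ * d₂) * (κ₃ * x ^ a₃ * y ^ b₃) →
      (c₃ * d₁ - c₁ * d₃) * (κ₁ * x ^ a₁ * y ^ b₁)
        = (c₂ * d₃ - c₃ * d₂) * (κ₂ * x ^ a₂ * y ^ b₂) →
      c₂ * d₃ - c₃ * d₂ ≠ 0 := by
    intro x y hx hy g1 g2 hz
    rw [hz, zero_mul] at g1 g2
    have hM : (0:ℝ) < κ₁ * x ^ a₁ * y ^ b₁ := by positivity
    exact keyA c₁ d₁ c₂ d₂ c₃ d₃ hc₁ hspan
      ((mul_eq_zero.mp g2).resolve_right hM.ne')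
      ((mul_eq_zero.mp g1).resolve_right hM.ne')
  refine ⟨part1, ?_, ?_⟩
  · constructor
    · rintro ⟨p, hp1, hp2, he1, he2⟩
      obtain ⟨g1, g2⟩ := (part1 p.1 p.2 hp1 hp2).mp ⟨he1, he2⟩
      have hΔ₁ := hΔne p.1 p.2 hp1 hp2 g1 g2
      have hM1 : (0:ℝ) < κ₁ * p.1 ^ a₁ * p.2 ^ b₁ := by positivity
      have hM2 : (0:ℝ) < κ₂ * p.1 ^ a₂ * p.2 ^ b₂ := by positivity
      have hM3 : (0:ℝ) < κ₃ * p.1 ^ a₃ * p.2 ^ b₃ := by positivity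
      rcases hΔ₁.lt_or_gt with hneg | hpos
      · have h3 : c₁ * d₂ - c₂ * d₁ < 0 := by
          nlinarith [mul_neg_of_neg_of_pos hneg hM3, hM1]
        have h2 : c₃ * d₁ - c₁ * d₃ < 0 := by
          nlinarith [mul_neg_of_neg_of_pos hneg hM2, hM1]
        rw [Real.sign_of_neg hneg, Real.sign_of_neg h2, Real.sign_of_neg h3]
        norm_num
      · have h3 : 0 < c₁ * d₂ - c₂ * d₁ := by
          nlinarith [mul_pos hpos hM3, hM1]
        have h2 : 0 < c₃ * d₁ - c₁ * d₃ := by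
          nlinarith [mul_pos hpos hM2, hM1]
        rw [Real.sign_of_pos hpos, Real.sign_of_pos h2, Real.sign_of_pos h3]
        norm_num
    · rintro ⟨hs1, hs2, hs0⟩
      have hΔ₁ : c₂ * d₃ - c₃ * d₂ ≠ 0 := fun h => hs0 (by rw [h, Real.sign_zero])
      have hs13 : Real.sign (c₂ * d₃ - c₃ * d₂) = Real.sign (c₁ * d₂ - c₂ * d₁) :=
        hs1.trans hs2
      rcases hΔ₁.lt_or_gt with hneg | hpos
      · have h2 : c₃ * d₁ - c₁ * d₃ < 0 := by
          rcases lt_trichotomy (c₃ * d₁ - c₁ * d₃) 0 with h | h | h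
          · exact h
          · rw [Real.sign_of_neg hneg, h, Real.sign_zero] at hs1; norm_num at hs1
          · rw [Real.sign_of_neg hneg, Real.sign_of_pos h] at hs1; norm_num at hs1
        have h3 : c₁ * d₂ - c₂ * d₁ < 0 := by
          rcases lt_trichotomy (c₁ * d₂ - c₂ * d₁) 0 with h | h | h
          · exact h
          · rw [Real.sign_of_neg hneg, h, Real.sign_zero] at hs13; norm_num at hs13
          · rw [Real.sign_of_neg hneg, Real.sign_of_pos h] at hs13; norm_num at hs13
        obtain ⟨x, y, hx, hy, g1, g2⟩ := solve_two_pow a₁ b₁ a₂ b₂ a₃ b₃ κ₁ κ₂ κ₃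
          (c₂ * d₃ - c₃ * d₂) (c₃ * d₁ - c₁ * d₃) (c₁ * d₂ - c₂ * d₁) hκ₂ hκ₃ hD hΔ₁
          (div_pos_iff.mpr (Or.inr ⟨mul_neg_of_neg_of_pos h2 hκ₁,
            mul_neg_of_neg_of_pos hneg hκ₂⟩))
          (div_pos_iff.mpr (Or.inr ⟨mul_neg_of_neg_of_pos h3 hκ₁,
            mul_neg_of_neg_of_pos hneg hκ₃⟩))
        obtain ⟨e1, e2⟩ := (part1 x y hx hy).mpr ⟨g1, g2⟩
        exact ⟨(x, y), hx, hy, e1, e2⟩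
      · have h2 : 0 < c₃ * d₁ - c₁ * d₃ := by
          rcases lt_trichotomy (c₃ * d₁ - c₁ * d₃) 0 with h | h | h
          · rw [Real.sign_of_pos hpos, Real.sign_of_neg h] at hs1; norm_num at hs1
          · rw [Real.sign_of_pos hpos, h, Real.sign_zero] at hs1; norm_num at hs1
          · exact h
        have h3 : 0 < c₁ * d₂ - c₂ * d₁ := by
          rcases lt_trichotomy (c₁ * d₂ - c₂ * d₁) 0 with h | h | h
          · rw [Real.sign_of_pos hpos, Real.sign_of_neg h] at hs13; norm_num at hs13
          · rw [Real.sign_of_pos hpos, h, Real.sign_zero] at hs13; norm_num at hs13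
          · exact h
        obtain ⟨x, y, hx, hy, g1, g2⟩ := solve_two_pow a₁ b₁ a₂ b₂ a₃ b₃ κ₁ κ₂ κ₃
          (c₂ * d₃ - c₃ * d₂) (c₃ * d₁ - c₁ * d₃) (c₁ * d₂ - c₂ * d₁) hκ₂ hκ₃ hD hΔ₁
          (div_pos (mul_pos h2 hκ₁) (mul_pos hpos hκ₂))
          (div_pos (mul_pos h3 hκ₁) (mul_pos hpos hκ₃))
        obtain ⟨e1, e2⟩ := (part1 x y hx hy).mpr ⟨g1, g2⟩
        exact ⟨(x, y), hx, hy, e1, e2⟩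
  · rintro p q ⟨hp1, hp2, hpe1, hpe2⟩ ⟨hq1, hq2, hqe1, hqe2⟩
    obtain ⟨gp1, gp2⟩ := (part1 p.1 p.2 hp1 hp2).mp ⟨hpe1, hpe2⟩
    obtain ⟨gq1, gq2⟩ := (part1 q.1 q.2 hq1 hq2).mp ⟨hqe1, hqe2⟩
    have hΔ₁ := hΔne p.1 p.2 hp1 hp2 gp1 gp2
    obtain ⟨h1, h2⟩ := uniq_gen a₁ b₁ a₂ b₂ a₃ b₃ κ₁ κ₂ κ₃
      (c₂ * d₃ - c₃ * d₂) (c₃ * d₁ - c₁ * d₃) (c₁ * d₂ - c₂ * d₁)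
      hκ₁ hκ₂ hκ₃ hD hΔ₁ p.1 p.2 q.1 q.2 hp1 hp2 hq1 hq2 gp1 gp2 gq1 gq2
    exact Prod.ext h1 h2
end

section
/- Consider the scaled three-reaction ODE ẋ = f(x,y) = c₁κ̄₁x^{a₁}y^{b₁} + c₂κ̄₂x^{a₂}y^{b₂} + c₃κ̄₃x^{a₃}y^{b₃}, ẏ = g(x,y) = K(d₁κ̄₁x^{a₁}y^{b₁} + d₂κ̄₂x^{a₂}y^{b₂} + d₃κ̄₃x^{a₃}y^{b₃}), where K ≠ 0 and κ̄₁ = λ(c₂d₃−c₃d₂), κ̄₂ = λ(c₃d₁−c₁d₃), κ̄₃ = λ(c₁d₂−c₂d₁) for some λ ≠ 0. Then the determinant of the Jacobian matrix of (f,g) at (1,1) equals (1/λ)·K·κ̄₁κ̄₂κ̄₃·[a₁(b₂−b₃) + a₂(b₃−b₁) + a₃(b₁−b₂)]. -/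
lemma hd3 (p q r e f g : ℝ) :
    HasDerivAt (fun x : ℝ => p * x ^ e + q * x ^ f + r * x ^ g)
      (p * e + q * f + r * g) 1 := by
  have h := fun (e : ℝ) => Real.hasDerivAt_rpow_const (x := (1:ℝ)) (p := e) (Or.inl one_ne_zero)
  simp only [Real.one_rpow, mul_one] at h
  exact (((h e).const_mul p).add ((h f).const_mul q)).add ((h g).const_mul r)

/-- The determinant of the Jacobian of the scaled three-reaction system
at (1,1) equals (1/λ)·K·κ̄₁κ̄₂κ̄₃·[a₁(b₂−b₃) + a₂(b₃−b₁) + a₃(b₁−b₂)]. -/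
theorem three_reactions_det_jacobian
    (a₁ b₁ a₂ b₂ a₃ b₃ c₁ d₁ c₂ d₂ c₃ d₃ : ℝ) (K lam : ℝ) (hK : K ≠ 0) (hlam : lam ≠ 0)
    (κ₁ κ₂ κ₃ : ℝ)
    (hκ₁ : κ₁ = lam * (c₂ * d₃ - c₃ * d₂))
    (hκ₂ : κ₂ = lam * (c₃ * d₁ - c₁ * d₃))
    (hκ₃ : κ₃ = lam * (c₁ * d₂ - c₂ * d₁)) :
    deriv (fun x : ℝ => c₁ * κ₁ * x ^ a₁ * (1 : ℝ) ^ b₁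
        + c₂ * κ₂ * x ^ a₂ * (1 : ℝ) ^ b₂ + c₃ * κ₃ * x ^ a₃ * (1 : ℝ) ^ b₃) 1
      * deriv (fun y : ℝ => K * (d₁ * κ₁ * (1 : ℝ) ^ a₁ * y ^ b₁
        + d₂ * κ₂ * (1 : ℝ) ^ a₂ * y ^ b₂ + d₃ * κ₃ * (1 : ℝ) ^ a₃ * y ^ b₃)) 1
    - deriv (fun y : ℝ => c₁ * κ₁ * (1 : ℝ) ^ a₁ * y ^ b₁
        + c₂ * κ₂ * (1 : ℝ) ^ a₂ * y ^ b₂ + c₃ * κ₃ * (1 : ℝ) ^ a₃ * y ^ b₃) 1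
      * deriv (fun x : ℝ => K * (d₁ * κ₁ * x ^ a₁ * (1 : ℝ) ^ b₁
        + d₂ * κ₂ * x ^ a₂ * (1 : ℝ) ^ b₂ + d₃ * κ₃ * x ^ a₃ * (1 : ℝ) ^ b₃)) 1
    = (1 / lam) * K * (κ₁ * κ₂ * κ₃)
        * (a₁ * (b₂ - b₃) + a₂ * (b₃ - b₁) + a₃ * (b₁ - b₂)) := by
  have e1 : deriv (fun x : ℝ => c₁ * κ₁ * x ^ a₁ * (1 : ℝ) ^ b₁
        + c₂ * κ₂ * x ^ a₂ * (1 : ℝ) ^ b₂ + c₃ * κ₃ * x ^ a₃ * (1 : ℝ) ^ b₃) 1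
      = c₁ * κ₁ * a₁ + c₂ * κ₂ * a₂ + c₃ * κ₃ * a₃ := by
    simp only [Real.one_rpow, mul_one]
    exact (hd3 (c₁ * κ₁) (c₂ * κ₂) (c₃ * κ₃) a₁ a₂ a₃).deriv
  have e2 : deriv (fun y : ℝ => K * (d₁ * κ₁ * (1 : ℝ) ^ a₁ * y ^ b₁
        + d₂ * κ₂ * (1 : ℝ) ^ a₂ * y ^ b₂ + d₃ * κ₃ * (1 : ℝ) ^ a₃ * y ^ b₃)) 1
      = K * (d₁ * κ₁ * b₁ + d₂ * κ₂ * b₂ + d₃ * κ₃ * b₃) := by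
    simp only [Real.one_rpow, mul_one]
    exact (((hd3 (d₁ * κ₁) (d₂ * κ₂) (d₃ * κ₃) b₁ b₂ b₃)).const_mul K).deriv
  have e3 : deriv (fun y : ℝ => c₁ * κ₁ * (1 : ℝ) ^ a₁ * y ^ b₁
        + c₂ * κ₂ * (1 : ℝ) ^ a₂ * y ^ b₂ + c₃ * κ₃ * (1 : ℝ) ^ a₃ * y ^ b₃) 1
      = c₁ * κ₁ * b₁ + c₂ * κ₂ * b₂ + c₃ * κ₃ * b₃ := by
    simp only [Real.one_rpow, mul_one]
    exact (hd3 (c₁ * κ₁) (c₂ * κ₂) (c₃ * κ₃) b₁ b₂ b₃).deriv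
  have e4 : deriv (fun x : ℝ => K * (d₁ * κ₁ * x ^ a₁ * (1 : ℝ) ^ b₁
        + d₂ * κ₂ * x ^ a₂ * (1 : ℝ) ^ b₂ + d₃ * κ₃ * x ^ a₃ * (1 : ℝ) ^ b₃)) 1
      = K * (d₁ * κ₁ * a₁ + d₂ * κ₂ * a₂ + d₃ * κ₃ * a₃) := by
    simp only [Real.one_rpow, mul_one]
    exact (((hd3 (d₁ * κ₁) (d₂ * κ₂) (d₃ * κ₃) a₁ a₂ a₃)).const_mul K).deriv
  rw [e1, e2, e3, e4]
  subst hκ₁ hκ₂ hκ₃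
  field_simp
  ring
end

section
/- Consider the planar ODE ẋ = c₁κ̄₁ + c₂κ̄₂x^p y^q + c₃κ̄₃x^q y^p, ẏ = K(d₁κ̄₁ + d₂κ̄₂x^p y^q + d₃κ̄₃x^q y^p) on ℝ₊², where κ̄₁ = λ(c₂d₃−c₃d₂), κ̄₂ = λ(c₃d₁−c₁d₃), κ̄₃ = λ(c₁d₂−c₂d₁) for some λ ≠ 0. Assume (i) p² > q²; (ii) sgn c₁ = −sgn d₁ = sgn d₂ = −sgn c₃ ≠ 0; (iii) sgn c₂ = −sgn d₃; (iv) K = −c₁/d₁; and, in the case sgn c₂ = −sgn d₃ ≠ 0, additionally |d₃/c₃| < |d₁/c₁| < |d₂/c₂| and |d₁/c₁| = √(|d₂/c₂|·|d₃/c₃|). Then (1,1) is a center: there exists an open neighborhood U ⊆ ℝ₊² of (1,1) such that every solution of the ODE starting at a point of U \ {(1,1)} is a nonconstant periodic solution. -/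
open Set Filter Topology

lemma sign_mul_pos' {x y : ℝ} (h : Real.sign x = Real.sign y) (hx : x ≠ 0) : 0 < x * y := by
  rcases lt_trichotomy x 0 with h1 | h1 | h1
  · rw [Real.sign_of_neg h1] at h
    rcases lt_trichotomy y 0 with h2 | h2 | h2
    · exact mul_pos_of_neg_of_neg h1 h2
    · simp [h2, Real.sign] at h
    · rw [Real.sign_of_pos h2] at h; norm_num at h
  · exact absurd h1 hx
  · rw [Real.sign_of_pos h1] at h
    rcases lt_trichotomy y 0 with h2 | h2 | h2
    · rw [Real.sign_of_neg h2] at h; norm_num at h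
    · simp [h2, Real.sign] at h
    · exact mul_pos h1 h2

lemma sign_mul_neg' {x y : ℝ} (h : Real.sign x = -Real.sign y) (hx : x ≠ 0) : x * y < 0 := by
  have h' : Real.sign x = Real.sign (-y) := by rw [Real.sign_neg]; exact h
  have := sign_mul_pos' h' hx
  nlinarith

lemma sign_ne_zero_of {x : ℝ} (h : Real.sign x ≠ 0) : x ≠ 0 := by
  intro h0; exact h (by simp [h0, Real.sign])

lemma center_algebra
    (p q c₁ d₁ c₂ d₂ c₃ d₃ K lam : ℝ) (hlam : lam ≠ 0)
    (κ₁ κ₂ κ₃ : ℝ)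
    (hκ₁ : κ₁ = lam * (c₂ * d₃ - c₃ * d₂))
    (hκ₂ : κ₂ = lam * (c₃ * d₁ - c₁ * d₃))
    (hκ₃ : κ₃ = lam * (c₁ * d₂ - c₂ * d₁))
    (hii₁ : Real.sign c₁ = -Real.sign d₁)
    (hii₂ : Real.sign c₁ = Real.sign d₂)
    (hii₃ : Real.sign c₁ = -Real.sign c₃)
    (hii₄ : Real.sign c₁ ≠ 0)
    (hiii : Real.sign c₂ = -Real.sign d₃)
    (hiv : K = -(c₁ / d₁))
    (hcase : Real.sign c₂ ≠ 0 →
      |d₃ / c₃| < |d₁ / c₁| ∧ |d₁ / c₁| < |d₂ / c₂| ∧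
      |d₁ / c₁| = Real.sqrt (|d₂ / c₂| * |d₃ / c₃|)) :
    c₁ * κ₁ + c₂ * κ₂ + c₃ * κ₃ = 0 ∧
    K * (d₁ * κ₁) = -(c₁ * κ₁) ∧
    K * (d₂ * κ₂) = -(c₃ * κ₃) ∧
    K * (d₃ * κ₃) = -(c₂ * κ₂) ∧
    (c₂ * κ₂) ^ 2 < (c₃ * κ₃) ^ 2 := by
  have hc₁ : c₁ ≠ 0 := sign_ne_zero_of hii₄
  have hd₁ : d₁ ≠ 0 := by
    intro h0; rw [h0] at hii₁; simp [Real.sign] at hii₁; exact hii₄ hii₁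
  have hc₃ : c₃ ≠ 0 := by
    intro h0; rw [h0] at hii₃; simp [Real.sign] at hii₃; exact hii₄ hii₃
  have hm₁ : c₁ * d₁ < 0 := sign_mul_neg' hii₁ hc₁
  have hm₂ : 0 < c₁ * d₂ := sign_mul_pos' hii₂ hc₁
  have hm₃ : c₁ * c₃ < 0 := sign_mul_neg' hii₃ hc₁
  have hd₂ : d₂ ≠ 0 := by intro h0; rw [h0] at hm₂; simp at hm₂
  have hm₅ : c₃ * d₂ < 0 := by
    have h' : Real.sign c₃ = -Real.sign d₂ := by rw [← hii₂]; linarith [hii₃]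
    exact sign_mul_neg' h' hc₃
  -- key identity
  have key : c₂ * c₃ * d₁ ^ 2 = c₁ ^ 2 * (d₂ * d₃) := by
    rcases eq_or_ne c₂ 0 with hc₂ | hc₂
    · have hd₃ : d₃ = 0 := by
        rw [hc₂, Real.sign_zero] at hiii
        exact Real.sign_eq_zero_iff.mp (by linarith)
      rw [hc₂, hd₃]; ring
    · have hsgn : Real.sign c₂ ≠ 0 := by
        intro h0; exact hc₂ (Real.sign_eq_zero_iff.mp h0)
      obtain ⟨h1, h2, h3⟩ := hcase hsgn
      have hm₄ : c₂ * d₃ < 0 := sign_mul_neg' hiii hc₂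
      have hd₃ : d₃ ≠ 0 := by intro h0; rw [h0] at hm₄; simp at hm₄
      have hprod : 0 < d₂ * d₃ / (c₂ * c₃) := by
        have heq : d₂ * d₃ / (c₂ * c₃) = (c₂ * d₃) * (c₃ * d₂) / (c₂ * c₃) ^ 2 := by
          field_simp
        rw [heq]
        have h6 : (0:ℝ) < (c₂*c₃)^2 := by
          have : c₂*c₃ ≠ 0 := mul_ne_zero hc₂ hc₃
          positivity
        exact div_pos (mul_pos_of_neg_of_neg hm₄ hm₅) h6
      have habs : |d₂ / c₂| * |d₃ / c₃| = d₂ * d₃ / (c₂ * c₃) := by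
        rw [← abs_mul]
        rw [div_mul_div_comm]
        exact abs_of_pos hprod
      have h4 : (d₁ / c₁) ^ 2 = d₂ * d₃ / (c₂ * c₃) := by
        have h3' := h3
        rw [habs] at h3'
        have h5 : |d₁ / c₁| ^ 2 = d₂ * d₃ / (c₂ * c₃) := by
          rw [h3']; exact Real.sq_sqrt hprod.le
        rwa [sq_abs] at h5
      field_simp at h4
      linear_combination h4
  have hKd₁ : K * d₁ = -c₁ := by rw [hiv]; field_simp
  have hc₁sq : 0 < c₁ ^ 2 := lt_of_le_of_ne (sq_nonneg c₁) (Ne.symm (pow_ne_zero 2 hc₁))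
  refine ⟨by rw [hκ₁, hκ₂, hκ₃]; ring, ?_, ?_, ?_, ?_⟩
  · have h' : K * (d₁ * κ₁) = (K * d₁) * κ₁ := by ring
    rw [h', hKd₁]; ring
  · apply mul_left_cancel₀ hd₁
    have h' : d₁ * (K * (d₂ * κ₂)) = (K * d₁) * (d₂ * κ₂) := by ring
    rw [h', hKd₁, hκ₂, hκ₃]
    linear_combination (-lam) * key
  · apply mul_left_cancel₀ hd₁
    have h' : d₁ * (K * (d₃ * κ₃)) = (K * d₁) * (d₃ * κ₃) := by ring
    rw [h', hKd₁, hκ₂, hκ₃]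
    linear_combination lam * key
  · rcases eq_or_ne c₂ 0 with hc₂ | hc₂
    · have hκ₃ne : c₃ * κ₃ ≠ 0 := by
        rw [hκ₃, hc₂]
        have : c₁ * d₂ - 0 * d₁ ≠ 0 := by simpa using hm₂.ne'
        exact mul_ne_zero hc₃ (mul_ne_zero hlam this)
      have h0 : (0:ℝ) < (c₃ * κ₃) ^ 2 :=
        lt_of_le_of_ne (sq_nonneg _) (Ne.symm (pow_ne_zero 2 hκ₃ne))
      rw [hc₂]; simpa using h0
    · have hsgn : Real.sign c₂ ≠ 0 := by
        intro h0; exact hc₂ (Real.sign_eq_zero_iff.mp h0)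
      obtain ⟨h1, h2, h3⟩ := hcase hsgn
      have hm₄ : c₂ * d₃ < 0 := sign_mul_neg' hiii hc₂
      have hXY : c₃ * d₂ < c₂ * d₃ := by
        have h13 : |d₃ / c₃| < |d₂ / c₂| := lt_trans h1 h2
        rw [abs_div, abs_div, div_lt_div_iff₀ (abs_pos.mpr hc₃) (abs_pos.mpr hc₂)] at h13
        rw [← abs_mul, ← abs_mul] at h13
        rw [abs_of_neg (by linarith [mul_comm d₃ c₂, hm₄] : d₃ * c₂ < 0),
          abs_of_neg (by linarith [mul_comm d₂ c₃, hm₅] : d₂ * c₃ < 0)] at h13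
        nlinarith [h13]
      have key' : c₁ ^ 2 * ((c₃ * d₂) * (c₂ * d₃)) = (c₂ * c₃) ^ 2 * d₁ ^ 2 := by
        linear_combination (-(c₂ * c₃)) * key
      have hne : 0 < (c₁ ^ 2 * ((c₃ * d₂) - (c₂ * d₃))) ^ 2 := by
        have hne0 : c₁ ^ 2 * ((c₃ * d₂) - (c₂ * d₃)) ≠ 0 :=
          mul_ne_zero (pow_ne_zero 2 hc₁) (by linarith)
        exact lt_of_le_of_ne (sq_nonneg _) (Ne.symm (pow_ne_zero 2 hne0))
      have hsumneg : c₁ ^ 2 * ((c₃ * d₂) + (c₂ * d₃)) < 0 := by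
        have h' : 0 < c₁ ^ 2 * (-((c₃ * d₂) + (c₂ * d₃))) := mul_pos hc₁sq (by linarith)
        linarith
      have hXY2 : (2 * (c₁ * d₁) * (c₂ * c₃)) ^ 2 < (c₁ ^ 2 * ((c₃ * d₂) + (c₂ * d₃))) ^ 2 := by
        have e : (c₁ ^ 2 * ((c₃ * d₂) + (c₂ * d₃))) ^ 2 - (2 * (c₁ * d₁) * (c₂ * c₃)) ^ 2
            = (c₁ ^ 2 * ((c₃ * d₂) - (c₂ * d₃))) ^ 2
              + 4 * c₁ ^ 2 * (c₁ ^ 2 * ((c₃ * d₂) * (c₂ * d₃)) - (c₂ * c₃) ^ 2 * d₁ ^ 2) := by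
          ring
        have e2 : c₁ ^ 2 * ((c₃ * d₂) * (c₂ * d₃)) - (c₂ * c₃) ^ 2 * d₁ ^ 2 = 0 := by
          linarith [key']
        rw [e2] at e; linarith [hne, e]
      have habs2 : c₁ ^ 2 * ((c₃ * d₂) + (c₂ * d₃)) < 2 * (c₁ * d₁) * (c₂ * c₃) := by
        nlinarith [hXY2, hsumneg,
          sq_nonneg (c₁ ^ 2 * ((c₃ * d₂) + (c₂ * d₃)) - 2 * (c₁ * d₁) * (c₂ * c₃)),
          sq_nonneg (c₁ ^ 2 * ((c₃ * d₂) + (c₂ * d₃)) + 2 * (c₁ * d₁) * (c₂ * c₃))]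
      have hgoal : 0 < ((c₃ * d₂) - (c₂ * d₃))
          * (c₁ ^ 2 * ((c₃ * d₂) + (c₂ * d₃)) - 2 * (c₁ * d₁) * (c₂ * c₃)) :=
        mul_pos_of_neg_of_neg (by linarith) (by linarith)
      have hlamsq : 0 < lam ^ 2 := lt_of_le_of_ne (sq_nonneg lam) (Ne.symm (pow_ne_zero 2 hlam))
      have hfin := mul_pos hlamsq hgoal
      rw [hκ₂, hκ₃]
      have e3 : (c₃*(lam*(c₁*d₂-c₂*d₁)))^2 - (c₂*(lam*(c₃*d₁-c₁*d₃)))^2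
          = lam^2*(((c₃*d₂)-(c₂*d₃))
            * (c₁^2*((c₃*d₂)+(c₂*d₃)) - 2*(c₁*d₁)*(c₂*c₃))) := by ring
      linarith [hfin, e3]


open Set Topology Filter

lemma ODE_uniqueness_global {E : Type*} [NormedAddCommGroup E] [NormedSpace ℝ E]
    {v : E → E} {s : Set E}
    (hv : ∀ z ∈ s, ContDiffAt ℝ 1 v z)
    {γ δ : ℝ → E}
    (hγ : ∀ t, HasDerivAt γ (v (γ t)) t) (hγs : ∀ t, γ t ∈ s)
    (hδ : ∀ t, HasDerivAt δ (v (δ t)) t) (hδs : ∀ t, δ t ∈ s)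
    {t₀ : ℝ} (heq : γ t₀ = δ t₀) : ∀ t, γ t = δ t := by
  have hcγ : Continuous γ := by
    rw [continuous_iff_continuousAt]; exact fun t => (hγ t).continuousAt
  have hcδ : Continuous δ := by
    rw [continuous_iff_continuousAt]; exact fun t => (hδ t).continuousAt
  have hZ : IsClopen {t : ℝ | γ t = δ t} := by
    constructor
    · exact isClosed_eq hcγ hcδ
    · rw [isOpen_iff_mem_nhds]
      intro τ hτ
      obtain ⟨k, B, hB, hlip⟩ := (hv (γ τ) (hγs τ)).exists_lipschitzOnWith
      have hγB : ∀ᶠ t in 𝓝 τ, HasDerivAt γ (v (γ t)) t ∧ γ t ∈ B := by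
        filter_upwards [hcγ.continuousAt.preimage_mem_nhds hB] with t ht
        exact ⟨hγ t, ht⟩
      have hδB : ∀ᶠ t in 𝓝 τ, HasDerivAt δ (v (δ t)) t ∧ δ t ∈ B := by
        have hB' : B ∈ 𝓝 (δ τ) := by rw [← show γ τ = δ τ from hτ]; exact hB
        filter_upwards [hcδ.continuousAt.preimage_mem_nhds hB'] with t ht
        exact ⟨hδ t, ht⟩
      have := ODE_solution_unique_of_eventually
        (v := fun _ : ℝ => v) (s := fun _ : ℝ => B) (Filter.Eventually.of_forall fun _ => hlip) hγB hδB hτ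
      exact this
  rcases isClopen_iff.mp hZ with h | h
  · exfalso; have : t₀ ∈ ({t : ℝ | γ t = δ t}) := heq
    rw [h] at this; exact this
  · intro t; have : t ∈ ({t : ℝ | γ t = δ t}) := by rw [h]; trivial
    exact this


open Set Filter Topology

lemma phi_hasFDerivAt (p q : ℝ) :
    HasFDerivAt (fun z : ℝ × ℝ => z.1 ^ p * z.2 ^ q)
      (p • ContinuousLinearMap.fst ℝ ℝ ℝ + q • ContinuousLinearMap.snd ℝ ℝ ℝ)
      ((1:ℝ), (1:ℝ)) := by
  have hx : HasDerivAt (fun x : ℝ => x ^ p) p 1 := by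
    simpa using Real.hasDerivAt_rpow_const (x := (1:ℝ)) (p := p) (Or.inl one_ne_zero)
  have hy : HasDerivAt (fun y : ℝ => y ^ q) q 1 := by
    simpa using Real.hasDerivAt_rpow_const (x := (1:ℝ)) (p := q) (Or.inl one_ne_zero)
  have h1 : HasFDerivAt (fun z : ℝ × ℝ => z.1 ^ p)
      (p • ContinuousLinearMap.fst ℝ ℝ ℝ) ((1:ℝ), (1:ℝ)) :=
    HasDerivAt.comp_hasFDerivAt (h₂ := fun x : ℝ => x ^ p) (x := ((1:ℝ), (1:ℝ))) hx hasFDerivAt_fst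
  have h2 : HasFDerivAt (fun z : ℝ × ℝ => z.2 ^ q)
      (q • ContinuousLinearMap.snd ℝ ℝ ℝ) ((1:ℝ), (1:ℝ)) :=
    HasDerivAt.comp_hasFDerivAt (h₂ := fun y : ℝ => y ^ q) (x := ((1:ℝ), (1:ℝ))) hy hasFDerivAt_snd
  have h3 := h1.mul h2
  refine h3.congr_fderiv ?_
  simp [Real.one_rpow]
  module

lemma P_hasFDerivAt (p q A B : ℝ) :
    HasFDerivAt (fun z : ℝ × ℝ => A * (z.1 ^ p * z.2 ^ q - 1) + B * (z.1 ^ q * z.2 ^ p - 1))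
      ((p * A + q * B) • ContinuousLinearMap.fst ℝ ℝ ℝ
        + (q * A + p * B) • ContinuousLinearMap.snd ℝ ℝ ℝ)
      ((1:ℝ), (1:ℝ)) := by
  have h1 := ((phi_hasFDerivAt p q).sub_const 1).const_mul A
  have h2 := ((phi_hasFDerivAt q p).sub_const 1).const_mul B
  have h3 := h1.add h2
  refine h3.congr_fderiv ?_
  module

lemma P_littleO (p q A B ε : ℝ) (hε : 0 < ε) :
    ∃ δ > 0, ∀ z : ℝ × ℝ, ‖z - ((1:ℝ),(1:ℝ))‖ < δ →
      ‖A * (z.1 ^ p * z.2 ^ q - 1) + B * (z.1 ^ q * z.2 ^ p - 1)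
        - ((p * A + q * B) * (z.1 - 1) + (q * A + p * B) * (z.2 - 1))‖
        ≤ ε * ‖z - ((1:ℝ),(1:ℝ))‖ := by
  have h := (P_hasFDerivAt p q A B).isLittleO
  have h2 := h.def hε
  rw [Metric.eventually_nhds_iff] at h2
  obtain ⟨δ, hδ, hh⟩ := h2
  refine ⟨δ, hδ, fun z hz => ?_⟩
  have h3 := hh (show dist z ((1:ℝ),(1:ℝ)) < δ by rwa [dist_eq_norm])
  have e0 : A * ((1:ℝ) ^ p * (1:ℝ) ^ q - 1) + B * ((1:ℝ) ^ q * (1:ℝ) ^ p - 1) = 0 := by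
    simp [Real.one_rpow]
  have eL : ((p * A + q * B) • ContinuousLinearMap.fst ℝ ℝ ℝ
        + (q * A + p * B) • ContinuousLinearMap.snd ℝ ℝ ℝ) (z - ((1:ℝ),(1:ℝ)))
      = (p * A + q * B) * (z.1 - 1) + (q * A + p * B) * (z.2 - 1) := by
    simp [ContinuousLinearMap.add_apply, ContinuousLinearMap.smul_apply]
  rw [e0, eL] at h3
  simpa using h3

lemma P_contDiffAt (p q A B : ℝ) {z : ℝ × ℝ} (hz1 : z.1 ≠ 0) (hz2 : z.2 ≠ 0) :
    ContDiffAt ℝ 1 (fun z : ℝ × ℝ =>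
      A * (z.1 ^ p * z.2 ^ q - 1) + B * (z.1 ^ q * z.2 ^ p - 1)) z := by
  have h1 : ContDiffAt ℝ 1 (fun x : ℝ => x ^ p) z.1 :=
    Real.contDiffAt_rpow_const_of_ne hz1
  have h2 : ContDiffAt ℝ 1 (fun x : ℝ => x ^ q) z.2 :=
    Real.contDiffAt_rpow_const_of_ne hz2
  have h3 : ContDiffAt ℝ 1 (fun x : ℝ => x ^ q) z.1 :=
    Real.contDiffAt_rpow_const_of_ne hz1
  have h4 : ContDiffAt ℝ 1 (fun x : ℝ => x ^ p) z.2 :=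
    Real.contDiffAt_rpow_const_of_ne hz2
  have c1 : ContDiffAt ℝ 1 (fun z : ℝ × ℝ => z.1 ^ p) z := h1.comp z contDiffAt_fst
  have c2 : ContDiffAt ℝ 1 (fun z : ℝ × ℝ => z.2 ^ q) z := h2.comp z contDiffAt_snd
  have c3 : ContDiffAt ℝ 1 (fun z : ℝ × ℝ => z.1 ^ q) z := h3.comp z contDiffAt_fst
  have c4 : ContDiffAt ℝ 1 (fun z : ℝ × ℝ => z.2 ^ p) z := h4.comp z contDiffAt_snd
  exact (contDiffAt_const.mul ((c1.mul c2).sub contDiffAt_const)).add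
    (contDiffAt_const.mul ((c3.mul c4).sub contDiffAt_const))


open Set Real Filter

lemma spiral_lemma {ω R : ℝ} (hω : 0 < ω) (hR : 0 < R)
    (f E : ℝ → ℂ) (w : ℂ) (hw : w ≠ 0)
    (hf' : ∀ t, HasDerivAt f (Complex.I * (ω:ℂ) * f t + E t) t)
    (hEc : Continuous E)
    (hE : ∀ t, ‖f t‖ ≤ R → ‖E t‖ ≤ ω / 2 * ‖f t‖)
    (hnz : ∀ t, f t ≠ 0)
    (h0 : ‖f 0‖ ≤ R * Real.exp (-(3 * ω / 2 * ((4 * Real.pi + 4) / ω))) / 2) :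
    ∃ t₁ t₂ : ℝ, t₁ < t₂ ∧
      (∃ r : ℝ, f t₁ = (r:ℂ) * w) ∧ (∃ r : ℝ, f t₂ = (r:ℂ) * w) ∧ f t₁ ≠ f t₂ := by
  have hcf : Continuous f := by
    rw [continuous_iff_continuousAt]; exact fun t => (hf' t).continuousAt
  set Θ : ℝ := (4 * Real.pi + 4) / ω with hΘdef
  have hπ := Real.pi_pos
  have hΘ : 0 < Θ := by positivity
  -- Step 1 : the solution stays in the ball of radius R on [0, Θ]
  have hbound : ∀ t ∈ Icc (0:ℝ) Θ, ‖f t‖ ≤ R := by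
    by_contra hcon
    push_neg at hcon
    obtain ⟨tb, htb, htbR⟩ := hcon
    set S : Set ℝ := {t | t ∈ Icc (0:ℝ) Θ ∧ R < ‖f t‖} with hSdef
    have hSne : S.Nonempty := ⟨tb, htb, htbR⟩
    have hSbdd : BddBelow S := ⟨0, fun s hs => hs.1.1⟩
    set τ := sInf S with hτdef
    have hτcl : τ ∈ closure S := csInf_mem_closure hSne hSbdd
    have hclosed : IsClosed {t | t ∈ Icc (0:ℝ) Θ ∧ R ≤ ‖f t‖} :=
      IsClosed.inter isClosed_Icc (isClosed_le continuous_const hcf.norm)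
    have hτmem : τ ∈ Icc (0:ℝ) Θ ∧ R ≤ ‖f τ‖ := by
      have hsub : closure S ⊆ {t | t ∈ Icc (0:ℝ) Θ ∧ R ≤ ‖f t‖} :=
        closure_minimal (fun s hs => ⟨hs.1, hs.2.le⟩) hclosed
      exact hsub hτcl
    have hgood : ∀ s ∈ Ico (0:ℝ) τ, ‖f s‖ ≤ R := by
      intro s hs
      by_contra hbad
      push_neg at hbad
      have hsS : s ∈ S := ⟨⟨hs.1, le_trans hs.2.le hτmem.1.2⟩, hbad⟩
      exact absurd (csInf_le hSbdd hsS) (not_le.mpr hs.2)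
    have hgron := norm_le_gronwallBound_of_norm_deriv_right_le
      (f := f) (f' := fun t => Complex.I * (ω:ℂ) * f t + E t)
      (δ := ‖f 0‖) (K := 3 * ω / 2) (ε := 0) (a := 0) (b := τ)
      (hcf.continuousOn)
      (fun t _ => (hf' t).hasDerivWithinAt)
      le_rfl
      (by
        intro t ht
        have hb := hgood t ht
        have h1 : ‖Complex.I * (ω:ℂ) * f t + E t‖ ≤ ‖Complex.I * (ω:ℂ) * f t‖ + ‖E t‖ :=
          norm_add_le _ _
        have h2 : ‖Complex.I * (ω:ℂ) * f t‖ = ω * ‖f t‖ := by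
          rw [norm_mul, norm_mul, Complex.norm_I, Complex.norm_real]
          simp [abs_of_pos hω]
        have h3 := hE t hb
        rw [h2] at h1
        linarith)
    have hfin := hgron τ ⟨hτmem.1.1, le_rfl⟩
    rw [gronwallBound_ε0] at hfin
    have hexp : Real.exp (3 * ω / 2 * (τ - 0)) ≤ Real.exp (3 * ω / 2 * Θ) := by
      apply Real.exp_le_exp.mpr
      have := hτmem.1.2
      nlinarith
    have hend : ‖f τ‖ ≤ R * Real.exp (-(3 * ω / 2 * Θ)) / 2 * Real.exp (3 * ω / 2 * Θ) := by
      calc ‖f τ‖ ≤ ‖f 0‖ * Real.exp (3 * ω / 2 * (τ - 0)) := hfin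
        _ ≤ (R * Real.exp (-(3 * ω / 2 * Θ)) / 2) * Real.exp (3 * ω / 2 * Θ) := by
            apply mul_le_mul h0 hexp (Real.exp_pos _).le
            positivity
    rw [div_mul_eq_mul_div, mul_assoc, ← Real.exp_add] at hend
    simp only [neg_add_cancel, Real.exp_zero, mul_one] at hend
    have := hτmem.2
    linarith
  -- Step 2 : logarithmic lift
  set q : ℝ → ℂ := fun t => (Complex.I * (ω:ℂ) * f t + E t) / f t with hqdef
  have hqc : Continuous q :=
    ((continuous_const.mul hcf).add hEc).div hcf hnz
  set g : ℝ → ℂ := fun t => ∫ s in (0:ℝ)..t, q s with hgdef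
  have hg : ∀ t, HasDerivAt g (q t) t := fun t =>
    (hqc.integral_hasStrictDerivAt 0 t).hasDerivAt
  have hg0 : g 0 = 0 := intervalIntegral.integral_same
  have key : ∀ t, f t = f 0 * Complex.exp (g t) := by
    have hder : ∀ t, HasDerivAt (fun t => f t * Complex.exp (-g t)) 0 t := by
      intro t
      have h1 := (hf' t).mul ((hg t).neg.cexp)
      refine h1.congr_deriv ?_
      have hft := hnz t
      rw [hqdef]; field_simp
      ring
    have hconst : ∀ t, f t * Complex.exp (-g t) = f 0 * Complex.exp (-g 0) := by
      intro t
      have hdiff : Differentiable ℝ (fun t => f t * Complex.exp (-g t)) :=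
        fun t => (hder t).differentiableAt
      exact is_const_of_deriv_eq_zero hdiff (fun t => (hder t).deriv) t 0
    intro t
    have h := hconst t
    rw [hg0, neg_zero, Complex.exp_zero, mul_one] at h
    have : f t * Complex.exp (-g t) * Complex.exp (g t) = f 0 * Complex.exp (g t) := by
      rw [h]
    rwa [mul_assoc, ← Complex.exp_add, neg_add_cancel, Complex.exp_zero, mul_one] at this
  -- Step 3 : the angle increases
  set ψ : ℝ := Complex.arg (f 0 / w) with hψdef
  set θ : ℝ → ℝ := fun t => ψ + (g t).im with hθdef
  have hgim : ∀ t, HasDerivAt (fun t => (g t).im) (q t).im t := fun t =>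
    Complex.imCLM.hasFDerivAt.comp_hasDerivAt t (hg t)
  have hθder : ∀ t, HasDerivAt θ (q t).im t := fun t => ((hgim t).const_add ψ)
  have hθcont : Continuous θ := by
    rw [continuous_iff_continuousAt]; exact fun t => (hθder t).continuousAt
  have hqim : ∀ t ∈ Icc (0:ℝ) Θ, ω / 2 ≤ (q t).im := by
    intro t ht
    have hft := hnz t
    have hq2 : q t = Complex.I * (ω:ℂ) + E t / f t := by
      rw [hqdef]; field_simp
    have him : (q t).im = ω + (E t / f t).im := by rw [hq2]; simp
    have habs : |(E t / f t).im| ≤ ω / 2 := by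
      have h1 : |(E t / f t).im| ≤ ‖E t / f t‖ := Complex.abs_im_le_norm _
      have h2 : ‖E t / f t‖ = ‖E t‖ / ‖f t‖ := by rw [norm_div]
      have h3 := hE t (hbound t ht)
      have hfpos : 0 < ‖f t‖ := norm_pos_iff.mpr hft
      rw [h2] at h1
      have h4 : ‖E t‖ / ‖f t‖ ≤ ω / 2 := by
        rw [div_le_iff₀ hfpos]
        calc ‖E t‖ ≤ ω / 2 * ‖f t‖ := h3
          _ = ω / 2 * ‖f t‖ := rfl
      linarith
    rw [him]
    have := abs_le.mp habs
    linarith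
  have hmono : θ 0 + (2 * Real.pi + 2) ≤ θ Θ := by
    have hm : MonotoneOn (fun t => θ t - ω / 2 * t) (Icc (0:ℝ) Θ) := by
      apply monotoneOn_of_deriv_nonneg (convex_Icc 0 Θ)
      · exact (hθcont.sub (continuous_const.mul continuous_id)).continuousOn
      · intro t ht
        exact ((hθder t).sub ((hasDerivAt_id t).const_mul (ω/2))).differentiableAt.differentiableWithinAt
      · intro t ht
        rw [interior_Icc] at ht
        have hd : HasDerivAt (fun t => θ t - ω / 2 * t) ((q t).im - ω / 2 * 1) t :=
          (hθder t).sub ((hasDerivAt_id t).const_mul (ω/2))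
        rw [hd.deriv]
        have := hqim t (Ioo_subset_Icc_self ht)
        linarith
    have h1 := hm (left_mem_Icc.mpr hΘ.le) (right_mem_Icc.mpr hΘ.le) hΘ.le
    have h2 : ω / 2 * Θ = 2 * Real.pi + 2 := by
      rw [hΘdef]; field_simp; ring
    have h1' : θ 0 - ω / 2 * 0 ≤ θ Θ - ω / 2 * Θ := h1
    rw [h2] at h1'
    simp only [hθdef] at h1' ⊢
    linarith [h1']
  -- Step 4 : intermediate value theorem, two crossings of the line ℝ•w
  set k : ℤ := ⌈ψ / Real.pi⌉ with hkdef
  have hk1 : θ 0 ≤ k * Real.pi := by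
    have := Int.le_ceil (ψ / Real.pi)
    have h1 : ψ / Real.pi * Real.pi ≤ (k:ℝ) * Real.pi := by
      apply mul_le_mul_of_nonneg_right this hπ.le
    rw [div_mul_cancel₀ _ hπ.ne'] at h1
    have hθ0 : θ 0 = ψ := by rw [hθdef]; simp [hg0]
    rw [hθ0]; exact h1
  have hk2 : (k:ℝ) * Real.pi < θ 0 + Real.pi := by
    have := Int.ceil_lt_add_one (ψ / Real.pi)
    have h1 : (k:ℝ) * Real.pi < (ψ / Real.pi + 1) * Real.pi := by
      apply mul_lt_mul_of_pos_right this hπ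
    rw [add_mul, div_mul_cancel₀ _ hπ.ne', one_mul] at h1
    have hθ0 : θ 0 = ψ := by rw [hθdef]; simp [hg0]
    rw [hθ0]; exact h1
  have hIVT1 : ∃ t₁ ∈ Icc (0:ℝ) Θ, θ t₁ = k * Real.pi := by
    have hsub := intermediate_value_Icc hΘ.le hθcont.continuousOn
    have hmem : (k:ℝ) * Real.pi ∈ Icc (θ 0) (θ Θ) := ⟨hk1, by nlinarith⟩
    obtain ⟨t₁, ht₁, hval⟩ := hsub hmem
    exact ⟨t₁, ht₁, hval⟩
  obtain ⟨t₁, ht₁mem, ht₁⟩ := hIVT1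
  have hIVT2 : ∃ t₂ ∈ Icc t₁ Θ, θ t₂ = (k:ℝ) * Real.pi + Real.pi := by
    have hsub := intermediate_value_Icc ht₁mem.2 (hθcont.continuousOn.mono (Icc_subset_Icc ht₁mem.1 le_rfl))
    have hmem : (k:ℝ) * Real.pi + Real.pi ∈ Icc (θ t₁) (θ Θ) := by
      constructor
      · rw [ht₁]; linarith
      · nlinarith
    obtain ⟨t₂, ht₂, hval⟩ := hsub hmem
    exact ⟨t₂, ht₂, hval⟩
  obtain ⟨t₂, ht₂mem, ht₂⟩ := hIVT2
  have htlt : t₁ < t₂ := by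
    rcases lt_or_eq_of_le ht₂mem.1 with h | h
    · exact h
    · exfalso; rw [← h, ht₁] at ht₂; nlinarith [ht₂]
  -- Step 5 : polar representation
  have hf0w : f 0 / w ≠ 0 := div_ne_zero (hnz 0) hw
  set ρ : ℝ := ‖f 0 / w‖ with hρdef
  have hρ : 0 < ρ := norm_pos_iff.mpr hf0w
  have hpolar : f 0 / w = (ρ:ℂ) * Complex.exp ((ψ:ℂ) * Complex.I) :=
    (Complex.norm_mul_exp_arg_mul_I (f 0 / w)).symm
  have hpolar_t : ∀ t, f t / w = ((ρ * Real.exp ((g t).re) : ℝ) : ℂ)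
      * Complex.exp ((θ t : ℝ) * Complex.I) := by
    intro t
    have h1 : f t / w = (f 0 / w) * Complex.exp (g t) := by
      rw [key t]; ring
    rw [h1, hpolar, mul_assoc, ← Complex.exp_add]
    have h2 : (ψ:ℂ) * Complex.I + g t = ((g t).re : ℂ) + ((θ t : ℝ) : ℂ) * Complex.I := by
      rw [hθdef]
      push_cast
      rw [← Complex.re_add_im (g t)]
      ring_nf
      simp [Complex.ext_iff]
    rw [h2, Complex.exp_add]
    push_cast [Complex.ofReal_exp]
    ring
  -- Step 6 : the two crossing points lie on the line ℝ•w and are distinct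
  have hline : ∀ t, Real.sin (θ t) = 0 → ∃ r : ℝ, f t = (r:ℂ) * w := by
    intro t hsin
    have h1 := hpolar_t t
    have h2 : (f t / w).im = 0 := by
      rw [h1]
      simp [Complex.mul_im, Complex.exp_ofReal_mul_I_im, Complex.exp_ofReal_mul_I_re, hsin]
    refine ⟨(f t / w).re, ?_⟩
    have h3 : ((f t / w).re : ℂ) = f t / w := by
      rw [← Complex.re_add_im (f t / w), h2]
      simp
    rw [h3]
    exact (div_mul_cancel₀ (f t) hw).symm
  have hsin1 : Real.sin (θ t₁) = 0 := by rw [ht₁]; exact Real.sin_int_mul_pi k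
  have hsin2 : Real.sin (θ t₂) = 0 := by
    rw [ht₂]
    have hc : (k:ℝ) * Real.pi + Real.pi = ((k+1 : ℤ) : ℝ) * Real.pi := by push_cast; ring
    rw [hc]
    exact Real.sin_int_mul_pi (k+1)
  obtain ⟨r₁, hr₁⟩ := hline t₁ hsin1
  obtain ⟨r₂, hr₂⟩ := hline t₂ hsin2
  have hre : ∀ t, (f t / w).re = ρ * Real.exp ((g t).re) * Real.cos (θ t) := by
    intro t
    rw [hpolar_t t]
    simp [Complex.mul_re, Complex.exp_ofReal_mul_I_re, Complex.exp_ofReal_mul_I_im,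
      Complex.exp_ofReal_re]
  have hrval : ∀ t (r : ℝ), f t = (r:ℂ) * w → r = ρ * Real.exp ((g t).re) * Real.cos (θ t) := by
    intro t r hr
    rw [← hre t, hr, mul_div_cancel_right₀ _ hw, Complex.ofReal_re]
  have hr₁' := hrval t₁ r₁ hr₁
  have hr₂' := hrval t₂ r₂ hr₂
  have hcossq : Real.cos (θ t₁) ^ 2 = 1 := by
    have hpyth := Real.sin_sq_add_cos_sq (θ t₁)
    rw [hsin1] at hpyth
    nlinarith [hpyth]
  have hcos2 : Real.cos (θ t₂) = - Real.cos (θ t₁) := by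
    have : θ t₂ = θ t₁ + Real.pi := by rw [ht₂, ht₁]
    rw [this]
    exact Real.cos_add_pi _
  have hrr : r₁ * r₂ < 0 := by
    have he1 := Real.exp_pos ((g t₁).re)
    have he2 := Real.exp_pos ((g t₂).re)
    have e1 : r₁ * r₂ = -((ρ * Real.exp ((g t₁).re)) * (ρ * Real.exp ((g t₂).re))
        * (Real.cos (θ t₁)) ^ 2) := by
      rw [hr₁', hr₂', hcos2]; ring
    rw [e1, hcossq, mul_one]
    have hab : 0 < (ρ * Real.exp ((g t₁).re)) * (ρ * Real.exp ((g t₂).re)) :=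
      mul_pos (mul_pos hρ he1) (mul_pos hρ he2)
    exact neg_lt_zero.mpr hab
  have hne : f t₁ ≠ f t₂ := by
    intro hfeq
    rw [hr₁, hr₂] at hfeq
    have hc : (r₁:ℂ) = r₂ := mul_right_cancel₀ hw hfeq
    have hc' : r₁ = r₂ := by exact_mod_cast hc
    rw [hc'] at hrr
    exact absurd hrr (not_lt.mpr (mul_self_nonneg r₂))
  exact ⟨t₁, t₂, htlt, ⟨r₁, hr₁⟩, ⟨r₂, hr₂⟩, hne⟩



/-- Sufficient sign conditions for (1,1) to be a center of the scaled
three-reaction system with exponent points (0,0), (p,q), (q,p). -/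
theorem three_reactions_reversible_center_corollary
    (p q c₁ d₁ c₂ d₂ c₃ d₃ K lam : ℝ) (hlam : lam ≠ 0)
    (κ₁ κ₂ κ₃ : ℝ)
    (hκ₁ : κ₁ = lam * (c₂ * d₃ - c₃ * d₂))
    (hκ₂ : κ₂ = lam * (c₃ * d₁ - c₁ * d₃))
    (hκ₃ : κ₃ = lam * (c₁ * d₂ - c₂ * d₁))
    (hi : p ^ 2 > q ^ 2)
    (hii₁ : Real.sign c₁ = -Real.sign d₁)
    (hii₂ : Real.sign c₁ = Real.sign d₂)
    (hii₃ : Real.sign c₁ = -Real.sign c₃)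
    (hii₄ : Real.sign c₁ ≠ 0)
    (hiii : Real.sign c₂ = -Real.sign d₃)
    (hiv : K = -(c₁ / d₁))
    (hcase : Real.sign c₂ ≠ 0 →
      |d₃ / c₃| < |d₁ / c₁| ∧ |d₁ / c₁| < |d₂ / c₂| ∧
      |d₁ / c₁| = Real.sqrt (|d₂ / c₂| * |d₃ / c₃|)) :
    ∃ U : Set (ℝ × ℝ), IsOpen U ∧ U ⊆ {z : ℝ × ℝ | 0 < z.1 ∧ 0 < z.2} ∧
      ((1, 1) : ℝ × ℝ) ∈ U ∧
      ∀ γ : ℝ → ℝ × ℝ,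
        (∀ t : ℝ, 0 < (γ t).1 ∧ 0 < (γ t).2) →
        (∀ t : ℝ, HasDerivAt γ
          (c₁ * κ₁ + c₂ * κ₂ * (γ t).1 ^ p * (γ t).2 ^ q
             + c₃ * κ₃ * (γ t).1 ^ q * (γ t).2 ^ p,
           K * (d₁ * κ₁ + d₂ * κ₂ * (γ t).1 ^ p * (γ t).2 ^ q
             + d₃ * κ₃ * (γ t).1 ^ q * (γ t).2 ^ p)) t) →
        γ 0 ∈ U → γ 0 ≠ ((1, 1) : ℝ × ℝ) →
        (∃ T : ℝ, 0 < T ∧ ∀ t : ℝ, γ (t + T) = γ t) ∧ (∃ s t : ℝ, γ s ≠ γ t) := by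
  obtain ⟨hsum, hK1, hK2, hK3, hAB⟩ := center_algebra p q c₁ d₁ c₂ d₂ c₃ d₃ K lam hlam
    κ₁ κ₂ κ₃ hκ₁ hκ₂ hκ₃ hii₁ hii₂ hii₃ hii₄ hiii hiv hcase
  obtain ⟨A, hA⟩ : ∃ A : ℝ, A = c₂ * κ₂ := ⟨_, rfl⟩
  obtain ⟨B, hB⟩ : ∃ B : ℝ, B = c₃ * κ₃ := ⟨_, rfl⟩
  obtain ⟨a, ha⟩ : ∃ a : ℝ, a = p * A + q * B := ⟨_, rfl⟩
  obtain ⟨b, hb⟩ : ∃ b : ℝ, b = q * A + p * B := ⟨_, rfl⟩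
  have hb2 : a ^ 2 < b ^ 2 := by
    have h1 : 0 < (p ^ 2 - q ^ 2) * ((c₃ * κ₃) ^ 2 - (c₂ * κ₂) ^ 2) :=
      mul_pos (by linarith) (by linarith)
    rw [ha, hb, hA, hB]
    nlinarith [h1]
  have hb0 : b ≠ 0 := by intro h; rw [h] at hb2; nlinarith [sq_nonneg a]
  obtain ⟨ω, hωdef⟩ : ∃ ω : ℝ, ω = Real.sqrt (b ^ 2 - a ^ 2) := ⟨_, rfl⟩
  have hω : 0 < ω := by rw [hωdef]; exact Real.sqrt_pos.mpr (by linarith)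
  have hω2 : ω ^ 2 = b ^ 2 - a ^ 2 := by rw [hωdef]; exact Real.sq_sqrt (by linarith)
  -- the reduced field
  obtain ⟨P, hPdef⟩ : ∃ P : ℝ × ℝ → ℝ,
      P = fun z => A * (z.1 ^ p * z.2 ^ q - 1) + B * (z.1 ^ q * z.2 ^ p - 1) := ⟨_, rfl⟩
  obtain ⟨Q, hQdef⟩ : ∃ Q : ℝ × ℝ → ℝ,
      Q = fun z => (-B) * (z.1 ^ p * z.2 ^ q - 1) + (-A) * (z.1 ^ q * z.2 ^ p - 1) := ⟨_, rfl⟩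
  obtain ⟨Φ, hΦdef⟩ : ∃ Φ : ℝ × ℝ → ℝ × ℝ, Φ = fun z => (P z, Q z) := ⟨_, rfl⟩
  have hfield1 : ∀ z : ℝ × ℝ,
      c₁ * κ₁ + c₂ * κ₂ * z.1 ^ p * z.2 ^ q + c₃ * κ₃ * z.1 ^ q * z.2 ^ p = P z := by
    intro z; rw [hPdef]; simp only; rw [hA, hB]; linear_combination hsum
  have hfield2 : ∀ z : ℝ × ℝ,
      K * (d₁ * κ₁ + d₂ * κ₂ * z.1 ^ p * z.2 ^ q + d₃ * κ₃ * z.1 ^ q * z.2 ^ p) = Q z := by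
    intro z; rw [hQdef]; simp only; rw [hA, hB]
    linear_combination hK1 + (z.1 ^ p * z.2 ^ q) * hK2 + (z.1 ^ q * z.2 ^ p) * hK3 - hsum
  have hΦdiff : ∀ z ∈ {z : ℝ × ℝ | 0 < z.1 ∧ 0 < z.2}, ContDiffAt ℝ 1 Φ z := by
    intro z hz
    rw [hΦdef, hPdef, hQdef]
    exact (P_contDiffAt p q A B hz.1.ne' hz.2.ne').prodMk
      (P_contDiffAt p q (-B) (-A) hz.1.ne' hz.2.ne')
  have hΦz₀ : Φ ((1:ℝ), (1:ℝ)) = 0 := by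
    rw [hΦdef, hPdef, hQdef]
    simp [Real.one_rpow, Prod.ext_iff]
  -- the complex linear coordinate
  obtain ⟨ζf, hζdef⟩ : ∃ ζf : ℝ × ℝ → ℂ,
      ζf = fun z => (b:ℂ) * ((z.1 - 1 : ℝ) : ℂ)
        + ((a:ℂ) - (ω:ℂ) * Complex.I) * ((z.2 - 1 : ℝ) : ℂ) := ⟨_, rfl⟩
  have hζre : ∀ z : ℝ × ℝ, (ζf z).re = b * (z.1 - 1) + a * (z.2 - 1) := by
    intro z; rw [hζdef]; simp
  have hζim : ∀ z : ℝ × ℝ, (ζf z).im = -(ω * (z.2 - 1)) := by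
    intro z; rw [hζdef]; simp
  have hζcont : Continuous ζf := by
    rw [hζdef]
    exact (continuous_const.mul (Complex.continuous_ofReal.comp
        (continuous_fst.sub continuous_const))).add
      (continuous_const.mul (Complex.continuous_ofReal.comp
        (continuous_snd.sub continuous_const)))
  have hζinj : ∀ z z' : ℝ × ℝ, ζf z = ζf z' → z = z' := by
    intro z z' h
    have him := congrArg Complex.im h
    rw [hζim, hζim] at him
    have h2 : z.2 = z'.2 := by
      have h3 : ω * (z.2 - 1) = ω * (z'.2 - 1) := by linarith
      have := mul_left_cancel₀ hω.ne' h3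
      linarith
    have hre := congrArg Complex.re h
    rw [hζre, hζre] at hre
    have h1 : z.1 = z'.1 := by
      have h3 : b * (z.1 - 1) = b * (z'.1 - 1) := by rw [h2] at hre; linarith
      have := mul_left_cancel₀ hb0 h3
      linarith
    exact Prod.ext h1 h2
  have hζ0 : ζf ((1:ℝ), (1:ℝ)) = 0 := by rw [hζdef]; simp
  -- inverse norm bound
  obtain ⟨Cm, hCm⟩ : ∃ Cm : ℝ, Cm = (1 + |a| / ω) / |b| + 1 / ω := ⟨_, rfl⟩
  have hbabs : 0 < |b| := abs_pos.mpr hb0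
  have hCmpos : 0 < Cm := by
    rw [hCm]
    have h1 : 0 < (1 + |a| / ω) / |b| := div_pos (by positivity) hbabs
    have h2 : 0 < 1 / ω := by positivity
    linarith
  have hζlow : ∀ z : ℝ × ℝ, ‖z - ((1:ℝ), (1:ℝ))‖ ≤ Cm * ‖ζf z‖ := by
    intro z
    have hnn : 0 ≤ ‖ζf z‖ := norm_nonneg _
    have hv : |z.2 - 1| ≤ ‖ζf z‖ / ω := by
      have h1 : |(ζf z).im| ≤ ‖ζf z‖ := Complex.abs_im_le_norm _
      rw [hζim, abs_neg, abs_mul, abs_of_pos hω] at h1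
      rw [le_div_iff₀ hω]
      linarith [mul_comm ω |z.2 - 1|]
    have hu : |z.1 - 1| ≤ (1 + |a| / ω) / |b| * ‖ζf z‖ := by
      have h1 : |(ζf z).re| ≤ ‖ζf z‖ := Complex.abs_re_le_norm _
      rw [hζre] at h1
      have h2 : |b * (z.1 - 1)| ≤ |b * (z.1 - 1) + a * (z.2 - 1)| + |a * (z.2 - 1)| := by
        have h6 := abs_sub (b * (z.1 - 1) + a * (z.2 - 1)) (a * (z.2 - 1))
        have h4 : b * (z.1 - 1) + a * (z.2 - 1) - a * (z.2 - 1) = b * (z.1 - 1) := by ring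
        rw [h4] at h6
        exact h6
      rw [abs_mul, abs_mul] at h2
      have h3 : |a| * |z.2 - 1| ≤ |a| * (‖ζf z‖ / ω) :=
        mul_le_mul_of_nonneg_left hv (abs_nonneg a)
      have h5 : |b| * |z.1 - 1| ≤ ‖ζf z‖ + |a| * (‖ζf z‖ / ω) := by
        calc |b| * |z.1 - 1| ≤ |b * (z.1 - 1) + a * (z.2 - 1)| + |a| * |z.2 - 1| := h2
          _ ≤ ‖ζf z‖ + |a| * (‖ζf z‖ / ω) := by linarith
      rw [div_mul_eq_mul_div, le_div_iff₀ hbabs]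
      calc |z.1 - 1| * |b| = |b| * |z.1 - 1| := by ring
        _ ≤ ‖ζf z‖ + |a| * (‖ζf z‖ / ω) := h5
        _ = (1 + |a| / ω) * ‖ζf z‖ := by field_simp
    have hmax : ‖z - ((1:ℝ), (1:ℝ))‖ = max |z.1 - 1| |z.2 - 1| := by
      rw [Prod.norm_def]
      simp [Real.norm_eq_abs]
    rw [hmax]
    apply max_le
    · calc |z.1 - 1| ≤ (1 + |a| / ω) / |b| * ‖ζf z‖ := hu
        _ ≤ Cm * ‖ζf z‖ := by
            apply mul_le_mul_of_nonneg_right _ hnn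
            rw [hCm]
            have : 0 < 1 / ω := by positivity
            linarith
    · calc |z.2 - 1| ≤ ‖ζf z‖ / ω := hv
        _ = 1 / ω * ‖ζf z‖ := by ring
        _ ≤ Cm * ‖ζf z‖ := by
            apply mul_le_mul_of_nonneg_right _ hnn
            rw [hCm]
            have h1 : 0 < (1 + |a| / ω) / |b| := div_pos (by positivity) hbabs
            linarith
  -- constants
  obtain ⟨Ca, hCa⟩ : ∃ Ca : ℝ, Ca = ‖(a:ℂ) - (ω:ℂ) * Complex.I‖ := ⟨_, rfl⟩
  have hCa0 : 0 ≤ Ca := hCa ▸ norm_nonneg _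
  obtain ⟨Cl, hCl⟩ : ∃ Cl : ℝ, Cl = |b| + Ca := ⟨_, rfl⟩
  have hClpos : 0 < Cl := by rw [hCl]; linarith
  obtain ⟨ε, hε⟩ : ∃ ε : ℝ, ε = ω / (2 * Cl * Cm) := ⟨_, rfl⟩
  have hεpos : 0 < ε := by rw [hε]; positivity
  obtain ⟨δ₁, hδ₁pos, hδ₁⟩ := P_littleO p q A B ε hεpos
  obtain ⟨δ₂, hδ₂pos, hδ₂⟩ := P_littleO p q (-B) (-A) ε hεpos
  obtain ⟨δ', hδ'⟩ : ∃ δ' : ℝ, δ' = min δ₁ δ₂ := ⟨_, rfl⟩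
  have hδ'pos : 0 < δ' := by rw [hδ']; exact lt_min hδ₁pos hδ₂pos
  obtain ⟨R, hR⟩ : ∃ R : ℝ, R = δ' / (2 * Cm) := ⟨_, rfl⟩
  have hRpos : 0 < R := by rw [hR]; positivity
  obtain ⟨r₀, hr₀⟩ : ∃ r₀ : ℝ,
      r₀ = R * Real.exp (-(3 * ω / 2 * ((4 * Real.pi + 4) / ω))) / 2 := ⟨_, rfl⟩
  have hr₀pos : 0 < r₀ := by rw [hr₀]; positivity
  -- the neighbourhood U
  refine ⟨{z : ℝ × ℝ | ‖ζf z‖ < r₀} ∩ {z : ℝ × ℝ | 0 < z.1 ∧ 0 < z.2}, ?_, ?_, ?_, ?_⟩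
  · exact ((isOpen_lt hζcont.norm continuous_const)).inter
      ((isOpen_lt continuous_const continuous_fst).inter
        (isOpen_lt continuous_const continuous_snd))
  · exact inter_subset_right
  · constructor
    · show ‖ζf ((1:ℝ), (1:ℝ))‖ < r₀
      rw [hζ0]; simpa using hr₀pos
    · exact ⟨one_pos, one_pos⟩
  intro γ hpos hODE hU0 hne0
  -- the solution in terms of the reduced field
  have hγP : ∀ t, HasDerivAt γ (P (γ t), Q (γ t)) t := by
    intro t
    have h := hODE t
    have e : (c₁ * κ₁ + c₂ * κ₂ * (γ t).1 ^ p * (γ t).2 ^ q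
          + c₃ * κ₃ * (γ t).1 ^ q * (γ t).2 ^ p,
        K * (d₁ * κ₁ + d₂ * κ₂ * (γ t).1 ^ p * (γ t).2 ^ q
          + d₃ * κ₃ * (γ t).1 ^ q * (γ t).2 ^ p)) = (P (γ t), Q (γ t)) :=
      Prod.ext (hfield1 (γ t)) (hfield2 (γ t))
    rwa [e] at h
  have hγ' : ∀ t, HasDerivAt γ (Φ (γ t)) t := by
    intro t; rw [hΦdef]; exact hγP t
  have hγcont : Continuous γ :=
    continuous_iff_continuousAt.mpr fun t => (hγ' t).continuousAt
  have hγ1 : ∀ t, HasDerivAt (fun t => (γ t).1) (P (γ t)) t := fun t =>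
    (hasFDerivAt_fst (𝕜 := ℝ) (E := ℝ) (F := ℝ)).comp_hasDerivAt t (hγP t)
  have hγ2 : ∀ t, HasDerivAt (fun t => (γ t).2) (Q (γ t)) t := fun t =>
    (hasFDerivAt_snd (𝕜 := ℝ) (E := ℝ) (F := ℝ)).comp_hasDerivAt t (hγP t)
  -- nonvanishing
  have hγnz : ∀ t, γ t ≠ ((1:ℝ), (1:ℝ)) := by
    intro τ hτ
    have hconst : ∀ t : ℝ, HasDerivAt (fun _ : ℝ => ((1:ℝ), (1:ℝ)))
        (Φ ((fun _ : ℝ => ((1:ℝ), (1:ℝ))) t)) t := by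
      intro t
      have h0 : HasDerivAt (fun _ : ℝ => ((1:ℝ), (1:ℝ))) 0 t := hasDerivAt_const t _
      simp only
      rw [hΦz₀]
      exact h0
    have := ODE_uniqueness_global hΦdiff hγ' hpos hconst
      (fun _ => ⟨one_pos, one_pos⟩) (t₀ := τ) hτ
    exact hne0 (this 0)
  -- the complex coordinate along the solution
  obtain ⟨f, hfdef⟩ : ∃ f : ℝ → ℂ, f = fun t => ζf (γ t) := ⟨_, rfl⟩
  obtain ⟨Ef, hEdef⟩ : ∃ Ef : ℝ → ℂ,
      Ef = fun t => (b:ℂ) * ((P (γ t) - (a * ((γ t).1 - 1) + b * ((γ t).2 - 1)) : ℝ) : ℂ)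
        + ((a:ℂ) - (ω:ℂ) * Complex.I)
          * ((Q (γ t) - ((-b) * ((γ t).1 - 1) + (-a) * ((γ t).2 - 1)) : ℝ) : ℂ) := ⟨_, rfl⟩
  have hω2C : ((ω:ℝ):ℂ) ^ 2 = ((b:ℝ):ℂ) ^ 2 - ((a:ℝ):ℂ) ^ 2 := by exact_mod_cast hω2
  have hf' : ∀ t, HasDerivAt f (Complex.I * (ω:ℂ) * f t + Ef t) t := by
    intro t
    have h1 : HasDerivAt (fun t => (((γ t).1 - 1 : ℝ) : ℂ)) ((P (γ t) : ℝ) : ℂ) t :=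
      HasDerivAt.ofReal_comp ((hγ1 t).sub_const 1)
    have h2 : HasDerivAt (fun t => (((γ t).2 - 1 : ℝ) : ℂ)) ((Q (γ t) : ℝ) : ℂ) t :=
      HasDerivAt.ofReal_comp ((hγ2 t).sub_const 1)
    have h3 := (h1.const_mul ((b:ℝ):ℂ)).add (h2.const_mul ((a:ℂ) - (ω:ℂ) * Complex.I))
    have h4 : HasDerivAt f
        ((b:ℂ) * ((P (γ t) : ℝ) : ℂ) + ((a:ℂ) - (ω:ℂ) * Complex.I) * ((Q (γ t) : ℝ) : ℂ)) t := by
      rw [hfdef, hζdef]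
      exact h3
    have e : (b:ℂ) * ((P (γ t) : ℝ) : ℂ) + ((a:ℂ) - (ω:ℂ) * Complex.I) * ((Q (γ t) : ℝ) : ℂ)
        = Complex.I * (ω:ℂ) * f t + Ef t := by
      rw [hfdef, hζdef, hEdef]
      simp only
      push_cast
      linear_combination ((((γ t).2 : ℂ) - 1) * ((ω:ℝ):ℂ) ^ 2) * Complex.I_sq
        - (((γ t).2 : ℂ) - 1) * hω2C
    rw [e] at h4
    exact h4
  -- continuity of the error term
  have hPc : Continuous (fun t => P (γ t)) := by
    rw [continuous_iff_continuousAt]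
    intro t
    have hc : ContinuousAt P (γ t) := by
      rw [hPdef]
      exact (P_contDiffAt p q A B (hpos t).1.ne' (hpos t).2.ne').continuousAt
    exact hc.comp hγcont.continuousAt
  have hQc : Continuous (fun t => Q (γ t)) := by
    rw [continuous_iff_continuousAt]
    intro t
    have hc : ContinuousAt Q (γ t) := by
      rw [hQdef]
      exact (P_contDiffAt p q (-B) (-A) (hpos t).1.ne' (hpos t).2.ne').continuousAt
    exact hc.comp hγcont.continuousAt
  have hEc : Continuous Ef := by
    rw [hEdef]
    apply Continuous.add
    · exact continuous_const.mul (Complex.continuous_ofReal.comp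
        (hPc.sub ((continuous_const.mul ((continuous_fst.comp hγcont).sub
          continuous_const)).add (continuous_const.mul ((continuous_snd.comp hγcont).sub
          continuous_const)))))
    · exact continuous_const.mul (Complex.continuous_ofReal.comp
        (hQc.sub ((continuous_const.mul ((continuous_fst.comp hγcont).sub
          continuous_const)).add (continuous_const.mul ((continuous_snd.comp hγcont).sub
          continuous_const)))))
  -- error bound
  have hδ₁' : ∀ z : ℝ × ℝ, ‖z - ((1:ℝ),(1:ℝ))‖ < δ₁ →
      |P z - (a * (z.1 - 1) + b * (z.2 - 1))| ≤ ε * ‖z - ((1:ℝ),(1:ℝ))‖ := by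
    intro z hz
    have h := hδ₁ z hz
    have hPz : P z = A * (z.1 ^ p * z.2 ^ q - 1) + B * (z.1 ^ q * z.2 ^ p - 1) := by
      rw [hPdef]
    rw [← ha, ← hb, ← hPz] at h
    simpa [Real.norm_eq_abs] using h
  have hδ₂' : ∀ z : ℝ × ℝ, ‖z - ((1:ℝ),(1:ℝ))‖ < δ₂ →
      |Q z - ((-b) * (z.1 - 1) + (-a) * (z.2 - 1))| ≤ ε * ‖z - ((1:ℝ),(1:ℝ))‖ := by
    intro z hz
    have h := hδ₂ z hz
    have hQz : Q z = -B * (z.1 ^ p * z.2 ^ q - 1) + -A * (z.1 ^ q * z.2 ^ p - 1) := by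
      rw [hQdef]
    have e1 : p * -B + q * -A = -b := by rw [hb]; ring
    have e2 : q * -B + p * -A = -a := by rw [ha]; ring
    rw [← hQz, e1, e2] at h
    simpa [Real.norm_eq_abs] using h
  have hEbound : ∀ t, ‖f t‖ ≤ R → ‖Ef t‖ ≤ ω / 2 * ‖f t‖ := by
    intro t hft
    have hdist : ‖γ t - ((1:ℝ),(1:ℝ))‖ ≤ Cm * ‖f t‖ := by
      rw [hfdef]; exact hζlow (γ t)
    have hCmR : Cm * R = δ' / 2 := by rw [hR]; field_simp
    have hlt : ‖γ t - ((1:ℝ),(1:ℝ))‖ < δ' := by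
      calc ‖γ t - ((1:ℝ),(1:ℝ))‖ ≤ Cm * ‖f t‖ := hdist
        _ ≤ Cm * R := mul_le_mul_of_nonneg_left hft hCmpos.le
        _ = δ' / 2 := hCmR
        _ < δ' := by linarith
    have hlt1 : ‖γ t - ((1:ℝ),(1:ℝ))‖ < δ₁ := lt_of_lt_of_le hlt (by rw [hδ']; exact min_le_left _ _)
    have hlt2 : ‖γ t - ((1:ℝ),(1:ℝ))‖ < δ₂ := lt_of_lt_of_le hlt (by rw [hδ']; exact min_le_right _ _)
    have he1 := hδ₁' (γ t) hlt1
    have he2 := hδ₂' (γ t) hlt2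
    have hnorm : ‖Ef t‖ ≤ |b| * |P (γ t) - (a * ((γ t).1 - 1) + b * ((γ t).2 - 1))|
        + Ca * |Q (γ t) - ((-b) * ((γ t).1 - 1) + (-a) * ((γ t).2 - 1))| := by
      rw [hEdef]
      simp only
      calc ‖(b:ℂ) * ((P (γ t) - (a * ((γ t).1 - 1) + b * ((γ t).2 - 1)) : ℝ) : ℂ)
            + ((a:ℂ) - (ω:ℂ) * Complex.I)
              * ((Q (γ t) - ((-b) * ((γ t).1 - 1) + (-a) * ((γ t).2 - 1)) : ℝ) : ℂ)‖
          ≤ ‖(b:ℂ) * ((P (γ t) - (a * ((γ t).1 - 1) + b * ((γ t).2 - 1)) : ℝ) : ℂ)‖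
            + ‖((a:ℂ) - (ω:ℂ) * Complex.I)
              * ((Q (γ t) - ((-b) * ((γ t).1 - 1) + (-a) * ((γ t).2 - 1)) : ℝ) : ℂ)‖ :=
            norm_add_le _ _
        _ = |b| * |P (γ t) - (a * ((γ t).1 - 1) + b * ((γ t).2 - 1))|
            + Ca * |Q (γ t) - ((-b) * ((γ t).1 - 1) + (-a) * ((γ t).2 - 1))| := by
            simp only [norm_mul, Complex.norm_real, Real.norm_eq_abs]
            rw [hCa]
    have hchain : ‖Ef t‖ ≤ Cl * (ε * ‖γ t - ((1:ℝ),(1:ℝ))‖) := by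
      rw [hCl]
      have h1 : |b| * |P (γ t) - (a * ((γ t).1 - 1) + b * ((γ t).2 - 1))|
          ≤ |b| * (ε * ‖γ t - ((1:ℝ),(1:ℝ))‖) := mul_le_mul_of_nonneg_left he1 (abs_nonneg b)
      have h2 : Ca * |Q (γ t) - ((-b) * ((γ t).1 - 1) + (-a) * ((γ t).2 - 1))|
          ≤ Ca * (ε * ‖γ t - ((1:ℝ),(1:ℝ))‖) := mul_le_mul_of_nonneg_left he2 hCa0
      calc ‖Ef t‖ ≤ _ := hnorm
        _ ≤ (|b| + Ca) * (ε * ‖γ t - ((1:ℝ),(1:ℝ))‖) := by rw [add_mul]; linarith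
    have hfinal : Cl * (ε * (Cm * ‖f t‖)) = ω / 2 * ‖f t‖ := by
      rw [hε]
      field_simp
    calc ‖Ef t‖ ≤ Cl * (ε * ‖γ t - ((1:ℝ),(1:ℝ))‖) := hchain
      _ ≤ Cl * (ε * (Cm * ‖f t‖)) := by
          apply mul_le_mul_of_nonneg_left _ hClpos.le
          exact mul_le_mul_of_nonneg_left hdist hεpos.le
      _ = ω / 2 * ‖f t‖ := hfinal
  have hnzf : ∀ t, f t ≠ 0 := by
    intro t h
    apply hγnz t
    apply hζinj
    rw [hζ0]
    rw [hfdef] at h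
    exact h
  have h0f : ‖f 0‖ ≤ R * Real.exp (-(3 * ω / 2 * ((4 * Real.pi + 4) / ω))) / 2 := by
    have := hU0.1
    rw [← hr₀]
    rw [hfdef]
    exact le_of_lt this
  -- the line of the diagonal
  obtain ⟨w, hwdef⟩ : ∃ w : ℂ, w = ((a + b : ℝ) : ℂ) - (ω:ℂ) * Complex.I := ⟨_, rfl⟩
  have hwne : w ≠ 0 := by
    rw [hwdef]
    intro h
    have := congrArg Complex.im h
    simp at this
    exact hω.ne' this
  obtain ⟨t₁, t₂, hlt12, ⟨r₁, hr₁⟩, ⟨r₂, hr₂⟩, hfne⟩ :=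
    spiral_lemma hω hRpos f Ef w hwne hf' hEc hEbound hnzf h0f
  have hdiag : ∀ (t : ℝ) (r : ℝ), f t = (r:ℂ) * w → γ t = ((1 + r : ℝ), (1 + r : ℝ)) := by
    intro t r hr
    apply hζinj
    have hz : ζf ((1 + r : ℝ), (1 + r : ℝ)) = (r:ℂ) * w := by
      rw [hζdef, hwdef]
      push_cast
      ring
    rw [hz, ← hr, hfdef]
  -- reflection symmetry
  have hswapP : ∀ z : ℝ × ℝ, P (z.2, z.1) = -Q z := by
    intro z; rw [hPdef, hQdef]; simp only; ring
  have hswapQ : ∀ z : ℝ × ℝ, Q (z.2, z.1) = -P z := by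
    intro z; rw [hPdef, hQdef]; simp only; ring
  have hsym : ∀ (t₀ c : ℝ), γ t₀ = (c, c) →
      ∀ t, γ t = ((γ (2 * t₀ - t)).2, (γ (2 * t₀ - t)).1) := by
    intro t₀ c hc
    have hδ'der : ∀ t, HasDerivAt (fun t => ((γ (2 * t₀ - t)).2, (γ (2 * t₀ - t)).1))
        (Φ ((γ (2 * t₀ - t)).2, (γ (2 * t₀ - t)).1)) t := by
      intro t
      have hi : HasDerivAt (fun t : ℝ => 2 * t₀ - t) (-1) t := by
        simpa using (hasDerivAt_id t).const_sub (2 * t₀)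
      have h1 : HasDerivAt (fun t => γ (2 * t₀ - t))
          ((-1 : ℝ) • (P (γ (2 * t₀ - t)), Q (γ (2 * t₀ - t)))) t :=
        (hγP (2 * t₀ - t)).scomp t hi
      have h2 : HasDerivAt (fun t => (γ (2 * t₀ - t)).2) (-(Q (γ (2 * t₀ - t)))) t := by
        have := hasFDerivAt_snd.comp_hasDerivAt t h1
        simpa [Function.comp_def] using this
      have h3 : HasDerivAt (fun t => (γ (2 * t₀ - t)).1) (-(P (γ (2 * t₀ - t)))) t := by
        have := hasFDerivAt_fst.comp_hasDerivAt t h1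
        simpa [Function.comp_def] using this
      have h4 := h2.prodMk h3
      have e : Φ ((γ (2 * t₀ - t)).2, (γ (2 * t₀ - t)).1)
          = (-(Q (γ (2 * t₀ - t))), -(P (γ (2 * t₀ - t)))) := by
        rw [hΦdef]
        exact Prod.ext (hswapP _) (hswapQ _)
      rw [e]
      exact h4
    have hδ's : ∀ t, ((γ (2 * t₀ - t)).2, (γ (2 * t₀ - t)).1)
        ∈ {z : ℝ × ℝ | 0 < z.1 ∧ 0 < z.2} := fun t => ⟨(hpos _).2, (hpos _).1⟩
    have heq : γ t₀ = ((γ (2 * t₀ - t₀)).2, (γ (2 * t₀ - t₀)).1) := by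
      have e : 2 * t₀ - t₀ = t₀ := by ring
      rw [e, hc]
    exact ODE_uniqueness_global hΦdiff hγ' hpos hδ'der hδ's heq
  have hs1 := hsym t₁ (1 + r₁) (hdiag t₁ r₁ hr₁)
  have hs2 := hsym t₂ (1 + r₂) (hdiag t₂ r₂ hr₂)
  constructor
  · refine ⟨2 * (t₂ - t₁), by linarith, ?_⟩
    intro t
    have h1 := hs2 (t + 2 * (t₂ - t₁))
    rw [show 2 * t₂ - (t + 2 * (t₂ - t₁)) = 2 * t₁ - t by ring] at h1
    have h2 := hs1 t
    rw [h1, ← h2]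
  · refine ⟨t₁, t₂, ?_⟩
    intro h
    apply hfne
    rw [hfdef]
    simp only
    rw [h]
end

section
/- Let c₁, c₂, c₃, d₁, d₂, d₃, K, λ be real numbers with λ ≠ 0 and K ≠ 0, and set κ̄₁ = λ(c₂d₃−c₃d₂), κ̄₂ = λ(c₃d₁−c₁d₃), κ̄₃ = λ(c₁d₂−c₂d₁). Assume κ̄₁κ̄₂κ̄₃ ≠ 0 and c₁κ̄₁ = Kd₂κ̄₂ = 4Kd₃κ̄₃ ≠ 0. Define, for x > −1, F(x) = −c₁κ̄₁x − Kd₂κ̄₂[(x+1)^{−1/2} − 1] − Kd₃κ̄₃[(x+1)^{−2} − 1] and G(x) = (1/λ)Kκ̄₁κ̄₂κ̄₃[2(x+1)^{1/2} + (x+1)^{−1} − 3], and set α = −(λ²/4)·c₁κ̄₁/(Kκ̄₁κ̄₂κ̄₃)² and β = −(3λ/2)·c₁κ̄₁/(Kκ̄₁κ̄₂κ̄₃). Then F(x) = α·G(x)² + β·G(x) for all x > −1. -/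
/-- The composition identity F = Φ∘G with Φ(z) = αz² + βz for the
Liénard form of the scaled three-reaction system with exponent points
(1,0), (0,−1/2), (0,−2). -/
theorem three_reactions_lienard_composition
    (c₁ d₁ c₂ d₂ c₃ d₃ K lam : ℝ) (hlam : lam ≠ 0) (hK : K ≠ 0)
    (κ₁ κ₂ κ₃ : ℝ)
    (hκ₁ : κ₁ = lam * (c₂ * d₃ - c₃ * d₂))
    (hκ₂ : κ₂ = lam * (c₃ * d₁ - c₁ * d₃))
    (hκ₃ : κ₃ = lam * (c₁ * d₂ - c₂ * d₁))
    (hκne : κ₁ * κ₂ * κ₃ ≠ 0)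
    (hcond₁ : c₁ * κ₁ = K * (d₂ * κ₂))
    (hcond₂ : c₁ * κ₁ = 4 * K * (d₃ * κ₃))
    (hcond₃ : c₁ * κ₁ ≠ 0)
    (F G : ℝ → ℝ) (α β : ℝ)
    (hF : ∀ x : ℝ, -1 < x →
      F x = -(c₁ * κ₁) * x - K * (d₂ * κ₂) * ((x + 1) ^ (-(1 : ℝ) / 2) - 1)
            - K * (d₃ * κ₃) * ((x + 1) ^ (-(2 : ℝ)) - 1))
    (hG : ∀ x : ℝ, -1 < x →
      G x = (1 / lam) * K * (κ₁ * κ₂ * κ₃)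
            * (2 * (x + 1) ^ ((1 : ℝ) / 2) + (x + 1) ^ (-(1 : ℝ)) - 3))
    (hα : α = -(lam ^ 2 / 4) * (c₁ * κ₁) / (K * (κ₁ * κ₂ * κ₃)) ^ 2)
    (hβ : β = -(3 * lam / 2) * (c₁ * κ₁) / (K * (κ₁ * κ₂ * κ₃))) :
    ∀ x : ℝ, -1 < x → F x = α * (G x) ^ 2 + β * (G x) := by
  intro x hx
  have hy : (0:ℝ) < x + 1 := by linarith
  set t : ℝ := (x + 1) ^ ((1:ℝ)/2) with ht_def
  have ht : 0 < t := Real.rpow_pos_of_pos hy _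
  have ht2 : t ^ 2 = x + 1 := by
    rw [ht_def, ← Real.rpow_natCast ((x+1) ^ ((1:ℝ)/2)) 2, ← Real.rpow_mul hy.le]
    norm_num
  have h1 : (x + 1) ^ (-(1:ℝ)/2) = t⁻¹ := by
    rw [neg_div, Real.rpow_neg hy.le]
  have h3 : (x + 1) ^ (-(1:ℝ)) = (t ^ 2)⁻¹ := by
    rw [Real.rpow_neg hy.le, Real.rpow_one, ht2]
  have h2 : (x + 1) ^ (-(2:ℝ)) = ((t ^ 2) * (t ^ 2))⁻¹ := by
    rw [Real.rpow_neg hy.le, show ((2:ℝ)) = ((2:ℕ):ℝ) by norm_num,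
      Real.rpow_natCast, ht2]
    ring_nf
  have hd₃ : K * (d₃ * κ₃) = c₁ * κ₁ / 4 := by linarith
  have hx' : x = t ^ 2 - 1 := by linarith [ht2]
  have hM : K * (κ₁ * κ₂ * κ₃) ≠ 0 := mul_ne_zero hK hκne
  rw [hF x hx, hG x hx, h1, h2, h3, ← ht_def, ← hcond₁, hd₃, hα, hβ, hx']
  have htne : t ≠ 0 := ne_of_gt ht
  have hk1 : κ₁ ≠ 0 := by intro h; apply hκne; rw [h]; ring
  have hk2 : κ₂ ≠ 0 := by intro h; apply hκne; rw [h]; ring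
  have hk3 : κ₃ ≠ 0 := by intro h; apply hκne; rw [h]; ring
  field_simp
  ring
end
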